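/- arXiv:1808.00551 — 6 statements merged into one kernel-verified Lean document; each statement's English description precedes it below -/
import Mathlib

section
/- For any connected simplicial complex K with n ≥ 2 vertices, if a set S of points in convex position in ℝ^d admits a partition into n parts whose nerve (of convex hulls) is isomorphic to K, then |S| ≥ 2n. -/
/-- For any connected simplicial complex `K` with `n ≥ 2` vertices, if a set `S`
of points in convex position in `ℝ^d` admits a partition into `n` parts whose nerve (of convex
hulls) is isomorphic to `K`, then `|S| ≥ 2n`. -/
theorem lower_bound_connected_complex
    {d n : ℕ} (hn : 2 ≤ n)
    -- `K` is an abstract simplicial complex on vertex set `Fin n`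
    (K : Finset (Finset (Fin n)))
    (hKdown : ∀ I ∈ K, ∀ J : Finset (Fin n), J ⊆ I → J.Nonempty → J ∈ K)
    (hKverts : ∀ i : Fin n, ({i} : Finset (Fin n)) ∈ K)
    -- `K` is connected: its 1-skeleton is a connected graph
    (hKconn : (SimpleGraph.fromRel
        (fun i j => ({i, j} : Finset (Fin n)) ∈ K)).Connected)
    (S : Finset (Fin d → ℝ))
    -- `S` is in convex position
    (hconv : ∀ x ∈ S, x ∉ convexHull ℝ ((S : Set (Fin d → ℝ)) \ {x}))
    -- a partition of `S` into `n` parts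
    (P : Fin n → Finset (Fin d → ℝ))
    (hne : ∀ i, (P i).Nonempty)
    (hdisj : ∀ i j, i ≠ j → Disjoint (P i) (P j))
    (hcover : S = Finset.univ.biUnion P)
    -- the nerve of the partition is isomorphic to `K` via a relabelling `σ`
    (σ : Fin n ≃ Fin n)
    (hiso : ∀ I : Finset (Fin n), I.Nonempty →
      (I ∈ K ↔ (⋂ i ∈ I, convexHull ℝ (P (σ i) : Set (Fin d → ℝ))).Nonempty)) :
    2 * n ≤ S.card := by
  classical
  have hcard2 : ∀ m : Fin n, 2 ≤ (P m).card := by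
    intro m
    by_contra hlt
    push_neg at hlt
    have h1 : (P m).card = 1 :=
      le_antisymm (by omega) (Finset.card_pos.mpr (hne m))
    obtain ⟨x, hx⟩ := Finset.card_eq_one.mp h1
    set i := σ.symm m with hi
    obtain ⟨j, hij, hK⟩ : ∃ j, i ≠ j ∧ ({i, j} : Finset (Fin n)) ∈ K := by
      have hn1 : 1 < n := by omega
      haveI : Nontrivial (Fin n) := Fin.nontrivial_iff_two_le.mpr hn
      obtain ⟨j0, hj0⟩ := exists_ne i
      obtain ⟨w⟩ := hKconn.preconnected i j0
      cases w with
      | nil => exact absurd rfl hj0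
      | cons h p =>
        obtain ⟨hne', hor⟩ := h
        rcases hor with h' | h'
        · exact ⟨_, hne', h'⟩
        · exact ⟨_, hne', by rwa [Finset.pair_comm]⟩
    have hneK : ({i, j} : Finset (Fin n)).Nonempty := ⟨i, by simp⟩
    obtain ⟨y, hy⟩ := (hiso _ hneK).mp hK
    simp only [Set.mem_iInter] at hy
    have hyi : y ∈ convexHull ℝ (P (σ i) : Set (Fin d → ℝ)) := hy i (by simp)
    have hyj : y ∈ convexHull ℝ (P (σ j) : Set (Fin d → ℝ)) := hy j (by simp)
    have hσi : σ i = m := σ.apply_symm_apply m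
    rw [hσi, hx] at hyi
    have hyx : y = x := by simpa using hyi
    subst hyx
    have hxS : y ∈ S := by
      rw [hcover]
      exact Finset.mem_biUnion.mpr ⟨m, Finset.mem_univ _, by simp [hx]⟩
    have hσjm : σ j ≠ m := by
      intro h
      apply hij
      have : σ i = σ j := by rw [hσi, h]
      exact (σ.injective this)
    have hsub : (P (σ j) : Set (Fin d → ℝ)) ⊆ (S : Set (Fin d → ℝ)) \ {y} := by
      intro z hz
      refine ⟨?_, ?_⟩
      · rw [hcover]
        exact_mod_cast Finset.mem_biUnion.mpr ⟨σ j, Finset.mem_univ _, hz⟩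
      · intro hzx
        simp only [Set.mem_singleton_iff] at hzx
        subst hzx
        have hzm : z ∈ P m := by simp [hx]
        exact Finset.disjoint_left.mp (hdisj (σ j) m hσjm) hz hzm
    exact hconv y hxS (convexHull_mono hsub hyj)
  have hbU : (Finset.univ.biUnion P).card = ∑ m : Fin n, (P m).card :=
    Finset.card_biUnion (fun a _ b _ hab => hdisj a b hab)
  rw [hcover, hbU]
  calc 2 * n = ∑ _m : Fin n, 2 := by simp [mul_comm]
    _ ≤ ∑ m : Fin n, (P m).card := Finset.sum_le_sum (fun m _ => hcard2 m)
end

section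
/- Let S ⊂ ℝ² be a set of 2n points (n ≥ 1) in general position and suppose there exist p₁, p₂ ∈ S such that the line through p₁ and p₂ divides S \ {p₁,p₂} into two sets A, B each of size n−1, with the property that for every a ∈ A and b ∈ B the segment [a,b] meets the segment [p₁,p₂]. Then the elements of A and B can be paired as (a_1,b_1),…,(a_{n−1},b_{n−1}) such that for all i ≠ j the segments [a_i,b_i] and [a_j,b_j] are disjoint. -/
/-- Signed area/orientation determinant in the plane. -/
def sideDet (p q x : Fin 2 → ℝ) : ℝ :=
  (q 0 - p 0) * (x 1 - p 1) - (q 1 - p 1) * (x 0 - p 0)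

noncomputable section PairingAux

/-- The identity-on-points linear equivalence to the Euclidean plane. -/
private def eqv2 : (Fin 2 → ℝ) ≃ₗ[ℝ] EuclideanSpace ℝ (Fin 2) :=
  (WithLp.linearEquiv 2 ℝ (Fin 2 → ℝ)).symm

/-- Euclidean distance on `Fin 2 → ℝ`. -/
private def d2 (u v : Fin 2 → ℝ) : ℝ := dist (eqv2 u) (eqv2 v)

private lemma wbtw_map {a x b : Fin 2 → ℝ} (h : Wbtw ℝ a x b) :
    Wbtw ℝ (eqv2 a) (eqv2 x) (eqv2 b) :=
  h.map eqv2.toLinearMap.toAffineMap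

private lemma wbtw_unmap {a x b : Fin 2 → ℝ}
    (h : Wbtw ℝ (eqv2 a) (eqv2 x) (eqv2 b)) : Wbtw ℝ a x b := by
  have h2 := h.map eqv2.symm.toLinearMap.toAffineMap
  simpa using h2

/-- Key geometric fact: if segments `[a,b]` and `[a',b']` meet at `x` and the relevant
triples are not collinear, then swapping the pairing strictly shortens total length. -/
private lemma key_swap {a b a' b' x : Fin 2 → ℝ}
    (hx : Wbtw ℝ a x b) (hx' : Wbtw ℝ a' x b')
    (h1 : ¬ Collinear ℝ ({a', a, b'} : Set (Fin 2 → ℝ)))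
    (h2 : ¬ Collinear ℝ ({a, b, b'} : Set (Fin 2 → ℝ))) :
    d2 a b' + d2 a' b < d2 a b + d2 a' b' := by
  have eq1 : d2 a x + d2 x b = d2 a b := (wbtw_map hx).dist_add_dist
  have eq2 : d2 a' x + d2 x b' = d2 a' b' := (wbtw_map hx').dist_add_dist
  have tri1 : d2 a b' ≤ d2 a x + d2 x b' := dist_triangle _ _ _
  have tri2 : d2 a' b ≤ d2 a' x + d2 x b := dist_triangle _ _ _
  by_contra hcon
  push_neg at hcon
  have heq1 : d2 a x + d2 x b' = d2 a b' := by linarith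
  have hw : Wbtw ℝ a x b' := wbtw_unmap (dist_add_dist_eq_iff.mp heq1)
  rcases eq_or_ne x a with h | hxa
  · subst h
    exact h1 hx'.collinear
  · have hb : b ∈ line[ℝ, a, x] := hx.right_mem_affineSpan_of_left_ne hxa.symm
    have hb' : b' ∈ line[ℝ, a, x] := hw.right_mem_affineSpan_of_left_ne hxa.symm
    have ha : a ∈ line[ℝ, a, x] := left_mem_affineSpan_pair ℝ a x
    exact h2 (collinear_triple_of_mem_affineSpan_pair ha hb hb')

end PairingAux

/-- Let `S ⊂ ℝ²` be `2n` points in general position and `p₁, p₂ ∈ S` such that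
the line through `p₁, p₂` divides `S \ {p₁,p₂}` into sets `A, B` of size `n-1` each, with
every segment `[a,b]` (`a ∈ A`, `b ∈ B`) meeting `[p₁,p₂]`. Then `A` and `B` can be paired
off so that the corresponding segments are pairwise disjoint. -/
theorem pairing_lemma {n : ℕ} (hn : 1 ≤ n)
    (S : Finset (Fin 2 → ℝ)) (hcard : S.card = 2 * n)
    -- general position: no three points collinear
    (hgen : ∀ x ∈ S, ∀ y ∈ S, ∀ z ∈ S, x ≠ y → y ≠ z → x ≠ z →
      ¬ Collinear ℝ ({x, y, z} : Set (Fin 2 → ℝ)))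
    (p₁ p₂ : Fin 2 → ℝ) (hp₁ : p₁ ∈ S) (hp₂ : p₂ ∈ S) (hpne : p₁ ≠ p₂)
    (A B : Finset (Fin 2 → ℝ))
    (hAB : A ∪ B = S \ {p₁, p₂}) (hABdisj : Disjoint A B)
    (hAcard : A.card = n - 1) (hBcard : B.card = n - 1)
    -- `A` and `B` lie in the two opposite open half-planes of the line through `p₁, p₂`
    (hAside : ∀ a ∈ A, 0 < sideDet p₁ p₂ a)
    (hBside : ∀ b ∈ B, sideDet p₁ p₂ b < 0)
    -- every segment between `A` and `B` meets the segment `[p₁, p₂]`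
    (hmeet : ∀ a ∈ A, ∀ b ∈ B,
      (convexHull ℝ ({a, b} : Set (Fin 2 → ℝ)) ∩
        convexHull ℝ ({p₁, p₂} : Set (Fin 2 → ℝ))).Nonempty) :
    ∃ f : (Fin 2 → ℝ) → (Fin 2 → ℝ),
      Set.BijOn f (A : Set (Fin 2 → ℝ)) (B : Set (Fin 2 → ℝ)) ∧
      ∀ a ∈ A, ∀ a' ∈ A, a ≠ a' →
        convexHull ℝ ({a, f a} : Set (Fin 2 → ℝ)) ∩
          convexHull ℝ ({a', f a'} : Set (Fin 2 → ℝ)) = ∅ := by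
  classical
  -- membership of A, B in S
  have hAS : ∀ a ∈ A, a ∈ S := by
    intro a ha
    have h : a ∈ A ∪ B := Finset.mem_union_left _ ha
    rw [hAB] at h
    exact (Finset.mem_sdiff.mp h).1
  have hBS : ∀ b ∈ B, b ∈ S := by
    intro b hb
    have h : b ∈ A ∪ B := Finset.mem_union_right _ hb
    rw [hAB] at h
    exact (Finset.mem_sdiff.mp h).1
  have hABne : ∀ a ∈ A, ∀ b ∈ B, a ≠ b := by
    intro a ha b hb h
    subst h
    exact Finset.disjoint_left.mp hABdisj ha hb
  -- an optimal matching
  have hcardAB : Fintype.card {x // x ∈ A} = Fintype.card {x // x ∈ B} := by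
    simp [Fintype.card_coe, hAcard, hBcard]
  haveI : Nonempty ({x // x ∈ A} ≃ {x // x ∈ B}) := ⟨Fintype.equivOfCardEq hcardAB⟩
  set cost : ({x // x ∈ A} ≃ {x // x ∈ B}) → ℝ :=
    fun e => ∑ u : {x // x ∈ A}, d2 (u : Fin 2 → ℝ) (e u) with hcost
  obtain ⟨e₀, -, hmin⟩ := Finset.exists_min_image Finset.univ cost Finset.univ_nonempty
  refine ⟨fun x => if h : x ∈ A then (e₀ ⟨x, h⟩ : Fin 2 → ℝ) else x, ⟨?_, ?_, ?_⟩, ?_⟩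
  · -- MapsTo
    intro x hx
    have hx' : x ∈ A := hx
    simp only [dif_pos hx']
    exact (e₀ ⟨x, hx'⟩).2
  · -- InjOn
    intro x hx y hy hxy
    have hx' : x ∈ A := hx
    have hy' : y ∈ A := hy
    simp only [dif_pos hx', dif_pos hy'] at hxy
    have := e₀.injective (Subtype.coe_injective hxy)
    exact congrArg Subtype.val this
  · -- SurjOn
    intro b hb
    have hb' : b ∈ B := hb
    refine ⟨(e₀.symm ⟨b, hb'⟩ : Fin 2 → ℝ), (e₀.symm ⟨b, hb'⟩).2, ?_⟩
    simp only [dif_pos (e₀.symm ⟨b, hb'⟩).2, Subtype.coe_eta, Equiv.apply_symm_apply]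
  · -- disjointness of matched segments
    intro a ha a' ha' hnea
    by_contra hcon
    obtain ⟨x, hx1, hx2⟩ := Set.nonempty_iff_ne_empty.mpr hcon
    simp only [dif_pos ha, dif_pos ha'] at hx1 hx2
    set u : {x // x ∈ A} := ⟨a, ha⟩ with hu
    set v : {x // x ∈ A} := ⟨a', ha'⟩ with hv
    set b : Fin 2 → ℝ := (e₀ u : Fin 2 → ℝ) with hb
    set b' : Fin 2 → ℝ := (e₀ v : Fin 2 → ℝ) with hb'
    have hbB : b ∈ B := (e₀ u).2
    have hb'B : b' ∈ B := (e₀ v).2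
    have huv : u ≠ v := fun h => hnea (congrArg Subtype.val h)
    have hbb' : b ≠ b' := by
      intro h
      exact huv (e₀.injective (Subtype.coe_injective h))
    -- Wbtw facts
    rw [convexHull_pair] at hx1 hx2
    have hw1 : Wbtw ℝ a x b := mem_segment_iff_wbtw.mp hx1
    have hw2 : Wbtw ℝ a' x b' := mem_segment_iff_wbtw.mp hx2
    -- non-collinearity facts
    have h1 : ¬ Collinear ℝ ({a', a, b'} : Set (Fin 2 → ℝ)) :=
      hgen a' (hAS a' ha') a (hAS a ha) b' (hBS b' hb'B) hnea.symm
        (hABne a ha b' hb'B) (hABne a' ha' b' hb'B)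
    have h2 : ¬ Collinear ℝ ({a, b, b'} : Set (Fin 2 → ℝ)) :=
      hgen a (hAS a ha) b (hBS b hbB) b' (hBS b' hb'B) (hABne a ha b hbB)
        hbb' (hABne a ha b' hb'B)
    have hlt := key_swap hw1 hw2 h1 h2
    -- swapping gives a cheaper matching, contradiction
    set e₁ : {x // x ∈ A} ≃ {x // x ∈ B} := (Equiv.swap u v).trans e₀ with he₁
    have hsplit : ∀ g : {x // x ∈ A} ≃ {x // x ∈ B},
        cost g = d2 (u : Fin 2 → ℝ) (g u) +
          (d2 (v : Fin 2 → ℝ) (g v) +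
            ∑ w ∈ (Finset.univ.erase u).erase v, d2 (w : Fin 2 → ℝ) (g w)) := by
      intro g
      show (∑ w : {x // x ∈ A}, d2 (w : Fin 2 → ℝ) (g w)) = _
      rw [← Finset.add_sum_erase _ _ (Finset.mem_univ u),
        ← Finset.add_sum_erase _ _
          (Finset.mem_erase.mpr ⟨huv.symm, Finset.mem_univ v⟩)]
    have hrest : ∑ w ∈ (Finset.univ.erase u).erase v, d2 (w : Fin 2 → ℝ) (e₁ w)
        = ∑ w ∈ (Finset.univ.erase u).erase v, d2 (w : Fin 2 → ℝ) (e₀ w) := by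
      refine Finset.sum_congr rfl fun w hw => ?_
      have hwv : w ≠ v := (Finset.mem_erase.mp hw).1
      have hwu : w ≠ u := (Finset.mem_erase.mp (Finset.mem_erase.mp hw).2).1
      rw [he₁]
      simp [Equiv.swap_apply_of_ne_of_ne hwu hwv]
    have hlt' : cost e₁ < cost e₀ := by
      rw [hsplit e₁, hsplit e₀, hrest, he₁]
      simp only [Equiv.trans_apply, Equiv.swap_apply_left, Equiv.swap_apply_right]
      have h1' : d2 (u : Fin 2 → ℝ) (e₀ v) = d2 a b' := rfl
      have h2' : d2 (v : Fin 2 → ℝ) (e₀ u) = d2 a' b := rfl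
      rw [h1', h2']
      have h3' : d2 (u : Fin 2 → ℝ) (e₀ u) = d2 a b := rfl
      have h4' : d2 (v : Fin 2 → ℝ) (e₀ v) = d2 a' b' := rfl
      rw [h3', h4']
      linarith
    exact absurd (hmin e₁ (Finset.mem_univ e₁)) (not_le.mpr hlt')
end

section
/- Every set of (d+1)(n−1)+1 points in general position in ℝ^d admits a partition into n parts whose nerve is the star graph St_n on n vertices: one central part whose convex hull meets the convex hull of each of the other n−1 parts, while the convex hulls of any two non-central parts are disjoint. -/
open Polynomial in
lemma star_aux_functional {d : ℕ} (S : Finset (Fin d → ℝ)) :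
    ∃ f : (Fin d → ℝ) →ₗ[ℝ] ℝ, Set.InjOn f ↑S := by
  classical
  -- polynomial attached to a vector
  set Pv : (Fin d → ℝ) → ℝ[X] := fun v => ∑ i : Fin d, monomial (i : ℕ) (v i) with hPv
  have hPne : ∀ v : Fin d → ℝ, v ≠ 0 → Pv v ≠ 0 := by
    intro v hv
    obtain ⟨i, hi⟩ := Function.ne_iff.mp hv
    intro h0
    have hc : (Pv v).coeff (i : ℕ) = v i := by
      rw [hPv]
      rw [Polynomial.finset_sum_coeff]
      rw [Finset.sum_eq_single i]
      · simp
      · intro b _ hb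
        rw [Polynomial.coeff_monomial, if_neg (by simpa [Fin.val_inj] using hb)]
      · simp
    rw [h0] at hc
    simp at hc
    exact hi hc.symm
  have heval : ∀ (v : Fin d → ℝ) (t : ℝ), (Pv v).eval t = ∑ i : Fin d, v i * t ^ (i : ℕ) := by
    intro v t
    rw [hPv, Polynomial.eval_finset_sum]
    simp [Polynomial.eval_monomial]
  set V : Finset (Fin d → ℝ) := (S ×ˢ S).image (fun q => q.1 - q.2) |>.filter (· ≠ 0) with hV
  have hbad : (⋃ v ∈ (V : Set (Fin d → ℝ)), {t : ℝ | (Pv v).IsRoot t}).Finite := by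
    apply Set.Finite.biUnion V.finite_toSet
    intro v hv
    simp only [hV, Finset.coe_filter, Set.mem_setOf_eq, Finset.mem_filter] at hv
    exact Polynomial.finite_setOf_isRoot (hPne v hv.2)
  obtain ⟨t, ht⟩ := (Set.Finite.infinite_compl hbad).nonempty
  refine ⟨∑ i : Fin d, (t ^ (i : ℕ)) • LinearMap.proj i, ?_⟩
  intro x hx y hy hxy
  by_contra hne
  have hveq : ∑ i : Fin d, (x - y) i * t ^ (i : ℕ) = 0 := by
    have : ∑ i : Fin d, t ^ (i : ℕ) * x i = ∑ i : Fin d, t ^ (i : ℕ) * y i := by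
      simpa [LinearMap.sum_apply, LinearMap.smul_apply, LinearMap.proj_apply, smul_eq_mul]
        using hxy
    have := sub_eq_zero.mpr this
    rw [← Finset.sum_sub_distrib] at this
    rw [← this]
    congr 1; ext i; simp [Pi.sub_apply]; ring
  have hvV : x - y ∈ V := by
    rw [hV]
    refine Finset.mem_filter.mpr ⟨Finset.mem_image.mpr ⟨(x, y), Finset.mk_mem_product hx hy, rfl⟩, ?_⟩
    simpa [sub_eq_zero] using hne
  apply ht
  exact Set.mem_biUnion hvV (by rw [Set.mem_setOf_eq, Polynomial.IsRoot, heval]; exact hveq)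


lemma star_aux_sep {d : ℕ} (f : (Fin d → ℝ) →ₗ[ℝ] ℝ) (A B : Set (Fin d → ℝ)) (M : ℝ)
    (hA : ∀ x ∈ A, f x ≤ M) (hB : ∀ y ∈ B, M < f y) :
    convexHull ℝ A ∩ convexHull ℝ B = ∅ := by
  have h1 : convexHull ℝ A ⊆ {x | f x ≤ M} :=
    convexHull_min hA (convex_halfSpace_le f.isLinear M)
  have h2 : convexHull ℝ B ⊆ {x | M < f x} :=
    convexHull_min hB (convex_halfSpace_gt f.isLinear M)
  ext z
  simp only [Set.mem_inter_iff, Set.mem_empty_iff_false, iff_false, not_and]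
  intro hz1 hz2
  have l1 : f z ≤ M := h1 hz1
  have l2 : M < f z := h2 hz2
  linarith

lemma star_aux_radon {d : ℕ} (A : Finset (Fin d → ℝ)) (hA : d + 2 ≤ A.card)
    (p : Fin d → ℝ) (hp : p ∈ A) :
    ∃ C D : Finset (Fin d → ℝ), C ∪ D = A ∧ Disjoint C D ∧ p ∈ C ∧ D.Nonempty ∧
      (convexHull ℝ (C : Set (Fin d → ℝ)) ∩ convexHull ℝ (D : Set (Fin d → ℝ))).Nonempty := by
  classical
  have hdep : ¬ AffineIndependent ℝ (fun x : A => (x : Fin d → ℝ)) := by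
    intro h
    have h1 := h.card_le_finrank_succ
    have h2 : Module.finrank ℝ (vectorSpan ℝ (Set.range (fun x : A => (x : Fin d → ℝ)))) ≤
        Module.finrank ℝ (Fin d → ℝ) := Submodule.finrank_le _
    rw [Module.finrank_fin_fun] at h2
    rw [Fintype.card_coe] at h1
    omega
  obtain ⟨I, q, hq⟩ := Convex.radon_partition hdep
  set I' : Set A := if (⟨p, hp⟩ : A) ∈ I then I else Iᶜ with hI'
  have hpI' : (⟨p, hp⟩ : A) ∈ I' := by
    rw [hI']; split <;> simp_all
  have hq' : q ∈ convexHull ℝ (Subtype.val '' I') ∩ convexHull ℝ (Subtype.val '' I'ᶜ) := by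
    rw [hI']; split
    · exact hq
    · rw [compl_compl]; exact ⟨hq.2, hq.1⟩
  refine ⟨A.filter (· ∈ Subtype.val '' I'), A.filter (· ∈ Subtype.val '' I'ᶜ), ?_, ?_, ?_, ?_, ?_⟩
  case _ =>
    ext x
    simp only [Finset.mem_union, Finset.mem_filter]
    constructor
    · rintro (⟨h, _⟩ | ⟨h, _⟩) <;> exact h
    · intro hx
      by_cases hxI : (⟨x, hx⟩ : A) ∈ I'
      · exact Or.inl ⟨hx, ⟨⟨x, hx⟩, hxI, rfl⟩⟩
      · exact Or.inr ⟨hx, ⟨⟨x, hx⟩, hxI, rfl⟩⟩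
  case _ =>
    rw [Finset.disjoint_left]
    intro x hx1 hx2
    obtain ⟨hx, s, hs, rfl⟩ := Finset.mem_filter.mp hx1
    obtain ⟨-, ⟨s', hs', hss⟩⟩ := Finset.mem_filter.mp hx2
    have : s' = s := Subtype.ext hss
    exact hs' (this ▸ hs)
  case _ => exact Finset.mem_filter.mpr ⟨hp, ⟨⟨p, hp⟩, hpI', rfl⟩⟩
  case _ =>
    obtain ⟨x, hxm⟩ := convexHull_nonempty_iff.mp ⟨q, hq'.2⟩
    obtain ⟨s, hs, rfl⟩ := hxm
    exact ⟨s, Finset.mem_filter.mpr ⟨s.2, ⟨s, hs, rfl⟩⟩⟩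
  case _ =>
    refine ⟨q, ?_, ?_⟩
    · refine convexHull_mono ?_ hq'.1
      rintro x ⟨s, hs, rfl⟩
      exact Finset.mem_coe.mpr (Finset.mem_filter.mpr ⟨s.2, ⟨s, hs, rfl⟩⟩)
    · refine convexHull_mono ?_ hq'.2
      rintro x ⟨s, hs, rfl⟩
      exact Finset.mem_coe.mpr (Finset.mem_filter.mpr ⟨s.2, ⟨s, hs, rfl⟩⟩)

/-- Every set of `(d+1)(n-1)+1` points in general position in `ℝ^d` admits a
partition into `n` parts whose nerve is the star `St_n`: the convex hull of the central part
(indexed by `0`) meets that of every other part, convex hulls of distinct non-central parts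
are disjoint, and no three parts have a common point. -/
theorem star_partition_induced
    {d n : ℕ} (hd : 1 ≤ d) (hn : 0 < n)
    (S : Finset (Fin d → ℝ)) (hcard : S.card = (d + 1) * (n - 1) + 1)
    -- general position: any `d+1` points of `S` are affinely independent
    (hgen : ∀ T : Finset (Fin d → ℝ), T ⊆ S → T.card = d + 1 →
      AffineIndependent ℝ (fun x : T => (x : Fin d → ℝ))) :
    ∃ P : Fin n → Finset (Fin d → ℝ),
      (∀ i, (P i).Nonempty) ∧
      (∀ i j, i ≠ j → Disjoint (P i) (P j)) ∧
      S = Finset.univ.biUnion P ∧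
      (∀ i, i ≠ (⟨0, hn⟩ : Fin n) →
        (convexHull ℝ (P ⟨0, hn⟩ : Set (Fin d → ℝ)) ∩
          convexHull ℝ (P i : Set (Fin d → ℝ))).Nonempty) ∧
      (∀ i j, i ≠ (⟨0, hn⟩ : Fin n) → j ≠ (⟨0, hn⟩ : Fin n) → i ≠ j →
        convexHull ℝ (P i : Set (Fin d → ℝ)) ∩
          convexHull ℝ (P j : Set (Fin d → ℝ)) = ∅) ∧
      (∀ i j k, i ≠ j → j ≠ k → i ≠ k →
        convexHull ℝ (P i : Set (Fin d → ℝ)) ∩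
          convexHull ℝ (P j : Set (Fin d → ℝ)) ∩
          convexHull ℝ (P k : Set (Fin d → ℝ)) = ∅) := by
  classical
  set c0 : Fin n := ⟨0, hn⟩ with hc0
  obtain ⟨f, hf⟩ := star_aux_functional S
  -- the sorted enumeration of `S` along `f`
  have hT : (S.image f).card = (d + 1) * (n - 1) + 1 := by
    rw [Finset.card_image_of_injOn hf, hcard]
  set σ := (S.image f).orderIsoOfFin hT with hσ
  have hex : ∀ k : Fin ((d + 1) * (n - 1) + 1), ∃ x, x ∈ S ∧ f x = ((σ k : ℝ)) := by
    intro k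
    exact Finset.mem_image.mp (σ k).2
  choose e he_mem he_f using hex
  have he_lt : ∀ k l : Fin ((d + 1) * (n - 1) + 1), k < l → f (e k) < f (e l) := by
    intro k l hkl
    rw [he_f, he_f]
    exact_mod_cast σ.strictMono hkl
  have he_le : ∀ k l : Fin ((d + 1) * (n - 1) + 1), k ≤ l → f (e k) ≤ f (e l) := by
    intro k l hkl
    rcases eq_or_lt_of_le hkl with rfl | h
    · exact le_refl _
    · exact (he_lt k l h).le
  have he_inj : Function.Injective e := by
    intro k l h
    by_contra hne
    rcases lt_or_gt_of_ne hne with hlt | hlt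
    · exact absurd h (ne_of_lt (by simpa [h] using he_lt k l hlt) ∘ congrArg f)
    · exact absurd h.symm (ne_of_lt (by simpa [h] using he_lt l k hlt) ∘ congrArg f)
  -- upper bound for block indices
  have hub : ∀ i : Fin n, i.val * (d + 1) ≤ (d + 1) * (n - 1) := by
    intro i
    rw [Nat.mul_comm]
    exact Nat.mul_le_mul_left _ (by omega : i.val ≤ n - 1)
  -- the distinguished point
  set pidx : Fin ((d + 1) * (n - 1) + 1) := ⟨(d + 1) * (n - 1), Nat.lt_succ_self _⟩ with hpidx
  set p := e pidx with hp
  have hpS : p ∈ S := he_mem pidx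
  -- index blocks and point blocks
  set K : Fin n → Finset (Fin ((d + 1) * (n - 1) + 1)) := fun i =>
    (Finset.Ico ((i.val - 1) * (d + 1)) (i.val * (d + 1))).attachFin
      (fun m hm => lt_of_le_of_lt (le_trans (le_of_lt (Finset.mem_Ico.mp hm).2) (hub i))
        (Nat.lt_succ_self _)) with hK
  have hKmem : ∀ (i : Fin n) (k), k ∈ K i ↔
      (i.val - 1) * (d + 1) ≤ k.val ∧ k.val < i.val * (d + 1) := by
    intro i k
    rw [hK]
    simp [Finset.mem_attachFin, Finset.mem_Ico]
  set B : Fin n → Finset (Fin d → ℝ) := fun i => (K i).image e with hB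
  have hBS : ∀ i, B i ⊆ S := by
    intro i x hx
    obtain ⟨k, _, rfl⟩ := Finset.mem_image.mp hx
    exact he_mem k
  have hpB : ∀ i, p ∉ B i := by
    intro i hmem
    obtain ⟨k, hk, hke⟩ := Finset.mem_image.mp hmem
    have : k = pidx := he_inj hke
    have hlt := ((hKmem i k).mp hk).2
    rw [this] at hlt
    have h2 := hub i
    simp only [hpidx] at hlt
    exact absurd hlt (not_lt.mpr h2)
  -- disjointness of blocks
  have hBdisj : ∀ i j : Fin n, i ≠ j → Disjoint (B i) (B j) := by
    have key : ∀ i j : Fin n, i.val < j.val → Disjoint (B i) (B j) := by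
      intro i j hij
      rw [Finset.disjoint_left]
      intro x hxi hxj
      obtain ⟨k, hk, rfl⟩ := Finset.mem_image.mp hxi
      obtain ⟨l, hl, hle⟩ := Finset.mem_image.mp hxj
      have hkl : l = k := he_inj hle
      subst hkl
      have b1 := ((hKmem i l).mp hk).2
      have b2 := ((hKmem j l).mp hl).1
      have hmul : i.val * (d + 1) ≤ (j.val - 1) * (d + 1) :=
        Nat.mul_le_mul_right _ (by omega)
      exact absurd (lt_of_lt_of_le (lt_of_lt_of_le b1 hmul) b2) (lt_irrefl _)
    intro i j hij
    rcases lt_or_gt_of_ne (fun h => hij (Fin.ext h)) with h | h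
    · exact key i j h
    · exact (key j i h).symm
  -- block emptiness at the center
  have hB0 : ∀ i : Fin n, i.val = 0 → B i = ∅ := by
    intro i hi
    have hKi : K i = ∅ := by
      ext k
      simp [hKmem, hi]
    simp only [hB, hKi, Finset.image_empty]
  -- separation of blocks
  have hsep : ∀ i j : Fin n, i.val < j.val →
      convexHull ℝ (B i : Set (Fin d → ℝ)) ∩ convexHull ℝ (B j : Set (Fin d → ℝ)) = ∅ := by
    intro i j hij
    by_cases hi0 : i.val = 0
    · rw [hB0 i hi0]
      simp
    · have h1le : 1 ≤ i.val := by omega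
      have hmlt : i.val * (d + 1) - 1 < (d + 1) * (n - 1) + 1 :=
        lt_of_le_of_lt (le_trans (Nat.sub_le _ _) (hub i)) (Nat.lt_succ_self _)
      set midx : Fin ((d + 1) * (n - 1) + 1) := ⟨i.val * (d + 1) - 1, hmlt⟩ with hmidx
      apply star_aux_sep f _ _ (f (e midx))
      · intro x hx
        obtain ⟨k, hk, rfl⟩ := Finset.mem_image.mp hx
        apply he_le
        have b1 := ((hKmem i k).mp hk).2
        rw [Fin.le_def]
        simp only [hmidx]
        omega
      · intro y hy
        obtain ⟨k, hk, rfl⟩ := Finset.mem_image.mp hy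
        apply he_lt
        have b2 := ((hKmem j k).mp hk).1
        have hmul : i.val * (d + 1) ≤ (j.val - 1) * (d + 1) :=
          Nat.mul_le_mul_right _ (by omega)
        have hpos : 1 ≤ i.val * (d + 1) := Nat.one_le_iff_ne_zero.mpr (by positivity)
        rw [Fin.lt_def]
        simp only [hmidx]
        have : i.val * (d + 1) ≤ k.val := le_trans hmul b2
        omega
  -- cardinality of blocks
  have hBcard : ∀ i : Fin n, i ≠ c0 → (B i).card = d + 1 := by
    intro i hi
    have h1le : 1 ≤ i.val := by
      rcases Nat.eq_zero_or_pos i.val with h | h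
      · exact absurd (Fin.ext h) hi
      · exact h
    simp only [hB, hK]
    rw [Finset.card_image_of_injective _ he_inj]
    rw [Finset.card_attachFin, Nat.card_Ico]
    obtain ⟨m, hm⟩ : ∃ m, i.val = m + 1 := ⟨i.val - 1, by omega⟩
    rw [hm]
    have : (m + 1) * (d + 1) = m * (d + 1) + (d + 1) := by ring
    rw [this]
    simp
  -- Radon partitions of `insert p (B i)` for noncentral `i`
  have hRadon : ∀ i : Fin n, ∃ C D : Finset (Fin d → ℝ), i ≠ c0 →
      (C ∪ D = insert p (B i) ∧ Disjoint C D ∧ p ∈ C ∧ D.Nonempty ∧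
        (convexHull ℝ (C : Set (Fin d → ℝ)) ∩
          convexHull ℝ (D : Set (Fin d → ℝ))).Nonempty) := by
    intro i
    by_cases hi : i = c0
    · exact ⟨∅, ∅, fun h => absurd hi h⟩
    · have hcA : d + 2 ≤ (insert p (B i)).card := by
        rw [Finset.card_insert_of_notMem (hpB i), hBcard i hi]
      obtain ⟨C, D, h1, h2, h3, h4, h5⟩ :=
        star_aux_radon (insert p (B i)) hcA p (Finset.mem_insert_self _ _)
      exact ⟨C, D, fun _ => ⟨h1, h2, h3, h4, h5⟩⟩
  choose C D hCD using hRadon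
  have hpD : ∀ i : Fin n, i ≠ c0 → p ∉ D i := by
    intro i hi
    exact Finset.disjoint_left.mp (hCD i hi).2.1 (hCD i hi).2.2.1
  have hDB : ∀ i : Fin n, i ≠ c0 → D i ⊆ B i := by
    intro i hi x hx
    have hx' : x ∈ insert p (B i) := by
      rw [← (hCD i hi).1]
      exact Finset.mem_union_right _ hx
    rcases Finset.mem_insert.mp hx' with rfl | h
    · exact absurd hx (hpD i hi)
    · exact h
  have hCsub : ∀ i : Fin n, i ≠ c0 → C i ⊆ insert p (B i) := by
    intro i hi x hx
    rw [← (hCD i hi).1]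
    exact Finset.mem_union_left _ hx
  -- the partition
  set D0 : Fin n → Finset (Fin d → ℝ) := fun j => if j = c0 then ∅ else D j with hD0
  set P : Fin n → Finset (Fin d → ℝ) :=
    fun j => if j = c0 then S \ Finset.univ.biUnion D0 else D j with hPdef
  have hP0 : P c0 = S \ Finset.univ.biUnion D0 := by simp [hPdef]
  have hPi : ∀ j : Fin n, j ≠ c0 → P j = D j := by
    intro j hj
    simp [hPdef, hj]
  have hD0S : ∀ j : Fin n, D0 j ⊆ S := by
    intro j
    by_cases hj : j = c0
    · simp only [hD0, if_pos hj]
      exact Finset.empty_subset _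
    · simp only [hD0, if_neg hj]
      exact Finset.Subset.trans (hDB j hj) (hBS j)
  have hpD0 : ∀ j : Fin n, p ∉ D0 j := by
    intro j
    by_cases hj : j = c0
    · simp only [hD0, if_pos hj]
      exact Finset.notMem_empty _
    · simp only [hD0, if_neg hj]
      exact hpD j hj
  have hpP0 : p ∈ P c0 := by
    rw [hP0, Finset.mem_sdiff]
    refine ⟨hpS, ?_⟩
    rw [Finset.mem_biUnion]
    rintro ⟨j, -, hj⟩
    exact hpD0 j hj
  -- the central part contains each `C i`
  have hCP0 : ∀ i : Fin n, i ≠ c0 → C i ⊆ P c0 := by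
    intro i hi x hx
    have hxS : x ∈ S := by
      rcases Finset.mem_insert.mp (hCsub i hi hx) with rfl | h
      · exact hpS
      · exact hBS i h
    rw [hP0, Finset.mem_sdiff]
    refine ⟨hxS, ?_⟩
    rw [Finset.mem_biUnion]
    rintro ⟨j, -, hj⟩
    simp only [hD0] at hj
    by_cases hj0 : j = c0
    · rw [if_pos hj0] at hj
      exact Finset.notMem_empty _ hj
    · rw [if_neg hj0] at hj
      by_cases hji : j = i
      · subst hji
        exact Finset.disjoint_left.mp (hCD j hj0).2.1 hx hj
      · rcases Finset.mem_insert.mp (hCsub i hi hx) with rfl | h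
        · exact hpD j hj0 hj
        · exact Finset.disjoint_left.mp (hBdisj i j (fun h' => hji h'.symm)) h (hDB j hj0 hj)
  refine ⟨P, ?_, ?_, ?_, ?_, ?_, ?_⟩
  · -- nonempty
    intro i
    by_cases hi : i = c0
    · subst hi; exact ⟨p, hpP0⟩
    · rw [hPi i hi]; exact (hCD i hi).2.2.2.1
  · -- pairwise disjoint
    have key : ∀ j : Fin n, j ≠ c0 → Disjoint (P c0) (P j) := by
      intro j hj
      rw [hP0, hPi j hj, Finset.disjoint_left]
      intro x hx hxD
      have := (Finset.mem_sdiff.mp hx).2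
      apply this
      rw [Finset.mem_biUnion]
      exact ⟨j, Finset.mem_univ _, by rw [hD0]; simp [hj, hxD]⟩
    intro i j hij
    by_cases hi : i = c0
    · subst hi; exact key j (Ne.symm hij)
    · by_cases hj : j = c0
      · subst hj; exact (key i hi).symm
      · rw [hPi i hi, hPi j hj]
        exact Finset.disjoint_of_subset_left (hDB i hi)
          (Finset.disjoint_of_subset_right (hDB j hj) (hBdisj i j hij))
  · -- union
    ext x
    constructor
    · intro hx
      rw [Finset.mem_biUnion]
      by_cases hxD : ∃ j : Fin n, j ≠ c0 ∧ x ∈ D j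
      · obtain ⟨j, hj, hjx⟩ := hxD
        exact ⟨j, Finset.mem_univ _, by rw [hPi j hj]; exact hjx⟩
      · refine ⟨c0, Finset.mem_univ _, ?_⟩
        rw [hP0, Finset.mem_sdiff]
        refine ⟨hx, ?_⟩
        rw [Finset.mem_biUnion]
        rintro ⟨j, -, hj⟩
        simp only [hD0] at hj
        by_cases hj0 : j = c0
        · rw [if_pos hj0] at hj; exact Finset.notMem_empty _ hj
        · rw [if_neg hj0] at hj; exact hxD ⟨j, hj0, hj⟩
    · intro hx
      obtain ⟨j, -, hj⟩ := Finset.mem_biUnion.mp hx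
      by_cases hj0 : j = c0
      · subst hj0
        rw [hP0] at hj
        exact (Finset.mem_sdiff.mp hj).1
      · rw [hPi j hj0] at hj
        exact (hDB j hj0).trans (hBS j) hj
  · -- central intersections
    intro i hi
    obtain ⟨q, hq1, hq2⟩ := (hCD i hi).2.2.2.2
    refine ⟨q, ?_, ?_⟩
    · exact convexHull_mono (by exact_mod_cast hCP0 i hi) hq1
    · rw [hPi i hi]; exact hq2
  · -- noncentral disjointness of hulls
    have key : ∀ i j : Fin n, i ≠ c0 → j ≠ c0 → i.val < j.val →
        convexHull ℝ (P i : Set (Fin d → ℝ)) ∩ convexHull ℝ (P j : Set (Fin d → ℝ)) = ∅ := by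
      intro i j hi hj hij
      rw [hPi i hi, hPi j hj]
      rw [Set.eq_empty_iff_forall_notMem]
      rintro z ⟨hz1, hz2⟩
      have h1 : z ∈ convexHull ℝ (B i : Set (Fin d → ℝ)) :=
        convexHull_mono (by exact_mod_cast hDB i hi) hz1
      have h2 : z ∈ convexHull ℝ (B j : Set (Fin d → ℝ)) :=
        convexHull_mono (by exact_mod_cast hDB j hj) hz2
      have hs := hsep i j hij
      rw [Set.eq_empty_iff_forall_notMem] at hs
      exact hs z ⟨h1, h2⟩
    intro i j hi hj hij
    rcases lt_or_gt_of_ne (fun h => hij (Fin.ext h)) with h | h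
    · exact key i j hi hj h
    · rw [Set.inter_comm]; exact key j i hj hi h
  · -- no triple intersections
    intro i j k hij hjk hik
    have pairs : ∀ a b : Fin n, a ≠ c0 → b ≠ c0 → a ≠ b →
        convexHull ℝ (P a : Set (Fin d → ℝ)) ∩ convexHull ℝ (P b : Set (Fin d → ℝ)) = ∅ := by
      intro a b ha hb hab
      have key : ∀ a b : Fin n, a ≠ c0 → b ≠ c0 → a.val < b.val →
          convexHull ℝ (P a : Set (Fin d → ℝ)) ∩ convexHull ℝ (P b : Set (Fin d → ℝ)) = ∅ := by
        intro a b ha hb hab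
        rw [hPi a ha, hPi b hb]
        rw [Set.eq_empty_iff_forall_notMem]
        rintro z ⟨hz1, hz2⟩
        have h1 : z ∈ convexHull ℝ (B a : Set (Fin d → ℝ)) :=
          convexHull_mono (by exact_mod_cast hDB a ha) hz1
        have h2 : z ∈ convexHull ℝ (B b : Set (Fin d → ℝ)) :=
          convexHull_mono (by exact_mod_cast hDB b hb) hz2
        have hs := hsep a b hab
        rw [Set.eq_empty_iff_forall_notMem] at hs
        exact hs z ⟨h1, h2⟩
      rcases lt_or_gt_of_ne (fun h => hab (Fin.ext h)) with h | h
      · exact key a b ha hb h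
      · rw [Set.inter_comm]; exact key b a hb ha h
    rw [Set.eq_empty_iff_forall_notMem]
    rintro z ⟨⟨hz1, hz2⟩, hz3⟩
    by_cases hi : i = c0
    · have hj' : j ≠ c0 := fun h => hij (hi.trans h.symm)
      have hk' : k ≠ c0 := fun h => hik (hi.trans h.symm)
      exact (Set.mem_empty_iff_false z).mp
        (by rw [← pairs j k hj' hk' hjk]; exact ⟨hz2, hz3⟩)
    · by_cases hj : j = c0
      · have hi' : i ≠ c0 := hi
        have hk' : k ≠ c0 := fun h => hjk (hj.trans h.symm)
        exact (Set.mem_empty_iff_false z).mp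
          (by rw [← pairs i k hi' hk' hik]; exact ⟨hz1, hz3⟩)
      · exact (Set.mem_empty_iff_false z).mp
          (by rw [← pairs i j hi hj hij]; exact ⟨hz1, hz2⟩)
end

section
/- Every caterpillar tree T on n nodes is partition induced on every set of at least (d+1)(n−1)+1 points in general position in ℝ^d; that is, the Tverberg number Tv(T,d) is at most (d+1)(n−1)+1. -/
open Finset

variable {d : ℕ}

lemma exists_inj_functional (S : Finset (Fin d → ℝ)) :
    ∃ ℓ : (Fin d → ℝ) →ₗ[ℝ] ℝ, Set.InjOn ℓ S := by
  classical
  have key : ∀ D : Finset (Fin d → ℝ), (0 : Fin d → ℝ) ∉ D →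
      ∃ ℓ : (Fin d → ℝ) →ₗ[ℝ] ℝ, ∀ w ∈ D, ℓ w ≠ 0 := by
    intro D
    induction D using Finset.induction with
    | empty => exact fun _ => ⟨0, by simp⟩
    | @insert w D hwD ih =>
      intro h0
      obtain ⟨ℓ, hℓ⟩ := ih (fun h => h0 (Finset.mem_insert_of_mem h))
      have hw0 : w ≠ 0 := fun h => h0 (by simp [h])
      obtain ⟨i, hi⟩ : ∃ i, w i ≠ 0 := by
        by_contra h; push_neg at h; exact hw0 (funext h)
      set ℓ' : (Fin d → ℝ) →ₗ[ℝ] ℝ := LinearMap.proj i with hℓ'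
      have hℓ'w : ℓ' w ≠ 0 := hi
      obtain ⟨t, ht⟩ := Infinite.exists_notMem_finset
        ((insert w D).image fun v => -ℓ v / ℓ' v)
      refine ⟨ℓ + t • ℓ', ?_⟩
      intro u hu
      simp only [LinearMap.add_apply, LinearMap.smul_apply, smul_eq_mul]
      rcases Finset.mem_insert.mp hu with rfl | huD
      · intro h
        apply ht
        refine Finset.mem_image.mpr ⟨u, Finset.mem_insert_self _ _, ?_⟩
        field_simp
        linarith
      · intro h
        by_cases hz : ℓ' u = 0
        · rw [hz, mul_zero, add_zero] at h; exact hℓ u huD h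
        · apply ht
          refine Finset.mem_image.mpr ⟨u, Finset.mem_insert_of_mem huD, ?_⟩
          field_simp
          linarith
  obtain ⟨ℓ, hℓ⟩ := key ((S ×ˢ S).filter (fun p => p.1 ≠ p.2) |>.image fun p => p.1 - p.2)
    (by
      intro h
      obtain ⟨⟨a, b⟩, hab, h2⟩ := Finset.mem_image.mp h
      simp only [Finset.mem_filter] at hab
      exact hab.2 (sub_eq_zero.mp h2))
  refine ⟨ℓ, ?_⟩
  intro a ha b hb hab
  by_contra hne
  have : ℓ (a - b) ≠ 0 := hℓ _ (Finset.mem_image.mpr ⟨(a, b),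
    Finset.mem_filter.mpr ⟨Finset.mem_product.mpr ⟨ha, hb⟩, hne⟩, rfl⟩)
  rw [map_sub] at this
  exact this (by rw [hab, sub_self])

lemma hull_sep (ℓ : (Fin d → ℝ) →ₗ[ℝ] ℝ) (A B : Finset (Fin d → ℝ))
    (h : ∀ p ∈ A, ∀ q ∈ B, ℓ p < ℓ q) :
    convexHull ℝ (A : Set (Fin d → ℝ)) ∩ convexHull ℝ (B : Set (Fin d → ℝ)) = ∅ := by
  rcases A.eq_empty_or_nonempty with rfl | hA
  · simp
  rcases B.eq_empty_or_nonempty with rfl | hB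
  · simp
  set c := A.sup' hA ℓ with hc
  have hAsub : convexHull ℝ (A : Set (Fin d → ℝ)) ⊆ {z | ℓ z ≤ c} := by
    apply convexHull_min _ (convex_halfSpace_le (LinearMap.isLinear ℓ) c)
    intro p hp
    exact Finset.le_sup' ℓ hp
  have hBsub : convexHull ℝ (B : Set (Fin d → ℝ)) ⊆ {z | c < ℓ z} := by
    apply convexHull_min _ (convex_halfSpace_gt (LinearMap.isLinear ℓ) c)
    intro q hq
    exact (Finset.sup'_lt_iff hA).mpr (fun p hp => h p hp q hq)
  ext z
  simp only [Set.mem_inter_iff, Set.mem_empty_iff_false, iff_false, not_and]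
  intro hzA hzB
  have h1 : ℓ z ≤ c := hAsub hzA
  have h2 : c < ℓ z := hBsub hzB
  linarith

lemma radon_gadget (c : Fin d → ℝ) (F : Finset (Fin d → ℝ)) (hc : c ∉ F)
    (hF : d + 1 ≤ F.card) :
    ∃ Q : Finset (Fin d → ℝ), Q ⊆ F ∧ Q.Nonempty ∧
      (convexHull ℝ ((insert c (F \ Q) : Finset _) : Set (Fin d → ℝ)) ∩
        convexHull ℝ (Q : Set (Fin d → ℝ))).Nonempty := by
  classical
  set G : Finset (Fin d → ℝ) := insert c F with hG
  have hcG : c ∈ G := by simp [hG]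
  have hGcard : d + 2 ≤ G.card := by
    rw [hG, Finset.card_insert_of_notMem hc]; omega
  have hdep : ¬ AffineIndependent ℝ (fun x : G => (x : Fin d → ℝ)) := by
    intro h
    have h1 := h.card_le_finrank_succ
    have hle : Module.finrank ℝ (vectorSpan ℝ (Set.range (fun x : G => (x : Fin d → ℝ)))) ≤
        Module.finrank ℝ (Fin d → ℝ) := Submodule.finrank_le _
    simp only [Fintype.card_coe] at h1
    rw [Module.finrank_fintype_fun_eq_card, Fintype.card_fin] at hle
    omega
  obtain ⟨I₀, r₀, hr1₀, hr2₀⟩ := Convex.radon_partition (𝕜 := ℝ) hdep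
  have main : ∀ (I : Set G) (r : Fin d → ℝ),
      r ∈ convexHull ℝ ((fun x : G => (x : Fin d → ℝ)) '' I) →
      r ∈ convexHull ℝ ((fun x : G => (x : Fin d → ℝ)) '' Iᶜ) →
      (⟨c, hcG⟩ : G) ∈ I →
      ∃ Q : Finset (Fin d → ℝ), Q ⊆ F ∧ Q.Nonempty ∧
        (convexHull ℝ ((insert c (F \ Q) : Finset _) : Set (Fin d → ℝ)) ∩
          convexHull ℝ (Q : Set (Fin d → ℝ))).Nonempty := by
    intro I r hr1 hr2 hcI
    set Q : Finset (Fin d → ℝ) := F.filter (fun x => ∃ hx : x ∈ G, (⟨x, hx⟩ : G) ∈ Iᶜ) with hQ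
    have hQF : Q ⊆ F := Finset.filter_subset _ _
    refine ⟨Q, hQF, ?_, ⟨r, ?_, ?_⟩⟩
    · have hne : ((fun x : G => (x : Fin d → ℝ)) '' Iᶜ).Nonempty := by
        by_contra h
        rw [Set.not_nonempty_iff_eq_empty] at h
        rw [h] at hr2
        simp at hr2
      obtain ⟨y, ⟨⟨yv, hyG⟩, hyI, rfl⟩⟩ := hne
      have hyF : yv ∈ F := by
        rcases Finset.mem_insert.mp hyG with rfl | h
        · exact absurd hcI hyI
        · exact h
      exact ⟨yv, Finset.mem_filter.mpr ⟨hyF, ⟨hyG, hyI⟩⟩⟩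
    · refine convexHull_mono ?_ hr1
      rintro y ⟨⟨yv, hyG⟩, hyI, rfl⟩
      have : yv ∈ insert c (F \ Q) := by
        rcases Finset.mem_insert.mp hyG with rfl | h
        · exact Finset.mem_insert_self _ _
        · refine Finset.mem_insert_of_mem (Finset.mem_sdiff.mpr ⟨h, ?_⟩)
          intro hmem
          obtain ⟨hx, hnI⟩ := (Finset.mem_filter.mp hmem).2
          exact hnI hyI
      exact_mod_cast this
    · refine convexHull_mono ?_ hr2
      rintro y ⟨⟨yv, hyG⟩, hyI, rfl⟩
      have hyF : yv ∈ F := by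
        rcases Finset.mem_insert.mp hyG with rfl | h
        · exact absurd hcI hyI
        · exact h
      have : yv ∈ Q := Finset.mem_filter.mpr ⟨hyF, ⟨hyG, hyI⟩⟩
      exact_mod_cast this
  by_cases hcI : (⟨c, hcG⟩ : G) ∈ I₀
  · exact main I₀ r₀ hr1₀ hr2₀ hcI
  · exact main I₀ᶜ r₀ hr2₀ (by rwa [compl_compl]) hcI
open Finset

lemma caterpillar_edges {n m : ℕ} (T : SimpleGraph (Fin n)) (hT : T.IsTree)
    (v : Fin m → Fin n) (hvinj : Function.Injective v)
    (hpath : ∀ (i : Fin m) (h : (i : ℕ) + 1 < m), T.Adj (v i) (v ⟨(i : ℕ) + 1, h⟩))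
    (vn : ℕ → Fin n) (hvn : ∀ i (h : i < m), vn i = v ⟨i, h⟩)
    (f : Fin n → Fin m)
    (hf1 : ∀ i, f (v i) = i)
    (hf2 : ∀ x : Fin n, (¬ ∃ i, v i = x) → T.Adj (v (f x)) x) :
    ∀ a b, T.Adj a b ↔
      (∃ i : ℕ, i + 1 < m ∧ ((a = vn i ∧ b = vn (i+1)) ∨ (b = vn i ∧ a = vn (i+1))))
      ∨ ((¬ ∃ i, v i = a) ∧ b = v (f a))
      ∨ ((¬ ∃ i, v i = b) ∧ a = v (f b)) := by
  classical
  haveI : DecidableRel T.Adj := fun a b => Classical.dec _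
  have hmn : m ≤ n := by
    have := Fintype.card_le_of_injective v hvinj
    simpa using this
  have hn1 : 1 ≤ n := by
    have h1 : Nonempty (Fin n) := hT.isConnected.nonempty
    exact Fin.pos_iff_nonempty.mpr h1
  have hm1 : 1 ≤ m := by
    by_contra h
    push_neg at h
    interval_cases m
    exact (f ⟨0, by omega⟩).elim0
  -- the candidate edge set
  set E1 : Finset (Sym2 (Fin n)) :=
    (Finset.range (m-1)).image (fun i => s(vn i, vn (i+1))) with hE1
  set E2 : Finset (Sym2 (Fin n)) :=
    (Finset.univ.filter (fun x => ¬ ∃ i, v i = x)).image (fun x => s(x, v (f x))) with hE2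
  have hvnvn : ∀ i j : ℕ, i < m → j < m → vn i = vn j → i = j := by
    intro i j hi hj h
    rw [hvn i hi, hvn j hj] at h
    have := hvinj h
    exact Fin.mk.inj_iff.mp this
  have hE1card : E1.card = m - 1 := by
    rw [hE1, Finset.card_image_of_injOn, Finset.card_range]
    intro i hi j hj h
    simp only [Finset.mem_coe, Finset.mem_range] at hi hj
    rw [Sym2.eq_iff] at h
    rcases h with ⟨h1, h2⟩ | ⟨h1, h2⟩
    · exact hvnvn _ _ (by omega) (by omega) h1
    · have e1 := hvnvn _ _ (by omega) (by omega) h1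
      have e2 := hvnvn _ _ (by omega) (by omega) h2
      omega
  have hE2card : E2.card = n - m := by
    rw [hE2, Finset.card_image_of_injOn]
    · have : (Finset.univ.filter (fun x => ¬ ∃ i, v i = x)) =
          Finset.univ \ Finset.univ.image v := by
        ext x
        simp
      rw [this, Finset.card_sdiff_of_subset (Finset.subset_univ _), Finset.card_univ,
        Finset.card_image_of_injective _ hvinj, Finset.card_univ]
      simp
    · intro x hx y hy h
      simp only [Finset.coe_filter, Set.mem_setOf_eq, Finset.mem_univ, true_and] at hx hy
      rw [Sym2.eq_iff] at h
      rcases h with ⟨h1, h2⟩ | ⟨h1, h2⟩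
      · exact h1
      · exact absurd ⟨f y, h1.symm⟩ hx
  have hdisj : Disjoint E1 E2 := by
    rw [Finset.disjoint_left]
    intro e he1 he2
    rw [hE1, Finset.mem_image] at he1
    rw [hE2, Finset.mem_image] at he2
    obtain ⟨i, hi, rfl⟩ := he1
    obtain ⟨x, hx, hx2⟩ := he2
    simp only [Finset.mem_range] at hi
    simp only [Finset.mem_filter, Finset.mem_univ, true_and] at hx
    rw [Sym2.eq_iff] at hx2
    rcases hx2 with ⟨h1, h2⟩ | ⟨h1, h2⟩
    · exact hx ⟨⟨i, by omega⟩, by rw [← hvn i (by omega)]; exact h1.symm⟩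
    · exact hx ⟨⟨i+1, by omega⟩, by rw [← hvn (i+1) (by omega)]; exact h1.symm⟩
  have hsub : E1 ∪ E2 ⊆ T.edgeFinset := by
    intro e he
    rw [SimpleGraph.mem_edgeFinset]
    rcases Finset.mem_union.mp he with h | h
    · rw [hE1, Finset.mem_image] at h
      obtain ⟨i, hi, rfl⟩ := h
      simp only [Finset.mem_range] at hi
      rw [SimpleGraph.mem_edgeSet, hvn i (by omega), hvn (i+1) (by omega)]
      exact hpath ⟨i, by omega⟩ (by simpa using (by omega : i + 1 < m))
    · rw [hE2, Finset.mem_image] at h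
      obtain ⟨x, hx, rfl⟩ := h
      simp only [Finset.mem_filter, Finset.mem_univ, true_and] at hx
      rw [SimpleGraph.mem_edgeSet]
      exact (hf2 x hx).symm
  have hecard : T.edgeFinset.card + 1 = n := by
    have := hT.card_edgeFinset
    simpa using this
  have hEcard : (E1 ∪ E2).card = n - 1 := by
    rw [Finset.card_union_of_disjoint hdisj, hE1card, hE2card]
    omega
  have hEeq : E1 ∪ E2 = T.edgeFinset := by
    apply Finset.eq_of_subset_of_card_le hsub
    rw [hEcard]
    omega
  intro a b
  constructor
  · intro hab
    have : s(a, b) ∈ E1 ∪ E2 := by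
      rw [hEeq, SimpleGraph.mem_edgeFinset, SimpleGraph.mem_edgeSet]
      exact hab
    rcases Finset.mem_union.mp this with h | h
    · rw [hE1, Finset.mem_image] at h
      obtain ⟨i, hi, he⟩ := h
      simp only [Finset.mem_range] at hi
      rw [Sym2.eq_iff] at he
      rcases he with ⟨h1, h2⟩ | ⟨h1, h2⟩
      · exact Or.inl ⟨i, by omega, Or.inl ⟨h1.symm, h2.symm⟩⟩
      · exact Or.inl ⟨i, by omega, Or.inr ⟨h1.symm, h2.symm⟩⟩
    · rw [hE2, Finset.mem_image] at h
      obtain ⟨x, hx, he⟩ := h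
      simp only [Finset.mem_filter, Finset.mem_univ, true_and] at hx
      rw [Sym2.eq_iff] at he
      rcases he with ⟨h1, h2⟩ | ⟨h1, h2⟩
      · subst h1; exact Or.inr (Or.inl ⟨hx, h2.symm⟩)
      · subst h1; exact Or.inr (Or.inr ⟨hx, h2.symm⟩)
  · intro h
    rcases h with ⟨i, hi, h⟩ | ⟨hx, rfl⟩ | ⟨hx, rfl⟩
    · have hadj := hpath ⟨i, by omega⟩ (by simpa using (by omega : i + 1 < m))
      rw [← hvn i (by omega)] at hadj
      have : v ⟨(⟨i, by omega⟩ : Fin m) + 1, by simpa using (by omega : i+1 < m)⟩ = vn (i+1) := by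
        rw [hvn (i+1) (by omega)]
      rcases h with ⟨rfl, rfl⟩ | ⟨rfl, rfl⟩
      · rw [← this]; exact hadj
      · rw [← this]; exact hadj.symm
    · exact (hf2 a hx).symm
    · exact hf2 b hx

/-- A tree `T` on `Fin n` is a caterpillar if it has a central path such that every vertex
is on the path or adjacent to a vertex of the path. -/
def IsCaterpillar {n : ℕ} (T : SimpleGraph (Fin n)) : Prop :=
  T.IsTree ∧
  ∃ (m : ℕ) (v : Fin m → Fin n),
    Function.Injective v ∧
    (∀ (i : Fin m) (h : (i : ℕ) + 1 < m), T.Adj (v i) (v ⟨i + 1, h⟩)) ∧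
    (∀ x : Fin n, (∃ i, v i = x) ∨ ∃ i, T.Adj (v i) x)

set_option maxHeartbeats 2000000 in
/-- Every caterpillar tree `T` on `n` nodes is partition induced on every set
of at least `(d+1)(n-1)+1` points in general position in `ℝ^d`; i.e. `Tv(T,d) ≤ (d+1)(n-1)+1`. -/
theorem caterpillar_tverberg
    {d n : ℕ} (hd : 1 ≤ d) (hn : 1 ≤ n)
    (T : SimpleGraph (Fin n)) (hT : IsCaterpillar T)
    (S : Finset (Fin d → ℝ)) (hcard : (d + 1) * (n - 1) + 1 ≤ S.card)
    -- general position: any `d+1` points of `S` are affinely independent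
    (hgen : ∀ W : Finset (Fin d → ℝ), W ⊆ S → W.card = d + 1 →
      AffineIndependent ℝ (fun x : W => (x : Fin d → ℝ))) :
    ∃ P : Fin n → Finset (Fin d → ℝ),
      (∀ i, (P i).Nonempty) ∧
      (∀ i j, i ≠ j → Disjoint (P i) (P j)) ∧
      S = Finset.univ.biUnion P ∧
      (∀ i j, i ≠ j →
        ((convexHull ℝ (P i : Set (Fin d → ℝ)) ∩
          convexHull ℝ (P j : Set (Fin d → ℝ))).Nonempty ↔ T.Adj i j)) ∧
      (∀ i j k, i ≠ j → j ≠ k → i ≠ k →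
        convexHull ℝ (P i : Set (Fin d → ℝ)) ∩
          convexHull ℝ (P j : Set (Fin d → ℝ)) ∩
          convexHull ℝ (P k : Set (Fin d → ℝ)) = ∅) := by
  classical
  obtain ⟨htree, m, v, hvinj, hpath, hcov⟩ := hT
  rcases eq_or_lt_of_le hn with hn1 | hn2
  · -- n = 1 : a single part consisting of all of S
    subst hn1
    refine ⟨fun _ => S, fun i => ?_, fun i j hij => absurd (Subsingleton.elim i j) hij, ?_,
      fun i j hij => absurd (Subsingleton.elim i j) hij,
      fun i j k hij hjk hik => absurd (Subsingleton.elim i j) hij⟩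
    · have h1 : 1 ≤ S.card := by simpa using hcard
      show S.Nonempty
      exact Finset.card_pos.mp (by omega)
    · ext p
      simp
  -- main case : n ≥ 2
  set N := S.card with hNdef
  have hN : 1 + (n - 1) * (d + 1) ≤ N := by
    rw [hNdef]
    calc 1 + (n-1) * (d+1) = (d+1) * (n-1) + 1 := by ring
    _ ≤ S.card := hcard
  have hN1 : 1 ≤ N := by omega
  -- the generic functional and the sorted enumeration of S
  obtain ⟨ℓ, hℓinj⟩ := exists_inj_functional S
  set L := S.image ℓ with hLdef
  have hLcard : L.card = N := Finset.card_image_of_injOn hℓinj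
  set σL := L.orderIsoOfFin hLcard with hσLdef
  set x : ℕ → (Fin d → ℝ) := fun t =>
    if h : t < N then (Finset.mem_image.mp (σL ⟨t, h⟩).2).choose else (fun _ => 0) with hxdef
  have hxspec : ∀ t (h : t < N), x t ∈ S ∧ ℓ (x t) = ((σL ⟨t, h⟩ : L) : ℝ) := by
    intro t h
    simp only [hxdef]
    simp only [dif_pos h]
    exact ⟨(Finset.mem_image.mp (σL ⟨t, h⟩).2).choose_spec.1,
      (Finset.mem_image.mp (σL ⟨t, h⟩).2).choose_spec.2⟩
  have hxS : ∀ t, t < N → x t ∈ S := fun t h => (hxspec t h).1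
  have hxmono : ∀ t t', t < t' → t' < N → ℓ (x t) < ℓ (x t') := by
    intro t t' htt ht'
    have ht : t < N := lt_trans htt ht'
    rw [(hxspec t ht).2, (hxspec t' ht').2]
    have : σL ⟨t, ht⟩ < σL ⟨t', ht'⟩ := by
      rw [OrderIso.lt_iff_lt]
      exact Fin.mk_lt_mk.mpr htt
    exact_mod_cast this
  have hxinj : ∀ t t', t < N → t' < N → x t = x t' → t = t' := by
    intro t t' ht ht' hx
    by_contra hne
    rcases Nat.lt_or_ge t t' with h | h
    · exact absurd (congrArg ℓ hx) (ne_of_lt (hxmono t t' h ht'))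
    · have h2 : t' < t := by omega
      exact absurd (congrArg ℓ hx.symm) (ne_of_lt (hxmono t' t h2 ht))
  have hxsurj : ∀ p ∈ S, ∃ t, t < N ∧ x t = p := by
    intro p hp
    have hpl : ℓ p ∈ L := Finset.mem_image_of_mem ℓ hp
    set tf := σL.symm ⟨ℓ p, hpl⟩ with htf
    refine ⟨(tf : ℕ), tf.2, ?_⟩
    have h1 := (hxspec (tf : ℕ) tf.2).2
    have h2 : σL ⟨(tf : ℕ), tf.2⟩ = ⟨ℓ p, hpl⟩ := by
      rw [htf]
      convert σL.apply_symm_apply ⟨ℓ p, hpl⟩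
    rw [h2] at h1
    exact hℓinj (hxS _ tf.2) hp h1
  -- spine infrastructure
  set f : Fin n → Fin m := fun b =>
    if h : ∃ i, v i = b then h.choose else ((hcov b).resolve_left h).choose with hfdef
  have hf1 : ∀ i, f (v i) = i := by
    intro i
    have h : ∃ i', v i' = v i := ⟨i, rfl⟩
    simp only [hfdef]
    simp only [dif_pos h]
    exact hvinj h.choose_spec
  have hf2 : ∀ b, (¬ ∃ i, v i = b) → T.Adj (v (f b)) b := by
    intro b hb
    simp only [hfdef]
    simp only [dif_neg hb]
    exact ((hcov b).resolve_left hb).choose_spec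
  have hm1 : 1 ≤ m := by
    by_contra h
    push_neg at h
    interval_cases m
    exact (f ⟨0, by omega⟩).elim0
  set vn : ℕ → Fin n := fun i => v ⟨min i (m - 1), by omega⟩ with hvndef
  have hvn : ∀ i (h : i < m), vn i = v ⟨i, h⟩ := by
    intro i h
    have hmin : min i (m - 1) = i := by omega
    simp only [hvndef]
    congr 1
    exact Fin.ext hmin
  have hvnvn : ∀ i j : ℕ, i < m → j < m → vn i = vn j → i = j := by
    intro i j hi hj h
    rw [hvn i hi, hvn j hj] at h
    exact Fin.mk.inj_iff.mp (hvinj h)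
  have hvnspine : ∀ i, ∃ i', v i' = vn i := by
    intro i
    simp only [hvndef]
    exact ⟨_, rfl⟩
  have hvv : ∀ i0 : Fin m, v i0 = vn (i0 : ℕ) := by
    intro i0
    rw [hvn _ i0.2]
  have Echar := caterpillar_edges T htree v hvinj hpath vn hvn f hf1 hf2
  set fidx : Fin n → ℕ := fun b => ((f b : Fin m) : ℕ) with hfidxdef
  have hfidxlt : ∀ b, fidx b < m := fun b => (f b).2
  have hfvn : ∀ i, i < m → fidx (vn i) = i := by
    intro i h
    simp only [hfidxdef]
    simp only [hvn i h, hf1]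
  have hvfb : ∀ b, v (f b) = vn (fidx b) := by
    intro b
    rw [hvn _ (hfidxlt b)]
  set r0 : Fin n := vn 0 with hr0def
  set NR : Finset (Fin n) := Finset.univ.erase r0 with hNRdef
  have hNRiff : ∀ b, b ∈ NR ↔ b ≠ r0 := by
    intro b
    rw [hNRdef]
    simp
  have hNRcard : NR.card = n - 1 := by
    rw [hNRdef, Finset.card_erase_of_mem (Finset.mem_univ _), Finset.card_univ,
      Fintype.card_fin]
  have hvnNR : ∀ i, 1 ≤ i → i < m → vn i ∈ NR := by
    intro i h1 h2
    rw [hNRiff, hr0def]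
    intro h
    exact absurd (hvnvn i 0 h2 (by omega) h) (by omega)
  have hleafNR : ∀ b, (¬ ∃ i, v i = b) → b ∈ NR := by
    intro b hb
    rw [hNRiff]
    intro h
    exact hb (h ▸ hvnspine 0)
  -- keys and the gadget indexing
  set groupkey : Fin n → ℕ := fun b => if ∃ i, v i = b then 2 * fidx b - 1 else 2 * fidx b
    with hgkdef
  have hgkspine : ∀ i, 1 ≤ i → i < m → groupkey (vn i) = 2 * i - 1 := by
    intro i h1 h2
    simp only [hgkdef, if_pos (hvnspine i), hfvn i h2]
  have hgkleaf : ∀ b, (¬ ∃ i, v i = b) → groupkey b = 2 * fidx b := by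
    intro b hb
    simp only [hgkdef, if_neg hb]
  set fullkey : Fin n → ℕ := fun b => (b : ℕ) + groupkey b * n with hfkdef
  have hfkinj : Function.Injective fullkey := by
    intro a b h
    simp only [hfkdef] at h
    have ha : ((a : ℕ) + groupkey a * n) % n = (a : ℕ) % n := Nat.add_mul_mod_self_right _ _ _
    have hb : ((b : ℕ) + groupkey b * n) % n = (b : ℕ) % n := Nat.add_mul_mod_self_right _ _ _
    apply Fin.ext
    have := congrArg (· % n) h
    rw [ha, hb, Nat.mod_eq_of_lt a.2, Nat.mod_eq_of_lt b.2] at this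
    exact this
  set KS : Finset ℕ := NR.image fullkey with hKSdef
  have hKScard : KS.card = n - 1 := by
    rw [hKSdef, Finset.card_image_of_injective _ hfkinj, hNRcard]
  set σK := KS.orderIsoOfFin hKScard with hσKdef
  set g : Fin n → ℕ := fun b =>
    if h : b ∈ NR then ((σK.symm ⟨fullkey b, Finset.mem_image_of_mem fullkey h⟩ : Fin (n-1)) : ℕ)
    else 0 with hgdef
  have hgK : ∀ b ∈ NR, g b < n - 1 := by
    intro b hb
    simp only [hgdef]
    simp only [dif_pos hb]
    exact (σK.symm ⟨fullkey b, Finset.mem_image_of_mem fullkey hb⟩).2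
  have hkeymono : ∀ a ∈ NR, ∀ b ∈ NR, groupkey a < groupkey b → g a < g b := by
    intro a ha b hb hk
    have hfk : fullkey a < fullkey b := by
      simp only [hfkdef]
      calc (a : ℕ) + groupkey a * n < n + groupkey a * n := by omega
      _ = (groupkey a + 1) * n := by ring
      _ ≤ groupkey b * n := Nat.mul_le_mul_right n (by omega)
      _ ≤ (b : ℕ) + groupkey b * n := by omega
    simp only [hgdef]
    simp only [dif_pos ha, dif_pos hb]
    have : (⟨fullkey a, Finset.mem_image_of_mem fullkey ha⟩ : KS) <
        ⟨fullkey b, Finset.mem_image_of_mem fullkey hb⟩ := Subtype.mk_lt_mk.mpr hfk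
    exact (σK.symm.lt_iff_lt.mpr this : _)
  have hginj : ∀ a ∈ NR, ∀ b ∈ NR, g a = g b → a = b := by
    intro a ha b hb h
    simp only [hgdef] at h
    simp only [dif_pos ha, dif_pos hb] at h
    have := σK.symm.injective (Fin.ext h)
    exact hfkinj (congrArg Subtype.val this)
  have hgsurj : ∀ j, j < n - 1 → ∃ b, b ∈ NR ∧ g b = j := by
    intro j hj
    obtain ⟨b, hbNR, hfb⟩ := Finset.mem_image.mp (σK ⟨j, hj⟩).2
    refine ⟨b, hbNR, ?_⟩
    simp only [hgdef]
    simp only [dif_pos hbNR]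
    have : (⟨fullkey b, Finset.mem_image_of_mem fullkey hbNR⟩ : KS) = σK ⟨j, hj⟩ :=
      Subtype.ext hfb
    rw [this, OrderIso.symm_apply_apply]
  set bv : ℕ → Fin n := fun j => if h : ∃ b, b ∈ NR ∧ g b = j then h.choose else r0 with hbvdef
  have hbv : ∀ j, j < n - 1 → bv j ∈ NR ∧ g (bv j) = j := by
    intro j hj
    have hex : ∃ b, b ∈ NR ∧ g b = j := hgsurj j hj
    simp only [hbvdef]
    simp only [dif_pos hex]
    exact hex.choose_spec
  have hbvg : ∀ b ∈ NR, bv (g b) = b := by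
    intro b hb
    obtain ⟨h1, h2⟩ := hbv (g b) (hgK b hb)
    exact hginj _ h1 _ hb h2
  -- parent map
  set pidx : Fin n → ℕ := fun b => if ∃ i, v i = b then fidx b - 1 else fidx b with hpidxdef
  set par : Fin n → Fin n := fun b => vn (pidx b) with hpardef
  have hpidxlt : ∀ b, pidx b < m := by
    intro b
    simp only [hpidxdef]
    split <;> [exact lt_of_le_of_lt (Nat.sub_le _ _) (hfidxlt b); exact hfidxlt b]
  have hpareq : ∀ b, par b = vn (pidx b) := fun b => by simp only [hpardef]
  have hpidxspine : ∀ i, i < m → pidx (vn i) = i - 1 := by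
    intro i h
    simp only [hpidxdef]
    simp only [if_pos (hvnspine i), hfvn i h]
  have hpidxleaf : ∀ b, (¬ ∃ i, v i = b) → pidx b = fidx b := by
    intro b hb
    simp only [hpidxdef]
    simp only [if_neg hb]
  have hchild : ∀ b ∈ NR, ∀ i, i < m → par b = vn i →
      ((¬ ∃ i', v i' = b) ∧ fidx b = i) ∨ (i + 1 < m ∧ b = vn (i + 1)) := by
    intro b hb i hi hpar
    by_cases hsp : ∃ i', v i' = b
    · right
      obtain ⟨i0, rfl⟩ := hsp
      have hb0 : (i0 : ℕ) ≠ 0 := by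
        intro h0
        rw [hNRiff] at hb
        apply hb
        rw [hvv i0, h0, hr0def]
      rw [hpareq, hvv i0, hpidxspine _ i0.2] at hpar
      have := hvnvn _ _ (by omega) hi hpar
      have hieq : (i0 : ℕ) = i + 1 := by omega
      rw [hvv i0, hieq]
      exact ⟨hieq ▸ i0.2, rfl⟩
    · left
      rw [hpareq, hpidxleaf b hsp] at hpar
      exact ⟨hsp, hvnvn _ _ (hfidxlt b) hi hpar⟩
  have hpathadj : ∀ i, i + 1 < m → T.Adj (vn i) (vn (i+1)) := by
    intro i hi
    have h0 : i < m := by omega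
    have hco : ((⟨i, h0⟩ : Fin m) : ℕ) + 1 < m := hi
    have e1 : vn i = v ⟨i, h0⟩ := hvn i h0
    have e2 : vn (i+1) = v ⟨((⟨i, h0⟩ : Fin m) : ℕ) + 1, hco⟩ := by
      rw [hvn (i+1) hi]
    rw [e1, e2]
    exact hpath ⟨i, h0⟩ hco
  have hadjpar : ∀ b ∈ NR, T.Adj (par b) b := by
    intro b hb
    by_cases hsp : ∃ i', v i' = b
    · obtain ⟨i0, rfl⟩ := hsp
      have hb0 : (i0 : ℕ) ≠ 0 := by
        intro h0
        rw [hNRiff] at hb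
        exact hb (by rw [hvv i0, h0, hr0def])
      rw [hvv i0, hpareq, hpidxspine _ i0.2]
      have hlt : (i0 : ℕ) - 1 + 1 < m := by
        have := i0.2; omega
      have h3 := hpathadj ((i0 : ℕ) - 1) hlt
      have h4 : (i0 : ℕ) - 1 + 1 = (i0 : ℕ) := by omega
      rwa [h4] at h3
    · have := hf2 b hsp
      rw [hvfb b] at this
      rw [hpareq, hpidxleaf b hsp]
      exact this
  have hedge : ∀ a b, T.Adj a b → (b ∈ NR ∧ par b = a) ∨ (a ∈ NR ∧ par a = b) := by
    intro a b hadj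
    rcases (Echar a b).mp hadj with ⟨i, hi, h⟩ | ⟨hleaf, rfl⟩ | ⟨hleaf, rfl⟩
    · rcases h with ⟨rfl, rfl⟩ | ⟨rfl, rfl⟩
      · left
        refine ⟨hvnNR (i+1) (by omega) hi, ?_⟩
        rw [hpareq, hpidxspine (i+1) hi]
        simp
      · right
        refine ⟨hvnNR (i+1) (by omega) hi, ?_⟩
        rw [hpareq, hpidxspine (i+1) hi]
        simp
    · right
      refine ⟨hleafNR a hleaf, ?_⟩
      rw [hpareq, hpidxleaf a hleaf, ← hvfb a]
    · left
      refine ⟨hleafNR b hleaf, ?_⟩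
      rw [hpareq, hpidxleaf b hleaf, ← hvfb b]
  -- unique neighbour of a leaf, spine adjacency
  have hleafnbr : ∀ a b, (¬ ∃ i, v i = a) → T.Adj a b → b = v (f a) := by
    intro a b ha hadj
    rcases (Echar a b).mp hadj with ⟨i, hi, h⟩ | ⟨_, rfl⟩ | ⟨_, h⟩
    · rcases h with ⟨rfl, _⟩ | ⟨_, rfl⟩
      · exact absurd (hvnspine i) ha
      · exact absurd (hvnspine (i+1)) ha
    · rfl
    · exact absurd ⟨f b, h.symm⟩ ha
  have hspadj : ∀ i i', i < m → i' < m → T.Adj (vn i) (vn i') → (i' = i + 1 ∨ i = i' + 1) := by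
    intro i i' hi hi' hadj
    rcases (Echar _ _).mp hadj with ⟨i0, hi0, h⟩ | ⟨h, _⟩ | ⟨h, _⟩
    · rcases h with ⟨h1, h2⟩ | ⟨h1, h2⟩
      · left
        rw [hvnvn _ _ hi (by omega) h1, hvnvn _ _ hi' (by omega) h2]
      · right
        rw [hvnvn _ _ hi' (by omega) h1, hvnvn _ _ hi (by omega) h2]
    · exact absurd (hvnspine i) h
    · exact absurd (hvnspine i') h
  have htri : ∀ a b c : Fin n, a ≠ b → b ≠ c → a ≠ c →
      T.Adj a b → T.Adj b c → T.Adj a c → False := by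
    intro a b c hab hbc hac h1 h2 h3
    by_cases hsa : ∃ i, v i = a
    · by_cases hsb : ∃ i, v i = b
      · by_cases hsc : ∃ i, v i = c
        · obtain ⟨ia, rfl⟩ := hsa
          obtain ⟨ib, rfl⟩ := hsb
          obtain ⟨ic, rfl⟩ := hsc
          rw [hvv ia, hvv ib] at h1
          rw [hvv ib, hvv ic] at h2
          rw [hvv ia, hvv ic] at h3
          have e1 := hspadj _ _ ia.2 ib.2 h1
          have e2 := hspadj _ _ ib.2 ic.2 h2
          have e3 := hspadj _ _ ia.2 ic.2 h3
          omega
        · have hb1 := hleafnbr c a hsc h3.symm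
          have hb2 := hleafnbr c b hsc h2.symm
          exact hab (hb1.symm ▸ hb2.symm ▸ rfl)
      · have hb1 := hleafnbr b a hsb h1.symm
        have hb2 := hleafnbr b c hsb h2
        exact hac (hb1.symm ▸ hb2.symm ▸ rfl)
    · have hb1 := hleafnbr a b hsa h1
      have hb2 := hleafnbr a c hsa h3
      exact hbc (hb1.symm ▸ hb2.symm ▸ rfl)
  -- blocks
  set blo : ℕ → ℕ := fun j => 1 + j * (d + 1) with hblodef
  set bhi : ℕ → ℕ := fun j => if j = (n-1) - 1 then N else 1 + (j + 1) * (d + 1) with hbhidef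
  have hblo1 : ∀ j, 1 ≤ blo j := by intro j; simp only [hblodef]; omega
  have hbhiN : ∀ j, j < (n-1) → bhi j ≤ N := by
    intro j hj
    simp only [hbhidef]
    split
    · exact le_rfl
    · have h1 : (j + 1) * (d+1) ≤ (n-1) * (d+1) := Nat.mul_le_mul_right _ (by omega)
      omega
  have hlobhi : ∀ j, j < (n-1) → blo j + (d + 1) ≤ bhi j := by
    intro j hj
    simp only [hblodef, hbhidef]
    split
    · rename_i hlast
      have h1 : (j + 1) * (d+1) ≤ (n-1) * (d+1) := Nat.mul_le_mul_right _ (by omega)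
      have h2 : j * (d+1) + (d+1) = (j+1) * (d+1) := by ring
      omega
    · have h2 : j * (d+1) + (d+1) = (j+1) * (d+1) := by ring
      omega
  have hord : ∀ j j', j < j' → j' < (n-1) → bhi j ≤ blo j' := by
    intro j j' hjj hj'
    simp only [hbhidef, hblodef]
    rw [if_neg (by omega : ¬ j = (n-1) - 1)]
    have h1 : (j + 1) * (d+1) ≤ j' * (d+1) := Nat.mul_le_mul_right _ (by omega)
    omega
  set blk : ℕ → Finset (Fin d → ℝ) := fun j => (Finset.Ico (blo j) (bhi j)).image x with hblkdef
  have hblkmem : ∀ j p, p ∈ blk j ↔ ∃ t, (blo j ≤ t ∧ t < bhi j) ∧ x t = p := by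
    intro j p
    simp only [hblkdef]
    simp [Finset.mem_image, Finset.mem_Ico]
  have hblkS : ∀ j, j < (n-1) → blk j ⊆ S := by
    intro j hj p hp
    obtain ⟨t, ⟨_, ht2⟩, rfl⟩ := (hblkmem j p).mp hp
    exact hxS t (lt_of_lt_of_le ht2 (hbhiN j hj))
  have hblkcard : ∀ j, j < (n-1) → d + 1 ≤ (blk j).card := by
    intro j hj
    simp only [hblkdef]
    rw [Finset.card_image_of_injOn]
    · rw [Nat.card_Ico]
      have := hlobhi j hj
      omega
    · intro t ht t' ht' hxx
      simp only [Finset.coe_Ico, Set.mem_Ico] at ht ht'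
      exact hxinj t t' (lt_of_lt_of_le ht.2 (hbhiN j hj)) (lt_of_lt_of_le ht'.2 (hbhiN j hj)) hxx
  have hblkdisj : ∀ j j', j ≠ j' → j < (n-1) → j' < (n-1) → ∀ p, p ∈ blk j → p ∈ blk j' → False := by
    intro j j' hne hj hj' p hp hp'
    obtain ⟨t, ⟨ht1, ht2⟩, rfl⟩ := (hblkmem j p).mp hp
    obtain ⟨t', ⟨ht'1, ht'2⟩, hxx⟩ := (hblkmem j' _).mp hp'
    have hteq : t' = t := hxinj t' t (lt_of_lt_of_le ht'2 (hbhiN j' hj'))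
      (lt_of_lt_of_le ht2 (hbhiN j hj)) hxx
    subst hteq
    rcases Nat.lt_or_ge j j' with h | h
    · have := hord j j' h hj'
      omega
    · have hlt : j' < j := by omega
      have := hord j' j hlt hj
      omega
  have hx0blk : ∀ j, j < (n-1) → x 0 ∉ blk j := by
    intro j hj hmem
    obtain ⟨t, ⟨ht1, ht2⟩, hxx⟩ := (hblkmem j _).mp hmem
    have := hxinj t 0 (lt_of_lt_of_le ht2 (hbhiN j hj)) (by omega) hxx
    have := hblo1 j
    omega
  -- the Radon gadget machinery
  set QF : (Fin d → ℝ) → Finset (Fin d → ℝ) → Finset (Fin d → ℝ) := fun c F =>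
    if h : c ∉ F ∧ d + 1 ≤ F.card then (radon_gadget c F h.1 h.2).choose else F with hQFdef
  have hQFsub : ∀ c F, QF c F ⊆ F := by
    intro c F
    simp only [hQFdef]
    split
    · rename_i h
      exact (radon_gadget c F h.1 h.2).choose_spec.1
    · exact subset_rfl
  have hQFne : ∀ c F, F.Nonempty → (QF c F).Nonempty := by
    intro c F hF
    simp only [hQFdef]
    split
    · rename_i h
      exact (radon_gadget c F h.1 h.2).choose_spec.2.1
    · exact hF
  have hQFspec : ∀ c F, c ∉ F → d + 1 ≤ F.card →
      ((convexHull ℝ ((insert c (F \ QF c F) : Finset _) : Set (Fin d → ℝ))) ∩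
        convexHull ℝ ((QF c F : Finset _) : Set (Fin d → ℝ))).Nonempty := by
    intro c F h1 h2
    simp only [hQFdef]
    simp only [dif_pos (And.intro h1 h2)]
    exact (radon_gadget c F h1 h2).choose_spec.2.2
  set pick : Finset (Fin d → ℝ) → (Fin d → ℝ) := fun F =>
    if h : F.Nonempty then h.choose else (fun _ => 0) with hpickdef
  have hpick : ∀ F : Finset (Fin d → ℝ), F.Nonempty → pick F ∈ F := by
    intro F hF
    simp only [hpickdef]
    simp only [dif_pos hF]
    exact hF.choose_spec
  set anch : ℕ → (Fin d → ℝ) := fun i =>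
    Nat.rec (x 0) (fun i' prev => pick (QF prev (blk (g (vn (i' + 1)))))) i with hanchdef
  have hanch0 : anch 0 = x 0 := by
    rw [hanchdef]
    try rfl
  have hanchS : ∀ i, anch (i + 1) = pick (QF (anch i) (blk (g (vn (i + 1))))) := by
    intro i
    rw [hanchdef]
    try rfl
  set Q : ℕ → Finset (Fin d → ℝ) := fun j => QF (anch (pidx (bv j))) (blk j) with hQdef
  have hQsub : ∀ j, Q j ⊆ blk j := by
    intro j
    simp only [hQdef]
    exact hQFsub _ _
  have hQne : ∀ j, j < (n-1) → (Q j).Nonempty := by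
    intro j hj
    simp only [hQdef]
    exact hQFne _ _ (Finset.card_pos.mp (by have := hblkcard j hj; omega))
  set P : Fin n → Finset (Fin d → ℝ) := fun a =>
    (if a = r0 then {x 0} else Q (g a)) ∪
      ((Finset.range (n-1)).filter (fun j => par (bv j) = a)).biUnion (fun j => blk j \ Q j)
    with hPdef
  have hPmem : ∀ a p, p ∈ P a ↔ ((a = r0 ∧ p = x 0) ∨ (a ≠ r0 ∧ p ∈ Q (g a)) ∨
      (∃ j, j < (n-1) ∧ par (bv j) = a ∧ p ∈ blk j ∧ p ∉ Q j)) := by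
    intro a p
    constructor
    · intro hm
      have hm' := hm
      simp only [hPdef] at hm'
      rcases Finset.mem_union.mp hm' with h1 | h2
      · by_cases h : a = r0
        · rw [if_pos h] at h1
          exact Or.inl ⟨h, Finset.mem_singleton.mp h1⟩
        · rw [if_neg h] at h1
          exact Or.inr (Or.inl ⟨h, h1⟩)
      · obtain ⟨j, hj, hpj⟩ := Finset.mem_biUnion.mp h2
        obtain ⟨hjr, hjpar⟩ := Finset.mem_filter.mp hj
        obtain ⟨hp1, hp2⟩ := Finset.mem_sdiff.mp hpj
        exact Or.inr (Or.inr ⟨j, Finset.mem_range.mp hjr, hjpar, hp1, hp2⟩)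
    · intro hm
      simp only [hPdef]
      rcases hm with ⟨h, rfl⟩ | ⟨h, hq⟩ | ⟨j, hj, hpj, hb1, hb2⟩
      · apply Finset.mem_union_left
        rw [if_pos h]
        exact Finset.mem_singleton_self _
      · apply Finset.mem_union_left
        rw [if_neg h]
        exact hq
      · apply Finset.mem_union_right
        exact Finset.mem_biUnion.mpr ⟨j, Finset.mem_filter.mpr ⟨Finset.mem_range.mpr hj, hpj⟩,
          Finset.mem_sdiff.mpr ⟨hb1, hb2⟩⟩
  -- the anchor invariant
  have hANCH : ∀ i, i < m → (anch i ∈ P (vn i) ∧ ∃ t, t < N ∧ anch i = x t ∧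
      (i = 0 → t = 0) ∧ (1 ≤ i → g (vn i) < (n-1) ∧ blo (g (vn i)) ≤ t ∧ t < bhi (g (vn i)))) := by
    intro i
    induction i with
    | zero =>
      intro _
      constructor
      · rw [hPmem]
        exact Or.inl ⟨by rw [hr0def], hanch0⟩
      · exact ⟨0, by omega, hanch0, fun _ => rfl, by omega⟩
    | succ i ih =>
      intro hi1
      obtain ⟨ihP, t, htN, hxt, h0, hpos⟩ := ih (by omega)
      have hNR' : vn (i + 1) ∈ NR := hvnNR (i + 1) (by omega) hi1
      have hj'K : g (vn (i + 1)) < (n-1) := hgK _ hNR'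
      have hcnot : anch i ∉ blk (g (vn (i + 1))) := by
        intro hmem
        obtain ⟨t', ⟨ht'1, ht'2⟩, hxt'⟩ := (hblkmem _ _).mp hmem
        have ht'N : t' < N := lt_of_lt_of_le ht'2 (hbhiN _ hj'K)
        have hteq : t' = t := hxinj t' t ht'N htN (by rw [hxt', hxt])
        subst hteq
        rcases Nat.eq_zero_or_pos i with rfl | hip
        · have := h0 rfl
          have := hblo1 (g (vn (0 + 1)))
          omega
        · obtain ⟨hgik, hlo, hhi⟩ := hpos (by omega)
          have hik : g (vn i) < g (vn (i + 1)) := by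
            apply hkeymono _ (hvnNR i (by omega) (by omega)) _ hNR'
            rw [hgkspine i (by omega) (by omega), hgkspine (i+1) (by omega) hi1]
            omega
          have := hord _ _ hik hj'K
          omega
      have hQeq : Q (g (vn (i + 1))) = QF (anch i) (blk (g (vn (i + 1)))) := by
        simp only [hQdef]
        rw [hbvg _ hNR', hpidxspine (i + 1) hi1, Nat.add_sub_cancel]
      have hQne' : (Q (g (vn (i + 1)))).Nonempty := hQne _ hj'K
      have hmemQ : anch (i + 1) ∈ Q (g (vn (i + 1))) := by
        rw [hanchS, ← hQeq]
        exact hpick _ hQne'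
      have hmemblk : anch (i + 1) ∈ blk (g (vn (i + 1))) := hQsub _ hmemQ
      obtain ⟨t', ⟨ht'1, ht'2⟩, hxt'⟩ := (hblkmem _ _).mp hmemblk
      refine ⟨?_, t', lt_of_lt_of_le ht'2 (hbhiN _ hj'K), hxt'.symm, by omega,
        fun _ => ⟨hj'K, ht'1, ht'2⟩⟩
      rw [hPmem]
      exact Or.inr (Or.inl ⟨(hNRiff _).mp hNR', hmemQ⟩)
  -- adjacent parts have intersecting hulls
  have hgadget : ∀ b ∈ NR, (convexHull ℝ ((P (par b) : Finset _) : Set (Fin d → ℝ)) ∩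
      convexHull ℝ ((P b : Finset _) : Set (Fin d → ℝ))).Nonempty := by
    intro b hb
    have hjK : g b < (n-1) := hgK b hb
    have hbvj : bv (g b) = b := hbvg b hb
    have hip : pidx b < m := hpidxlt b
    obtain ⟨hanchP, t, htN, hxt, h0, hposk⟩ := hANCH (pidx b) hip
    have hkeyb : 2 * pidx b ≤ groupkey b := by
      rcases hchild b hb (pidx b) hip (hpareq b) with ⟨hleaf, hfeq⟩ | ⟨hlt, hbeq⟩
      · rw [hgkleaf b hleaf, hpidxleaf b hleaf]
      · have hgb : groupkey b = 2 * (pidx b + 1) - 1 := by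
          conv_lhs => rw [hbeq]
          exact hgkspine (pidx b + 1) (by omega) hlt
        omega
    have hcnot : anch (pidx b) ∉ blk (g b) := by
      intro hmem
      obtain ⟨t', ⟨ht'1, ht'2⟩, hxt'⟩ := (hblkmem _ _).mp hmem
      have ht'N : t' < N := lt_of_lt_of_le ht'2 (hbhiN _ hjK)
      have hteq : t' = t := hxinj t' t ht'N htN (by rw [hxt', hxt])
      subst hteq
      rcases Nat.eq_zero_or_pos (pidx b) with hz | hip1
      · have := h0 hz
        have := hblo1 (g b)
        omega
      · obtain ⟨hgik, hlo, hhi⟩ := hposk hip1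
        have hik : g (vn (pidx b)) < g b := by
          apply hkeymono _ (hvnNR _ (by omega) hip) _ hb
          rw [hgkspine _ (by omega) hip]
          omega
        have := hord _ _ hik hjK
        omega
    have hQj : Q (g b) = QF (anch (pidx b)) (blk (g b)) := by
      simp only [hQdef]
      rw [hbvj]
    have hspec := hQFspec (anch (pidx b)) (blk (g b)) hcnot (hblkcard _ hjK)
    rw [← hQj] at hspec
    obtain ⟨r, hr1, hr2⟩ := hspec
    have hsub1 : insert (anch (pidx b)) (blk (g b) \ Q (g b)) ⊆ P (par b) := by
      intro p hp
      rcases Finset.mem_insert.mp hp with rfl | hp2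
      · rw [hpareq]
        exact hanchP
      · rw [hPmem]
        obtain ⟨hpb, hpq⟩ := Finset.mem_sdiff.mp hp2
        exact Or.inr (Or.inr ⟨g b, hjK, by rw [hbvj], hpb, hpq⟩)
    have hsub2 : Q (g b) ⊆ P b := by
      intro p hp
      rw [hPmem]
      exact Or.inr (Or.inl ⟨(hNRiff b).mp hb, hp⟩)
    exact ⟨r, convexHull_mono (by exact_mod_cast hsub1) hr1,
      convexHull_mono (by exact_mod_cast hsub2) hr2⟩
  -- separation
  have hSep : ∀ a b : Fin n, b ≠ r0 →
      (∀ j, j < (n-1) → (bv j = a ∨ par (bv j) = a) →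
        ∀ j', j' < (n-1) → (bv j' = b ∨ par (bv j') = b) → j < j') →
      ∀ p ∈ P a, ∀ q ∈ P b, ℓ p < ℓ q := by
    intro a b hbr0 hlt p hp q hq
    obtain ⟨j', hj'K, hincb, t', ht'lo, ht'hi, rfl⟩ : ∃ j', j' < (n-1) ∧
        (bv j' = b ∨ par (bv j') = b) ∧ ∃ t', blo j' ≤ t' ∧ t' < bhi j' ∧ q = x t' := by
      rcases (hPmem b q).mp hq with ⟨h1, _⟩ | ⟨_, hQ⟩ | ⟨j', hj', hparj, hbl, _⟩
      · exact absurd h1 hbr0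
      · have hbNR : b ∈ NR := (hNRiff b).mpr hbr0
        obtain ⟨t', ⟨h1, h2⟩, h3⟩ := (hblkmem _ _).mp (hQsub _ hQ)
        exact ⟨g b, hgK b hbNR, Or.inl (hbvg b hbNR), t', h1, h2, h3.symm⟩
      · obtain ⟨t', ⟨h1, h2⟩, h3⟩ := (hblkmem _ _).mp hbl
        exact ⟨j', hj', Or.inr hparj, t', h1, h2, h3.symm⟩
    have ht'N : t' < N := lt_of_lt_of_le ht'hi (hbhiN _ hj'K)
    rcases (hPmem a p).mp hp with ⟨_, rfl⟩ | ⟨haR, hQ⟩ | ⟨j, hjK, hparj, hbl, _⟩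
    · exact hxmono 0 t' (by have := hblo1 j'; omega) ht'N
    · have haNR : a ∈ NR := (hNRiff a).mpr haR
      obtain ⟨t, ⟨h1, h2⟩, rfl⟩ := (hblkmem _ _).mp (hQsub _ hQ)
      have hjj : g a < j' := hlt (g a) (hgK a haNR) (Or.inl (hbvg a haNR)) j' hj'K hincb
      have := hord _ _ hjj hj'K
      exact hxmono t t' (by omega) ht'N
    · obtain ⟨t, ⟨h1, h2⟩, rfl⟩ := (hblkmem _ _).mp hbl
      have hjj : j < j' := hlt j hjK (Or.inr hparj) j' hj'K hincb
      have := hord _ _ hjj hj'K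
      exact hxmono t t' (by omega) ht'N
  -- key bounds for incident gadgets
  have hinc : ∀ i, i < m → ∀ j, j < (n-1) → (bv j = vn i ∨ par (bv j) = vn i) →
      (2 * i ≤ groupkey (bv j) + 1 ∧ groupkey (bv j) ≤ 2 * i + 1) := by
    intro i hi j hjK hincj
    have hbNR : bv j ∈ NR := (hbv j hjK).1
    rcases hincj with heq | hpeq
    · have hi1 : 1 ≤ i := by
        by_contra h
        push_neg at h
        interval_cases i
        rw [hNRiff] at hbNR
        exact hbNR (by rw [heq, hr0def])
      rw [heq, hgkspine i hi1 hi]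
      omega
    · rcases hchild _ hbNR i hi hpeq with ⟨hleaf, hfeq⟩ | ⟨hlt, hbeq⟩
      · rw [hgkleaf _ hleaf, hfeq]
        omega
      · rw [hbeq, hgkspine (i+1) (by omega) hlt]
        omega
  have hincleaf : ∀ a : Fin n, (¬ ∃ i, v i = a) → ∀ j, j < (n-1) →
      (bv j = a ∨ par (bv j) = a) → j = g a := by
    intro a ha j hjK hincj
    rcases hincj with heq | hpeq
    · rw [← heq, (hbv j hjK).2]
    · exfalso
      apply ha
      rw [hpareq] at hpeq
      exact hpeq ▸ hvnspine (pidx (bv j))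
  have hmono' : ∀ j j', j < (n-1) → j' < (n-1) → groupkey (bv j) < groupkey (bv j') → j < j' := by
    intro j j' hj hj' hkey
    rw [← (hbv j hj).2, ← (hbv j' hj').2]
    exact hkeymono _ (hbv j hj).1 _ (hbv j' hj').1 hkey
  -- disjointness of hulls of nonadjacent parts
  have hNAdisj : ∀ a b : Fin n, a ≠ b → ¬ T.Adj a b →
      convexHull ℝ ((P a : Finset _) : Set (Fin d → ℝ)) ∩
        convexHull ℝ ((P b : Finset _) : Set (Fin d → ℝ)) = ∅ := by
    have hconc : ∀ a' b' : Fin n, b' ≠ r0 →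
        (∀ j, j < (n-1) → (bv j = a' ∨ par (bv j) = a') →
          ∀ j', j' < (n-1) → (bv j' = b' ∨ par (bv j') = b') → j < j') →
        convexHull ℝ ((P a' : Finset _) : Set (Fin d → ℝ)) ∩
          convexHull ℝ ((P b' : Finset _) : Set (Fin d → ℝ)) = ∅ := by
      intro a' b' h1 h2
      exact hull_sep ℓ _ _ (hSep a' b' h1 h2)
    have hsl : ∀ i, i < m → ∀ b : Fin n, (¬ ∃ i', v i' = b) → ¬ T.Adj (vn i) b →
        convexHull ℝ ((P (vn i) : Finset _) : Set (Fin d → ℝ)) ∩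
          convexHull ℝ ((P b : Finset _) : Set (Fin d → ℝ)) = ∅ := by
      intro i hi b hbleaf hnadj
      have hfne : fidx b ≠ i := by
        intro h
        apply hnadj
        have h2 := hf2 b hbleaf
        rw [hvfb b, h] at h2
        exact h2
      have hbNR : b ∈ NR := hleafNR b hbleaf
      rcases Nat.lt_or_ge i (fidx b) with hlt | hge
      · apply hconc
        · exact (hNRiff b).mp hbNR
        · intro j hjK hja j' hj'K hjb
          have h1 := hinc i hi j hjK hja
          have heq := hincleaf b hbleaf j' hj'K hjb
          have hbj' : bv j' = b := by rw [heq, hbvg b hbNR]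
          apply hmono' j j' hjK hj'K
          rw [hbj', hgkleaf b hbleaf]
          omega
      · have hge2 : fidx b < i := by omega
        rw [Set.inter_comm]
        apply hconc
        · intro h
          rw [hr0def] at h
          exact absurd (hvnvn i 0 hi (by omega) h) (by omega)
        · intro j hjK hja j' hj'K hjb
          have h1 := hinc i hi j' hj'K hjb
          have heq := hincleaf b hbleaf j hjK hja
          have hbj : bv j = b := by rw [heq, hbvg b hbNR]
          apply hmono' j j' hjK hj'K
          rw [hbj, hgkleaf b hbleaf]
          omega
    intro a b hne hnadj
    by_cases hsa : ∃ i, v i = a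
    · by_cases hsb : ∃ i, v i = b
      · obtain ⟨ia0, rfl⟩ := hsa
        obtain ⟨ib0, rfl⟩ := hsb
        rw [hvv ia0] at hne hnadj ⊢
        rw [hvv ib0] at hne hnadj ⊢
        have hia : (ia0 : ℕ) < m := ia0.2
        have hib : (ib0 : ℕ) < m := ib0.2
        have hiane : (ia0 : ℕ) ≠ (ib0 : ℕ) := fun h => hne (by rw [h])
        have hfar : ¬ ((ib0 : ℕ) = (ia0 : ℕ) + 1 ∨ (ia0 : ℕ) = (ib0 : ℕ) + 1) := by
          rintro (h | h)
          · exact hnadj (h ▸ hpathadj (ia0 : ℕ) (h ▸ hib))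
          · exact hnadj ((h ▸ hpathadj (ib0 : ℕ) (h ▸ hia)).symm)
        rcases Nat.lt_or_ge (ia0 : ℕ) (ib0 : ℕ) with hlt | hge
        · apply hconc
          · intro h
            rw [hr0def] at h
            exact absurd (hvnvn _ 0 hib (by omega) h) (by omega)
          · intro j hjK hja j' hj'K hjb
            have h1 := hinc _ hia j hjK hja
            have h2 := hinc _ hib j' hj'K hjb
            exact hmono' j j' hjK hj'K (by omega)
        · have hgt : (ib0 : ℕ) < (ia0 : ℕ) := by omega
          rw [Set.inter_comm]
          apply hconc
          · intro h
            rw [hr0def] at h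
            exact absurd (hvnvn _ 0 hia (by omega) h) (by omega)
          · intro j hjK hja j' hj'K hjb
            have h1 := hinc _ hib j hjK hja
            have h2 := hinc _ hia j' hj'K hjb
            exact hmono' j j' hjK hj'K (by omega)
      · obtain ⟨ia0, rfl⟩ := hsa
        rw [hvv ia0] at hnadj ⊢
        exact hsl _ ia0.2 b hsb hnadj
    · by_cases hsb : ∃ i, v i = b
      · obtain ⟨ib0, rfl⟩ := hsb
        rw [hvv ib0] at hnadj ⊢
        rw [Set.inter_comm]
        exact hsl _ ib0.2 a hsa (fun h => hnadj h.symm)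
      · have haNR : a ∈ NR := hleafNR a hsa
        have hbNR : b ∈ NR := hleafNR b hsb
        have hgne : g a ≠ g b := fun h => hne (hginj a haNR b hbNR h)
        rcases Nat.lt_or_ge (g a) (g b) with hlt | hge
        · apply hconc
          · exact (hNRiff b).mp hbNR
          · intro j hjK hja j' hj'K hjb
            rw [hincleaf a hsa j hjK hja, hincleaf b hsb j' hj'K hjb]
            exact hlt
        · rw [Set.inter_comm]
          apply hconc
          · exact (hNRiff a).mp haNR
          · intro j hjK hja j' hj'K hjb
            rw [hincleaf b hsb j hjK hja, hincleaf a hsa j' hj'K hjb]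
            omega
  -- block covering of indices
  have hcover : ∀ t, 1 ≤ t → t < N → ∃ j, j < (n-1) ∧ blo j ≤ t ∧ t < bhi j := by
    intro t h1 hN'
    have hdm := Nat.div_add_mod' (t - 1) (d + 1)
    have hmlt : (t - 1) % (d + 1) < d + 1 := Nat.mod_lt _ (by omega)
    by_cases hbig : (t - 1) / (d + 1) < (n-1)
    · refine ⟨(t - 1) / (d + 1), hbig, ?_, ?_⟩
      · simp only [hblodef]
        omega
      · simp only [hbhidef]
        split
        · exact hN'
        · rename_i hnl
          have : ((t-1)/(d+1) + 1) * (d+1) = (t-1)/(d+1) * (d+1) + (d+1) := by ring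
          omega
    · refine ⟨(n-1) - 1, by omega, ?_, ?_⟩
      · simp only [hblodef]
        push_neg at hbig
        have h2 : (n-1) * (d+1) ≤ (t-1)/(d+1) * (d+1) := Nat.mul_le_mul_right _ hbig
        have h4 : (t-1)/(d+1) * (d+1) ≤ t - 1 := Nat.div_mul_le_self _ _
        have h3 : ((n-1) - 1) * (d+1) + (d+1) = (n-1) * (d+1) := by
          have : (n-1) - 1 + 1 = (n-1) := by omega
          calc ((n-1) - 1) * (d+1) + (d+1) = ((n-1) - 1 + 1) * (d+1) := by ring
          _ = (n-1) * (d+1) := by rw [this]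
        omega
      · simp only [hbhidef, eq_self_iff_true, if_true]
        exact hN'
  -- final assembly
  refine ⟨P, ?_, ?_, ?_, ?_, ?_⟩
  · -- nonempty
    intro a
    by_cases h : a = r0
    · exact ⟨x 0, (hPmem a (x 0)).mpr (Or.inl ⟨h, rfl⟩)⟩
    · obtain ⟨p, hp⟩ := hQne (g a) (hgK a ((hNRiff a).mpr h))
      exact ⟨p, (hPmem a p).mpr (Or.inr (Or.inl ⟨h, hp⟩))⟩
  · -- disjoint
    intro a b hab
    rw [Finset.disjoint_left]
    intro p hpa hpb
    rcases (hPmem a p).mp hpa with ⟨har, hpx⟩ | ⟨haR, hQa⟩ | ⟨j, hj, hpj, hblkj, hnQj⟩ <;>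
      rcases (hPmem b p).mp hpb with ⟨hbr, hpx'⟩ | ⟨hbR, hQb⟩ | ⟨j', hj', hpj', hblkj', hnQj'⟩
    · exact hab (har.trans hbr.symm)
    · exact hx0blk (g b) (hgK b ((hNRiff b).mpr hbR)) (hpx ▸ hQsub _ hQb)
    · exact hx0blk j' hj' (hpx ▸ hblkj')
    · exact hx0blk (g a) (hgK a ((hNRiff a).mpr haR)) (hpx' ▸ hQsub _ hQa)
    · have hgne : g a ≠ g b := fun h => hab (hginj a ((hNRiff a).mpr haR) b ((hNRiff b).mpr hbR) h)
      exact hblkdisj _ _ hgne (hgK a ((hNRiff a).mpr haR)) (hgK b ((hNRiff b).mpr hbR)) p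
        (hQsub _ hQa) (hQsub _ hQb)
    · by_cases hjg : j' = g a
      · subst hjg
        exact hnQj' hQa
      · exact hblkdisj _ _ (Ne.symm hjg) (hgK a ((hNRiff a).mpr haR)) hj' p (hQsub _ hQa) hblkj'
    · exact hx0blk j hj (hpx' ▸ hblkj)
    · by_cases hjg : j = g b
      · subst hjg
        exact hnQj hQb
      · exact hblkdisj _ _ hjg hj (hgK b ((hNRiff b).mpr hbR)) p hblkj (hQsub _ hQb)
    · by_cases hjj : j = j'
      · subst hjj
        exact hab (hpj.symm.trans hpj')
      · exact hblkdisj _ _ hjj hj hj' p hblkj hblkj'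
  · -- union
    ext p
    simp only [Finset.mem_biUnion, Finset.mem_univ, true_and]
    constructor
    · intro hp
      obtain ⟨t, htN, rfl⟩ := hxsurj p hp
      rcases Nat.eq_zero_or_pos t with rfl | ht1
      · exact ⟨r0, (hPmem r0 (x 0)).mpr (Or.inl ⟨rfl, rfl⟩)⟩
      · obtain ⟨j, hjK, hlo, hhi⟩ := hcover t ht1 htN
        have hmem : x t ∈ blk j := (hblkmem j (x t)).mpr ⟨t, ⟨hlo, hhi⟩, rfl⟩
        by_cases hq : x t ∈ Q j
        · refine ⟨bv j, (hPmem _ _).mpr (Or.inr (Or.inl ⟨?_, ?_⟩))⟩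
          · exact (hNRiff _).mp (hbv j hjK).1
          · rw [(hbv j hjK).2]
            exact hq
        · exact ⟨par (bv j), (hPmem _ _).mpr (Or.inr (Or.inr ⟨j, hjK, rfl, hmem, hq⟩))⟩
    · rintro ⟨a, hpa⟩
      rcases (hPmem a p).mp hpa with ⟨_, rfl⟩ | ⟨haR, hQa⟩ | ⟨j, hj, _, hblkj, _⟩
      · exact hxS 0 (by omega)
      · exact hblkS _ (hgK a ((hNRiff a).mpr haR)) (hQsub _ hQa)
      · exact hblkS j hj hblkj
  · -- the nerve matches adjacency
    intro a b hab
    constructor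
    · intro hne
      by_contra hnadj
      obtain ⟨z, hz⟩ := hne
      rw [hNAdisj a b hab hnadj] at hz
      exact hz
    · intro hadj
      rcases hedge a b hadj with ⟨hbNR, hparb⟩ | ⟨haNR, hpara⟩
      · have := hgadget b hbNR
        rwa [hparb] at this
      · have := hgadget a haNR
        rw [hpara] at this
        rwa [Set.inter_comm] at this
  · -- no triple intersections
    intro a b c hab hbc hac
    by_cases h1 : T.Adj a b
    · by_cases h2 : T.Adj b c
      · by_cases h3 : T.Adj a c
        · exact absurd (htri a b c hab hbc hac h1 h2 h3) (fun h => h)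
        · rw [Set.eq_empty_iff_forall_notMem]
          rintro z ⟨⟨hza, _⟩, hzc⟩
          have := hNAdisj a c hac h3
          rw [Set.eq_empty_iff_forall_notMem] at this
          exact this z ⟨hza, hzc⟩
      · rw [Set.inter_assoc, hNAdisj b c hbc h2, Set.inter_empty]
    · rw [hNAdisj a b hab h1, Set.empty_inter]
end

section
/- Let M be finite set of at least 4 points in ℝ² in general position. Then there exist two lines L₁, L₂ intersecting at a point p such that each of the four open regions determined by L₁ and L₂ contains at least ⌊|M|/4⌋ points of M (assuming no point of M lies on L₁ or L₂). -/
open Finset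

abbrev Pt := Fin 2 → ℝ

/-- dot product with direction `u` -/
def dd (u x : Pt) : ℝ := u 0 * x 0 + u 1 * x 1

/-- perpendicular vector -/
def up (u : Pt) : Pt := ![-(u 1), u 0]

lemma dd_neg (u x : Pt) : dd (-u) x = -(dd u x) := by simp [dd]; ring

lemma dd_up_self (u : Pt) : dd u (up u) = 0 := by simp [dd, up]; ring

lemma dd_sub (u x y : Pt) : dd u (x - y) = dd u x - dd u y := by simp [dd]; ring

lemma dd_add_right (u x y : Pt) : dd u (x + y) = dd u x + dd u y := by simp [dd]; ring

lemma dd_smul_right (u : Pt) (a : ℝ) (x : Pt) : dd u (a • x) = a * dd u x := by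
  simp [dd]; ring

/-- kernel lemma: vectors orthogonal to `u` are multiples of `up u` -/
lemma ker_dd {u q : Pt} (hu : u ≠ 0) (hq : dd u q = 0) : ∃ a : ℝ, q = a • up u := by
  have h01 : u 0 ≠ 0 ∨ u 1 ≠ 0 := by
    by_contra h
    push_neg at h
    exact hu (funext fun i => by fin_cases i <;> simp [h.1, h.2])
  rcases h01 with h0 | h1
  · refine ⟨q 1 / u 0, funext fun i => ?_⟩
    fin_cases i <;> simp [up, dd] at hq ⊢ <;> field_simp <;> nlinarith [hq]
  · refine ⟨-(q 0) / u 1, funext fun i => ?_⟩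
    fin_cases i <;> simp [up, dd] at hq ⊢ <;> field_simp <;> nlinarith [hq]

lemma up_ne_zero {u : Pt} (hu : u ≠ 0) : up u ≠ 0 := by
  intro h
  apply hu
  have h0 := congrFun h 0
  have h1 := congrFun h 1
  simp [up] at h0 h1
  exact funext fun i => by fin_cases i <;> simp [h0, h1]

section helpers

variable {ι : Type*}

lemma sup'_neg (s : Finset ι) (hs : s.Nonempty) (f : ι → ℝ) :
    s.sup' hs (fun x => -(f x)) = -(s.inf' hs f) := by
  apply le_antisymm
  · rw [Finset.sup'_le_iff]
    intro x hx
    simp only [neg_le_neg_iff]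
    exact Finset.inf'_le _ hx
  · obtain ⟨x, hx, hxe⟩ := Finset.exists_mem_eq_inf' hs f
    rw [hxe]
    exact Finset.le_sup' (fun x => -(f x)) hx

lemma inf'_neg (s : Finset ι) (hs : s.Nonempty) (f : ι → ℝ) :
    s.inf' hs (fun x => -(f x)) = -(s.sup' hs f) := by
  have := sup'_neg s hs (fun x => -(f x))
  simp only [neg_neg] at this
  linarith

lemma cont_sup' (s : Finset ι) (hs : s.Nonempty) (f : ι → ℝ → ℝ)
    (hf : ∀ i ∈ s, Continuous (f i)) :
    Continuous fun θ => s.sup' hs (fun i => f i θ) := by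
  revert hf
  induction hs using Finset.Nonempty.cons_induction with
  | singleton a =>
      intro hf
      simp only [Finset.sup'_singleton]
      exact hf a (Finset.mem_singleton_self a)
  | cons a s ha hs ih =>
      intro hf
      simp only [Finset.sup'_cons hs]
      exact Continuous.max (hf a (by simp)) (ih (fun i hi => hf i (by simp [hi])))

lemma cont_inf' (s : Finset ι) (hs : s.Nonempty) (f : ι → ℝ → ℝ)
    (hf : ∀ i ∈ s, Continuous (f i)) :
    Continuous fun θ => s.inf' hs (fun i => f i θ) := by
  revert hf
  induction hs using Finset.Nonempty.cons_induction with
  | singleton a =>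
      intro hf
      simp only [Finset.inf'_singleton]
      exact hf a (Finset.mem_singleton_self a)
  | cons a s ha hs ih =>
      intro hf
      simp only [Finset.inf'_cons hs]
      exact Continuous.min (hf a (by simp)) (ih (fun i hi => hf i (by simp [hi])))

end helpers

open Finset

section valsec

variable (S : Finset Pt) (j : ℕ) (u : Pt)

/-- the `j`-th smallest value of `dd u` on `S` (valid for `1 ≤ j ≤ S.card`) -/
noncomputable def vkth : ℝ :=
  if h : 1 ≤ j ∧ j ≤ S.card then
    (S.powersetCard j).attach.inf'
      ((Finset.powersetCard_nonempty.mpr h.2).attach)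
      (fun T => T.1.sup'
        (Finset.card_pos.mp (by rw [(Finset.mem_powersetCard.mp T.2).2]; exact h.1))
        (dd u))
  else 0

/-- dual: j-th largest via sup-inf -/
noncomputable def wkth : ℝ :=
  if h : 1 ≤ j ∧ j ≤ S.card then
    (S.powersetCard j).attach.sup'
      ((Finset.powersetCard_nonempty.mpr h.2).attach)
      (fun T => T.1.inf'
        (Finset.card_pos.mp (by rw [(Finset.mem_powersetCard.mp T.2).2]; exact h.1))
        (dd u))
  else 0

variable {S j}

lemma val_le_sup' (h1 : 1 ≤ j) (h2 : j ≤ S.card) {T : Finset Pt}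
    (hT : T ∈ S.powersetCard j) (hTn : T.Nonempty) :
    vkth S j u ≤ T.sup' hTn (dd u) := by
  rw [vkth, dif_pos ⟨h1, h2⟩]
  exact Finset.inf'_le _ (Finset.mem_attach _ ⟨T, hT⟩)

lemma exists_eq_val (h1 : 1 ≤ j) (h2 : j ≤ S.card) :
    ∃ T, ∃ (hm : T ∈ S.powersetCard j) (hTn : T.Nonempty),
      T.sup' hTn (dd u) = vkth S j u := by
  rw [vkth, dif_pos ⟨h1, h2⟩]
  obtain ⟨T, _, hTe⟩ := Finset.exists_mem_eq_inf'
    ((Finset.powersetCard_nonempty.mpr h2).attach)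
    (fun T : {x // x ∈ S.powersetCard j} => T.1.sup'
        (Finset.card_pos.mp (by rw [(Finset.mem_powersetCard.mp T.2).2]; exact h1))
        (dd u))
  exact ⟨T.1, T.2, _, hTe.symm⟩

/-- A1: at most `j - 1` values strictly below `c` when `c ≤ vkth` -/
lemma card_lt_lt_of_le_val {c : ℝ} (h1 : 1 ≤ j) (h2 : j ≤ S.card)
    (hc : c ≤ vkth S j u) :
    (S.filter (fun x => dd u x < c)).card < j := by
  by_contra h
  push_neg at h
  obtain ⟨T, hTs, hTc⟩ := Finset.exists_subset_card_eq h
  have hTm : T ∈ S.powersetCard j :=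
    Finset.mem_powersetCard.mpr ⟨hTs.trans (Finset.filter_subset _ _), hTc⟩
  have hTn : T.Nonempty := Finset.card_pos.mp (by omega)
  obtain ⟨x, hx, hxe⟩ := Finset.exists_mem_eq_sup' hTn (dd u)
  have hxf := hTs hx
  rw [Finset.mem_filter] at hxf
  have := val_le_sup' u h1 h2 hTm hTn
  rw [hxe] at this
  linarith [hxf.2]

/-- A1': at most `j - 1` values `≤ c` when `c < vkth` -/
lemma card_le_lt_of_lt_val {c : ℝ} (h1 : 1 ≤ j) (h2 : j ≤ S.card)
    (hc : c < vkth S j u) :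
    (S.filter (fun x => dd u x ≤ c)).card < j := by
  by_contra h
  push_neg at h
  obtain ⟨T, hTs, hTc⟩ := Finset.exists_subset_card_eq h
  have hTm : T ∈ S.powersetCard j :=
    Finset.mem_powersetCard.mpr ⟨hTs.trans (Finset.filter_subset _ _), hTc⟩
  have hTn : T.Nonempty := Finset.card_pos.mp (by omega)
  obtain ⟨x, hx, hxe⟩ := Finset.exists_mem_eq_sup' hTn (dd u)
  have hxf := hTs hx
  rw [Finset.mem_filter] at hxf
  have := val_le_sup' u h1 h2 hTm hTn
  rw [hxe] at this
  linarith [hxf.2]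

/-- A2: at least `j` values `≤ c` when `vkth ≤ c` -/
lemma le_card_le_of_val_le {c : ℝ} (h1 : 1 ≤ j) (h2 : j ≤ S.card)
    (hc : vkth S j u ≤ c) :
    j ≤ (S.filter (fun x => dd u x ≤ c)).card := by
  obtain ⟨T, hm, hTn, hTe⟩ := exists_eq_val u h1 h2
  obtain ⟨hTs, hTc⟩ := Finset.mem_powersetCard.mp hm
  have : T ⊆ S.filter (fun x => dd u x ≤ c) := by
    intro x hx
    rw [Finset.mem_filter]
    exact ⟨hTs hx, le_trans (le_trans (Finset.le_sup' (dd u) hx) (le_of_eq hTe)) hc⟩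
  calc j = T.card := hTc.symm
    _ ≤ _ := Finset.card_le_card this

/-- A2 strict: at least `j` values `< c` when `vkth < c` -/
lemma le_card_lt_of_val_lt {c : ℝ} (h1 : 1 ≤ j) (h2 : j ≤ S.card)
    (hc : vkth S j u < c) :
    j ≤ (S.filter (fun x => dd u x < c)).card := by
  obtain ⟨T, hm, hTn, hTe⟩ := exists_eq_val u h1 h2
  obtain ⟨hTs, hTc⟩ := Finset.mem_powersetCard.mp hm
  have : T ⊆ S.filter (fun x => dd u x < c) := by
    intro x hx
    rw [Finset.mem_filter]
    exact ⟨hTs hx, lt_of_le_of_lt (le_trans (Finset.le_sup' (dd u) hx) (le_of_eq hTe)) hc⟩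
  calc j = T.card := hTc.symm
    _ ≤ _ := Finset.card_le_card this

/-- monotonicity of vkth in j -/
lemma vkth_mono (h1 : 1 ≤ j) {j' : ℕ} (hj : j ≤ j') (h2 : j' ≤ S.card) :
    vkth S j u ≤ vkth S j' u := by
  by_contra h
  push_neg at h
  have hA := le_card_le_of_val_le u (by omega) h2 (le_refl (vkth S j' u))
  have hB := card_le_lt_of_lt_val u h1 (by omega) h
  omega

lemma val_neg_eq (h1 : 1 ≤ j) (h2 : j ≤ S.card) :
    vkth S j (-u) = -(wkth S j u) := by
  rw [vkth, wkth, dif_pos ⟨h1, h2⟩, dif_pos ⟨h1, h2⟩]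
  rw [← inf'_neg]
  apply Finset.inf'_congr _ rfl
  intro T _
  rw [← sup'_neg]
  apply Finset.sup'_congr _ rfl
  intro x _
  exact dd_neg u x

lemma wal_eq_val (h1 : 1 ≤ j) (h2 : j ≤ S.card) :
    wkth S j u = vkth S (S.card - j + 1) u := by
  have h1' : 1 ≤ S.card - j + 1 := by omega
  have h2' : S.card - j + 1 ≤ S.card := by omega
  apply le_antisymm
  · rw [wkth, dif_pos ⟨h1, h2⟩]
    apply Finset.sup'_le
    rintro ⟨T, hTm⟩ -
    obtain ⟨hTs, hTc⟩ := Finset.mem_powersetCard.mp hTm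
    rw [vkth, dif_pos ⟨h1', h2'⟩]
    apply Finset.le_inf'
    rintro ⟨T', hTm'⟩ -
    obtain ⟨hTs', hTc'⟩ := Finset.mem_powersetCard.mp hTm'
    -- T and T' intersect
    have hinter : (T ∩ T').Nonempty := by
      rw [← Finset.card_pos]
      have hu : (T ∪ T').card ≤ S.card := Finset.card_le_card (Finset.union_subset hTs hTs')
      have := Finset.card_union_add_card_inter T T'
      omega
    obtain ⟨x, hx⟩ := hinter
    rw [Finset.mem_inter] at hx
    exact le_trans (Finset.inf'_le (dd u) hx.1) (Finset.le_sup' (dd u) hx.2)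
  · set c := vkth S (S.card - j + 1) u with hc
    have hG : j ≤ (S.filter (fun x => c ≤ dd u x)).card := by
      have hlt := card_lt_lt_of_le_val u h1' h2' (le_refl c)
      have := Finset.card_filter_add_card_filter_not
        (s := S) (p := fun x => dd u x < c)
      have hcongr : S.filter (fun x => ¬ dd u x < c) = S.filter (fun x => c ≤ dd u x) := by
        apply Finset.filter_congr
        intro x _
        simp [not_lt]
      rw [hcongr] at this
      omega
    obtain ⟨T, hTs, hTc⟩ := Finset.exists_subset_card_eq hG
    have hTm : T ∈ S.powersetCard j :=
      Finset.mem_powersetCard.mpr ⟨hTs.trans (Finset.filter_subset _ _), hTc⟩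
    have hTn : T.Nonempty := Finset.card_pos.mp (by omega)
    have hle : c ≤ T.inf' hTn (dd u) := by
      apply Finset.le_inf'
      intro x hx
      have := hTs hx
      rw [Finset.mem_filter] at this
      exact this.2
    refine le_trans hle ?_
    rw [wkth, dif_pos ⟨h1, h2⟩]
    exact Finset.le_sup'
      (f := fun T : {x // x ∈ S.powersetCard j} => T.1.inf'
        (Finset.card_pos.mp (by rw [(Finset.mem_powersetCard.mp T.2).2]; exact h1))
        (dd u)) (Finset.mem_attach _ ⟨T, hTm⟩)

/-- antipodal relation -/
lemma vkth_antipodal (h1 : 1 ≤ j) (h2 : j ≤ S.card) :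
    vkth S j (-u) = -(vkth S (S.card - j + 1) u) := by
  rw [val_neg_eq u h1 h2, wal_eq_val u h1 h2]

end valsec

open Finset

section counts

variable {S : Finset Pt} {j : ℕ} (u : Pt)

lemma filter_gt_eq_neg (c : ℝ) :
    S.filter (fun x => c < dd u x) = S.filter (fun x => dd (-u) x < -c) := by
  apply Finset.filter_congr
  intro x _
  rw [dd_neg]
  constructor <;> intro h <;> linarith

lemma index_flip (h1 : 1 ≤ j) (h2 : j ≤ S.card) :
    S.card - (S.card - j + 1) + 1 = j := by omega

lemma vkth_neg_neg (h1 : 1 ≤ j) (h2 : j ≤ S.card) :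
    vkth S (S.card - j + 1) (-u) = -(vkth S j u) := by
  rw [vkth_antipodal u (by omega) (by omega), index_flip h1 h2]

/-- A1R: few values strictly above `c` when `val ≤ c` -/
lemma card_gt_lt_of_val_le {c : ℝ} (h1 : 1 ≤ j) (h2 : j ≤ S.card)
    (hc : vkth S j u ≤ c) :
    (S.filter (fun x => c < dd u x)).card < S.card - j + 1 := by
  rw [filter_gt_eq_neg u c]
  apply card_lt_lt_of_le_val (-u) (by omega) (by omega)
  rw [vkth_neg_neg u h1 h2]
  linarith

/-- A2L: many values strictly above `c` when `c < val` -/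
lemma card_gt_ge_of_lt_val {c : ℝ} (h1 : 1 ≤ j) (h2 : j ≤ S.card)
    (hc : c < vkth S j u) :
    S.card - j + 1 ≤ (S.filter (fun x => c < dd u x)).card := by
  rw [filter_gt_eq_neg u c]
  apply le_card_lt_of_val_lt (-u) (by omega) (by omega)
  rw [vkth_neg_neg u h1 h2]
  linarith

/-- partition: LT + EQ + GT = card -/
lemma card_partition (S : Finset Pt) (u : Pt) (c : ℝ) :
    (S.filter (fun x => dd u x < c)).card + (S.filter (fun x => dd u x = c)).card
      + (S.filter (fun x => c < dd u x)).card = S.card := by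
  have h1 := Finset.card_filter_add_card_filter_not (s := S)
    (p := fun x => dd u x < c)
  have e1 : S.filter (fun x => ¬ dd u x < c) = S.filter (fun x => c ≤ dd u x) := by
    apply Finset.filter_congr; intro x _; simp [not_lt]
  have h2 := Finset.card_filter_add_card_filter_not
    (s := S.filter (fun x => c ≤ dd u x)) (p := fun x => dd u x = c)
  have e2 : (S.filter (fun x => c ≤ dd u x)).filter (fun x => dd u x = c)
      = S.filter (fun x => dd u x = c) := by
    rw [Finset.filter_filter]
    apply Finset.filter_congr
    intro x _
    constructor
    · exact fun h => h.2
    · intro h; exact ⟨le_of_eq h.symm, h⟩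
  have e3 : (S.filter (fun x => c ≤ dd u x)).filter (fun x => ¬ dd u x = c)
      = S.filter (fun x => c < dd u x) := by
    rw [Finset.filter_filter]
    apply Finset.filter_congr
    intro x _
    constructor
    · intro h; exact lt_of_le_of_ne h.1 (fun hh => h.2 hh.symm)
    · intro h; exact ⟨le_of_lt h, ne_of_gt h⟩
  rw [e1] at h1
  rw [e2, e3] at h2
  omega

lemma card_le_split (S : Finset Pt) (u : Pt) (c : ℝ) :
    (S.filter (fun x => dd u x ≤ c)).card
      = (S.filter (fun x => dd u x < c)).card + (S.filter (fun x => dd u x = c)).card := by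
  have h2 := Finset.card_filter_add_card_filter_not
    (s := S.filter (fun x => dd u x ≤ c)) (p := fun x => dd u x < c)
  have e2 : (S.filter (fun x => dd u x ≤ c)).filter (fun x => dd u x < c)
      = S.filter (fun x => dd u x < c) := by
    rw [Finset.filter_filter]
    apply Finset.filter_congr
    intro x _
    constructor
    · exact fun h => h.2
    · intro h; exact ⟨le_of_lt h, h⟩
  have e3 : (S.filter (fun x => dd u x ≤ c)).filter (fun x => ¬ dd u x < c)
      = S.filter (fun x => dd u x = c) := by
    rw [Finset.filter_filter]
    apply Finset.filter_congr
    intro x _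
    constructor
    · intro h; exact le_antisymm h.1 (not_lt.mp h.2)
    · intro h; exact ⟨le_of_eq h, by rw [h]; exact lt_irrefl c⟩
  rw [e2, e3] at h2
  omega

/-- strict monotonicity when projections are injective -/
lemma vkth_strict_mono (hinj : ∀ x ∈ S, ∀ y ∈ S, x ≠ y → dd u x ≠ dd u y)
    (h1 : 1 ≤ j) (h2 : j + 1 ≤ S.card) :
    vkth S j u < vkth S (j + 1) u := by
  rcases lt_or_eq_of_le (vkth_mono u h1 (Nat.le_succ j) h2) with h | h
  · exact h
  exfalso
  set c := vkth S j u with hcdef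
  have hLE : j + 1 ≤ (S.filter (fun x => dd u x ≤ c)).card :=
    le_card_le_of_val_le u (by omega) h2 (le_of_eq h.symm)
  have hLT : (S.filter (fun x => dd u x < c)).card < j :=
    card_lt_lt_of_le_val u h1 (by omega) (le_refl c)
  have hsplit := card_le_split S u c
  have hEQ : 1 < (S.filter (fun x => dd u x = c)).card := by omega
  obtain ⟨a, ha, b, hb, hab⟩ := Finset.one_lt_card.mp hEQ
  rw [Finset.mem_filter] at ha hb
  exact hinj a ha.1 b hb.1 hab (by rw [ha.2, hb.2])

/-- continuity of vkth along a continuous path of directions -/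
lemma vkth_cont (S : Finset Pt) (j : ℕ) (h1 : 1 ≤ j) (h2 : j ≤ S.card)
    (U : ℝ → Pt) (hU : Continuous U) :
    Continuous fun θ => vkth S j (U θ) := by
  have : (fun θ => vkth S j (U θ)) = fun θ =>
      (S.powersetCard j).attach.inf'
        ((Finset.powersetCard_nonempty.mpr h2).attach)
        (fun T => T.1.sup'
          (Finset.card_pos.mp (by rw [(Finset.mem_powersetCard.mp T.2).2]; exact h1))
          (dd (U θ))) := by
    funext θ
    rw [vkth, dif_pos ⟨h1, h2⟩]
  rw [this]
  apply cont_inf'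
  intro T _
  apply cont_sup'
  intro x _
  have c0 : Continuous fun θ => U θ 0 := (continuous_apply 0).comp hU
  have c1 : Continuous fun θ => U θ 1 := (continuous_apply 1).comp hU
  exact ((c0.mul continuous_const).add (c1.mul continuous_const) : _)

end counts

open Finset

lemma ptsq_pos {p : Pt} (h : p ≠ 0) : 0 < p 0 ^ 2 + p 1 ^ 2 := by
  rcases lt_or_eq_of_le (by positivity : (0:ℝ) ≤ p 0 ^ 2 + p 1 ^ 2) with hh | hh
  · exact hh
  exfalso
  apply h
  have h0 : p 0 = 0 := by nlinarith [sq_nonneg (p 0), sq_nonneg (p 1)]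
  have h1 : p 1 = 0 := by nlinarith [sq_nonneg (p 0), sq_nonneg (p 1)]
  exact funext fun i => by fin_cases i <;> simpa

lemma dd_up_up (u : Pt) : dd (up u) (up u) = u 0 ^ 2 + u 1 ^ 2 := by
  simp [dd, up]; ring

lemma collinear_of_line {u : Pt} (hu : u ≠ 0) {t : ℝ} {x y z : Pt}
    (hx : dd u x = t) (hy : dd u y = t) (hz : dd u z = t) :
    Collinear ℝ ({x, y, z} : Set Pt) := by
  rw [collinear_iff_of_mem (Set.mem_insert x {y, z})]
  refine ⟨up u, ?_⟩
  intro p hp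
  have hhp : dd u p = t := by
    rcases hp with h | h | h
    · rw [h]; exact hx
    · rw [h]; exact hy
    · rw [Set.mem_singleton_iff.mp h]; exact hz
  have : dd u (p - x) = 0 := by rw [dd_sub, hhp, hx, sub_self]
  obtain ⟨a, ha⟩ := ker_dd hu this
  exact ⟨a, by rw [← ha]; simp⟩

/-- at most two points of a set in general position lie on any line -/
lemma card_online_le_two {M : Finset Pt}
    (hgen : ∀ x ∈ M, ∀ y ∈ M, ∀ z ∈ M, x ≠ y → y ≠ z → x ≠ z →
      ¬ Collinear ℝ ({x, y, z} : Set Pt))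
    {u : Pt} (hu : u ≠ 0) (t : ℝ) :
    (M.filter (fun x => dd u x = t)).card ≤ 2 := by
  by_contra h
  push_neg at h
  obtain ⟨T, hTs, hTc⟩ := Finset.exists_subset_card_eq h
  obtain ⟨x, y, z, hxy, hxz, hyz, hT⟩ := Finset.card_eq_three.mp hTc
  have hmx := hTs (show x ∈ T by rw [hT]; simp)
  have hmy := hTs (show y ∈ T by rw [hT]; simp)
  have hmz := hTs (show z ∈ T by rw [hT]; simp)
  rw [Finset.mem_filter] at hmx hmy hmz
  exact hgen x hmx.1 y hmy.1 z hmz.1 hxy hyz hxz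
    (collinear_of_line hu hmx.2 hmy.2 hmz.2)

/-- The perturbation lemma: tilt a line slightly so that no point of `S` lies on it,
strict sides are preserved, any two on-line points (symmetric about `c`) go to opposite
sides, and the new line is not parallel to `v`. -/
lemma perturb (S : Finset Pt) (u : Pt) (hu : u ≠ 0) (t : ℝ) (v : Pt) (hv : v ≠ 0)
    (c : Pt) (hct : dd u c = t) (hcS : c ∉ S)
    (hops : ∀ z ∈ S, dd u z = t → ∀ z' ∈ S, dd u z' = t → z ≠ z' → z + z' = c + c) :
    ∃ (w : Pt) (s : ℝ),
      v 0 * w 1 - v 1 * w 0 ≠ 0 ∧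
      (∀ x ∈ S, dd w x ≠ s) ∧
      (∀ x ∈ S, dd u x < t → dd w x < s) ∧
      (∀ x ∈ S, t < dd u x → s < dd w x) ∧
      (∀ z ∈ S, dd u z = t → ∀ z' ∈ S, dd u z' = t → z ≠ z' →
        dd w z + dd w z' = s + s) := by
  classical
  set S' := S.filter (fun x => dd u x ≠ t) with hS'
  set ratio : Pt → ℝ := fun x => |dd u x - t| / (|dd (up u) (x - c)| + 1) with hratio
  set δ : ℝ := if hS'n : S'.Nonempty then S'.inf' hS'n ratio else 1 with hδ
  have hδpos : 0 < δ := by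
    rw [hδ]
    split_ifs with hn
    · obtain ⟨x, hx, hxe⟩ := Finset.exists_mem_eq_inf' hn ratio
      rw [hxe, hratio]
      have : dd u x ≠ t := (Finset.mem_filter.mp hx).2
      have habs : 0 < |dd u x - t| := abs_pos.mpr (sub_ne_zero.mpr this)
      positivity
    · norm_num
  have hδle : ∀ x ∈ S', δ ≤ ratio x := by
    intro x hx
    rw [hδ, dif_pos ⟨x, hx⟩]
    exact Finset.inf'_le ratio hx
  set a : ℝ := v 0 * u 1 - v 1 * u 0 with ha
  set b : ℝ := v 0 * u 0 + v 1 * u 1 with hb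
  have hab : a ^ 2 + b ^ 2 > 0 := by
    have h1 := ptsq_pos hv
    have h2 := ptsq_pos hu
    have : a ^ 2 + b ^ 2 = (v 0 ^ 2 + v 1 ^ 2) * (u 0 ^ 2 + u 1 ^ 2) := by
      rw [ha, hb]; ring
    rw [this]
    positivity
  set ε : ℝ := if a + (δ/2) * b = 0 then δ/3 else δ/2 with hε
  have hε0 : 0 < ε := by rw [hε]; split_ifs <;> linarith
  have hεδ : ε < δ := by rw [hε]; split_ifs <;> linarith
  have hεpar : a + ε * b ≠ 0 := by
    rw [hε]
    split_ifs with hc2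
    · intro hc3
      have hbz : b = 0 := by
        have : (δ/2 - δ/3) * b = 0 := by linarith
        have hne : δ/2 - δ/3 ≠ 0 := by linarith
        exact (mul_eq_zero.mp this).resolve_left hne
      have haz : a = 0 := by rw [hbz] at hc2; linarith
      rw [haz, hbz] at hab; norm_num at hab
    · exact hc2
  have key : ∀ x : Pt, dd (u + ε • up u) x - (t + ε * dd (up u) c)
      = (dd u x - t) + ε * dd (up u) (x - c) := by
    intro x
    rw [dd_sub]
    simp [dd, up]
    ring
  have hsmall : ∀ x ∈ S', |ε * dd (up u) (x - c)| < |dd u x - t| := by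
    intro x hx
    have h1 : δ ≤ ratio x := hδle x hx
    have hD : (0:ℝ) < |dd (up u) (x - c)| + 1 := by positivity
    have h2 : ε * (|dd (up u) (x - c)| + 1) < |dd u x - t| := by
      have : ε < |dd u x - t| / (|dd (up u) (x - c)| + 1) := lt_of_lt_of_le hεδ h1
      calc ε * (|dd (up u) (x - c)| + 1)
          < (|dd u x - t| / (|dd (up u) (x - c)| + 1)) * (|dd (up u) (x - c)| + 1) := by
            exact mul_lt_mul_of_pos_right this hD
        _ = |dd u x - t| := by field_simp
    calc |ε * dd (up u) (x - c)| = ε * |dd (up u) (x - c)| := by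
          rw [abs_mul, abs_of_pos hε0]
      _ < |dd u x - t| := by nlinarith
  have honline : ∀ z ∈ S, dd u z = t → dd (up u) (z - c) ≠ 0 := by
    intro z hz hzt
    have hducz : dd u (z - c) = 0 := by rw [dd_sub, hzt, hct, sub_self]
    obtain ⟨a', ha'⟩ := ker_dd hu hducz
    have ha'ne : a' ≠ 0 := by
      intro h0
      rw [h0, zero_smul] at ha'
      have : z = c := sub_eq_zero.mp ha'
      exact hcS (this ▸ hz)
    rw [ha', dd_smul_right, dd_up_up]
    have := ptsq_pos hu
    intro hcon
    rcases mul_eq_zero.mp hcon with h | h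
    · exact ha'ne h
    · linarith
  have hbelow : ∀ x ∈ S, dd u x < t →
      dd (u + ε • up u) x < t + ε * dd (up u) c := by
    intro x hx hlt
    have hx' : x ∈ S' := Finset.mem_filter.mpr ⟨hx, ne_of_lt hlt⟩
    have hs := hsmall x hx'
    have h1 : |dd u x - t| = t - dd u x := by rw [abs_of_neg (by linarith)]; ring
    rw [h1] at hs
    have h2 := le_abs_self (ε * dd (up u) (x - c))
    have h3 : dd (u + ε • up u) x - (t + ε * dd (up u) c) < 0 := by
      rw [key x]; linarith
    linarith
  have habove : ∀ x ∈ S, t < dd u x →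
      t + ε * dd (up u) c < dd (u + ε • up u) x := by
    intro x hx hgt
    have hx' : x ∈ S' := Finset.mem_filter.mpr ⟨hx, ne_of_gt hgt⟩
    have hs := hsmall x hx'
    have h1 : |dd u x - t| = dd u x - t := abs_of_pos (by linarith)
    rw [h1] at hs
    have h2 := neg_abs_le (ε * dd (up u) (x - c))
    have h3 : 0 < dd (u + ε • up u) x - (t + ε * dd (up u) c) := by
      rw [key x]; linarith
    linarith
  refine ⟨u + ε • up u, t + ε * dd (up u) c, ?_, ?_, hbelow, habove, ?_⟩
  · -- non-parallel
    have : v 0 * (u + ε • up u) 1 - v 1 * (u + ε • up u) 0 = a + ε * b := by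
      simp [up, ha, hb]
      ring
    rw [this]
    exact hεpar
  · -- no point on the new line
    intro x hx
    rcases lt_trichotomy (dd u x) t with hlt | heq | hgt
    · exact ne_of_lt (hbelow x hx hlt)
    · intro hcon
      have hc2 : dd (u + ε • up u) x - (t + ε * dd (up u) c) = 0 := sub_eq_zero.mpr hcon
      rw [key x, heq, sub_self, zero_add] at hc2
      rcases mul_eq_zero.mp hc2 with h | h
      · linarith
      · exact honline x hx heq h
    · exact (ne_of_lt (habove x hx hgt)).symm
  · -- symmetric pairs
    intro z hz hzt z' hz' hzt' hne
    have hsum := hops z hz hzt z' hz' hzt' hne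
    have e1 := key z
    have e2 := key z'
    have e3 : dd (up u) (z - c) + dd (up u) (z' - c) = 0 := by
      rw [dd_sub, dd_sub]
      have : dd (up u) z + dd (up u) z' = dd (up u) c + dd (up u) c := by
        have := congrArg (dd (up u)) hsum
        rw [dd_add_right, dd_add_right] at this
        exact this
      linarith
    rw [hzt] at e1
    rw [hzt'] at e2
    have e4 : (dd (u + ε • up u) z - (t + ε * dd (up u) c))
        + (dd (u + ε • up u) z' - (t + ε * dd (up u) c))
        = ε * (dd (up u) (z - c) + dd (up u) (z' - c)) := by
      rw [e1, e2]; ring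
    rw [e3, mul_zero] at e4
    linarith

open Finset

noncomputable def lf (v : Pt) : Pt →ₗ[ℝ] ℝ where
  toFun := dd v
  map_add' x y := by simp [dd]; ring
  map_smul' a x := by simp [dd]; ring

lemma lf_apply (v x : Pt) : lf v x = dd v x := rfl

lemma lf_indep {v w : Pt} (h : v 0 * w 1 - v 1 * w 0 ≠ 0) :
    LinearIndependent ℝ ![lf v, lf w] := by
  rw [linearIndependent_fin2]
  constructor
  · intro hw
    have h0 : lf w ![1, 0] = 0 := by rw [show (![lf v, lf w] : Fin 2 → _) 1 = lf w from rfl] at hw; rw [hw]; rfl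
    have h1 : lf w ![0, 1] = 0 := by rw [show (![lf v, lf w] : Fin 2 → _) 1 = lf w from rfl] at hw; rw [hw]; rfl
    rw [lf_apply, dd] at h0 h1
    simp at h0 h1
    rw [h0, h1] at h
    simp at h
  · intro a hcon
    have h0 := congrArg (fun (φ : Pt →ₗ[ℝ] ℝ) => φ ![1, 0]) hcon
    have h1 := congrArg (fun (φ : Pt →ₗ[ℝ] ℝ) => φ ![0, 1]) hcon
    simp only [show (![lf v, lf w] : Fin 2 → _) 1 = lf w from rfl,
      show (![lf v, lf w] : Fin 2 → _) 0 = lf v from rfl, LinearMap.smul_apply,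
      smul_eq_mul] at h0 h1
    rw [lf_apply, lf_apply, dd, dd] at h0 h1
    simp at h0 h1
    apply h
    rw [← h0, ← h1]
    ring

lemma exists_point {v w : Pt} (h : v 0 * w 1 - v 1 * w 0 ≠ 0) (t s : ℝ) :
    ∃ p : Pt, lf v p = t ∧ lf w p = s := by
  refine ⟨![(t * w 1 - s * v 1) / (v 0 * w 1 - v 1 * w 0),
            (s * v 0 - t * w 0) / (v 0 * w 1 - v 1 * w 0)], ?_, ?_⟩ <;>
  · rw [lf_apply, dd]
    simp
    rw [mul_div_assoc', mul_div_assoc', ← add_div, div_eq_iff h]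
    ring

lemma side_lemma (S : Finset Pt) (u : Pt) (a b : ℕ)
    (h1 : 1 ≤ a) (hab : a < b) (hbm : b ≤ S.card) (t : ℝ)
    (ht : vkth S a u + vkth S b u = t + t)
    (hE : (S.filter (fun x => dd u x = t)).card ≤ 2) :
    (a ≤ (S.filter (fun x => dd u x < t)).card ∧
     S.card - b + 1 ≤ (S.filter (fun x => t < dd u x)).card)
    ∨ ((S.filter (fun x => dd u x = t)).card = 2 ∧
       b - 2 ≤ (S.filter (fun x => dd u x < t)).card ∧
       S.card - a - 1 ≤ (S.filter (fun x => t < dd u x)).card) := by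
  have ha2 : a ≤ S.card := by omega
  have hmono : vkth S a u ≤ vkth S b u := vkth_mono u h1 (le_of_lt hab) hbm
  rcases lt_or_eq_of_le hmono with hlt | heq
  · left
    have h1' : vkth S a u < t := by linarith
    have h2' : t < vkth S b u := by linarith
    exact ⟨le_card_lt_of_val_lt u h1 ha2 h1',
      card_gt_ge_of_lt_val u (by omega : 1 ≤ b) hbm h2'⟩
  · right
    have hta : vkth S a u = t := by linarith
    have htb : vkth S b u = t := by linarith
    have hLT : (S.filter (fun x => dd u x < t)).card < a :=
      card_lt_lt_of_le_val u h1 ha2 (le_of_eq hta.symm)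
    have hGT : (S.filter (fun x => t < dd u x)).card < S.card - b + 1 :=
      card_gt_lt_of_val_le u (by omega : 1 ≤ b) hbm (le_of_eq htb)
    have hpart := card_partition S u t
    omega

lemma half_lemma (M X : Finset Pt) (hX : X ⊆ M) (u w : Pt) (t s : ℝ) (k : ℕ) (hk : 1 ≤ k)
    (hne : ∀ x ∈ M, dd w x ≠ s)
    (hbelow : ∀ x ∈ M, dd u x < t → dd w x < s)
    (habove : ∀ x ∈ M, t < dd u x → s < dd w x)
    (hpair : ∀ z ∈ M, dd u z = t → ∀ z' ∈ M, dd u z' = t → z ≠ z' →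
      dd w z + dd w z' = s + s)
    (hbr : (k ≤ (X.filter (fun x => dd u x < t)).card ∧
            k ≤ (X.filter (fun x => t < dd u x)).card)
         ∨ ((X.filter (fun x => dd u x = t)).card = 2 ∧
            k - 1 ≤ (X.filter (fun x => dd u x < t)).card ∧
            k - 1 ≤ (X.filter (fun x => t < dd u x)).card)) :
    k ≤ (X.filter (fun x => dd w x < s)).card ∧
    k ≤ (X.filter (fun x => s < dd w x)).card := by
  have hsubL : X.filter (fun x => dd u x < t) ⊆ X.filter (fun x => dd w x < s) := by
    intro x hx
    rw [Finset.mem_filter] at hx ⊢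
    exact ⟨hx.1, hbelow x (hX hx.1) hx.2⟩
  have hsubG : X.filter (fun x => t < dd u x) ⊆ X.filter (fun x => s < dd w x) := by
    intro x hx
    rw [Finset.mem_filter] at hx ⊢
    exact ⟨hx.1, habove x (hX hx.1) hx.2⟩
  rcases hbr with ⟨hL, hG⟩ | ⟨hE2, hL, hG⟩
  · exact ⟨le_trans hL (Finset.card_le_card hsubL),
      le_trans hG (Finset.card_le_card hsubG)⟩
  · obtain ⟨z₁, z₂, hz12, hEeq⟩ := Finset.card_eq_two.mp hE2
    have hz₁m : z₁ ∈ X.filter (fun x => dd u x = t) := by rw [hEeq]; simp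
    have hz₂m : z₂ ∈ X.filter (fun x => dd u x = t) := by rw [hEeq]; simp
    rw [Finset.mem_filter] at hz₁m hz₂m
    obtain ⟨hz₁X, hz₁t⟩ := hz₁m
    obtain ⟨hz₂X, hz₂t⟩ := hz₂m
    have hsum := hpair z₁ (hX hz₁X) hz₁t z₂ (hX hz₂X) hz₂t hz12
    have hne₁ := hne z₁ (hX hz₁X)
    have hne₂ := hne z₂ (hX hz₂X)
    have main : ∀ zl zu : Pt, zl ∈ X → zu ∈ X → dd u zl = t → dd u zu = t →
        dd w zl < s → s < dd w zu →
        k ≤ (X.filter (fun x => dd w x < s)).card ∧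
        k ≤ (X.filter (fun x => s < dd w x)).card := by
      intro zl zu hzlX hzuX hzlt hzut hwl hwu
      constructor
      · have hins : insert zl (X.filter (fun x => dd u x < t))
            ⊆ X.filter (fun x => dd w x < s) := by
          intro x hx
          rcases Finset.mem_insert.mp hx with rfl | hx'
          · rw [Finset.mem_filter]; exact ⟨hzlX, hwl⟩
          · exact hsubL hx'
        have hnm : zl ∉ X.filter (fun x => dd u x < t) := by
          rw [Finset.mem_filter]
          intro hcon
          rw [hzlt] at hcon
          exact lt_irrefl t hcon.2
        have := Finset.card_le_card hins
        rw [Finset.card_insert_of_notMem hnm] at this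
        omega
      · have hins : insert zu (X.filter (fun x => t < dd u x))
            ⊆ X.filter (fun x => s < dd w x) := by
          intro x hx
          rcases Finset.mem_insert.mp hx with rfl | hx'
          · rw [Finset.mem_filter]; exact ⟨hzuX, hwu⟩
          · exact hsubG hx'
        have hnm : zu ∉ X.filter (fun x => t < dd u x) := by
          rw [Finset.mem_filter]
          intro hcon
          rw [hzut] at hcon
          exact lt_irrefl t hcon.2
        have := Finset.card_le_card hins
        rw [Finset.card_insert_of_notMem hnm] at this
        omega
    rcases lt_or_gt_of_ne hne₁ with hlt | hgt
    · exact main z₁ z₂ hz₁X hz₂X hz₁t hz₂t hlt (by linarith)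
    · exact main z₂ z₁ hz₂X hz₁X hz₂t hz₁t (by linarith) hgt


/-- For a finite set `M` of at least 4 points in general position in the plane,
there are two (non-parallel) lines meeting at a point `p`, avoiding `M`, such that each of
the four open regions they determine contains at least `⌊|M|/4⌋` points of `M`. -/
theorem four_quadrants
    (M : Finset (Fin 2 → ℝ)) (hM : 4 ≤ M.card)
    -- general position: no three points collinear
    (hgen : ∀ x ∈ M, ∀ y ∈ M, ∀ z ∈ M, x ≠ y → y ≠ z → x ≠ z →
      ¬ Collinear ℝ ({x, y, z} : Set (Fin 2 → ℝ))) :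
    ∃ (f g : (Fin 2 → ℝ) →ₗ[ℝ] ℝ) (t s : ℝ),
      LinearIndependent ℝ ![f, g] ∧
      (∃ p : Fin 2 → ℝ, f p = t ∧ g p = s) ∧
      (∀ x ∈ M, f x ≠ t ∧ g x ≠ s) ∧
      M.card / 4 ≤ (M.filter (fun x => f x < t ∧ g x < s)).card ∧
      M.card / 4 ≤ (M.filter (fun x => f x < t ∧ s < g x)).card ∧
      M.card / 4 ≤ (M.filter (fun x => t < f x ∧ g x < s)).card ∧
      M.card / 4 ≤ (M.filter (fun x => t < f x ∧ s < g x)).card := by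
  classical
  set k := M.card / 4 with hkdef
  have hk1 : 1 ≤ k := by omega
  have h4k : 4 * k ≤ M.card := by omega
  -- Step 1: a direction v with injective projections
  obtain ⟨cs, hcs⟩ := Finset.exists_notMem
    ((M ×ˢ M).image (fun p => -(p.1 0 - p.2 0) / (p.1 1 - p.2 1)))
  set v : Pt := ![1, cs] with hvdef
  have hv0 : v 0 = 1 := rfl
  have hv1 : v 1 = cs := rfl
  have hvne : v ≠ 0 := by
    intro h
    have := congrFun h 0
    rw [hv0] at this
    simp at this
  have hinj : ∀ x ∈ M, ∀ y ∈ M, x ≠ y → dd v x ≠ dd v y := by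
    intro x hx y hy hxy heq
    rw [dd, dd, hv0, hv1] at heq
    by_cases h11 : x 1 = y 1
    · have h00 : x 0 = y 0 := by rw [h11] at heq; linarith
      exact hxy (funext fun i => by fin_cases i <;> simpa [h00, h11])
    · apply hcs
      apply Finset.mem_image.mpr
      refine ⟨(x, y), Finset.mem_product.mpr ⟨hx, hy⟩, ?_⟩
      have hne : x 1 - y 1 ≠ 0 := sub_ne_zero.mpr h11
      field_simp
      linarith
  -- Step 2: halving threshold for direction v
  have h2k1 : 2 * k + 1 ≤ M.card := by omega
  set t₀ : ℝ := (vkth M (2 * k) v + vkth M (2 * k + 1) v) / 2 with ht₀def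
  have hstrict : vkth M (2 * k) v < vkth M (2 * k + 1) v := by
    have := vkth_strict_mono v hinj (by omega : 1 ≤ 2 * k) (by omega : 2 * k + 1 ≤ M.card)
    convert this using 2
  have ht₀l : vkth M (2 * k) v < t₀ := by rw [ht₀def]; linarith
  have ht₀r : t₀ < vkth M (2 * k + 1) v := by rw [ht₀def]; linarith
  set A := M.filter (fun x => dd v x < t₀) with hAdef
  set B := M.filter (fun x => t₀ < dd v x) with hBdef
  have hge2k : 2 * k ≤ A.card :=
    le_card_lt_of_val_lt v (by omega) (by omega) ht₀l
  have hle2k : (M.filter (fun x => dd v x ≤ t₀)).card < 2 * k + 1 :=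
    card_le_lt_of_lt_val v (by omega) (by omega) ht₀r
  have hsplit := card_le_split M v t₀
  rw [← hAdef] at hsplit
  have hpart0 := card_partition M v t₀
  rw [← hAdef, ← hBdef] at hpart0
  have hsubA : A ⊆ M.filter (fun x => dd v x ≤ t₀) := by
    intro x hx
    rw [hAdef, Finset.mem_filter] at hx
    rw [Finset.mem_filter]
    exact ⟨hx.1, le_of_lt hx.2⟩
  have hsubAc := Finset.card_le_card hsubA
  have hAcard : A.card = 2 * k := by omega
  have hEM0 : (M.filter (fun x => dd v x = t₀)).card = 0 := by omega
  have hBcard : B.card = M.card - 2 * k := by omega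
  have hne0 : ∀ x ∈ M, dd v x ≠ t₀ := by
    intro x hx hcon
    have hmem : x ∈ M.filter (fun x => dd v x = t₀) := Finset.mem_filter.mpr ⟨hx, hcon⟩
    rw [Finset.card_eq_zero] at hEM0
    rw [hEM0] at hmem
    exact absurd hmem (Finset.notMem_empty x)
  -- Step 3: IVT over rotating directions
  set mB := B.card with hmBdef
  have hmB2k : 2 * k ≤ mB := by omega
  set K := mB - k + 1 with hKdef
  have hkK : k < K := by omega
  have hKmB : K ≤ mB := by omega
  set U : ℝ → Pt := fun θ => ![Real.cos θ, Real.sin θ] with hUdef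
  have hUcont : Continuous U := by
    apply continuous_pi
    intro i
    fin_cases i
    · simpa [hUdef] using Real.continuous_cos
    · simpa [hUdef] using Real.continuous_sin
  have hkA : k ≤ A.card := by omega
  have hk1A : k + 1 ≤ A.card := by omega
  have hkB : k ≤ mB := by omega
  set F : ℝ → ℝ := fun θ =>
    vkth A k (U θ) + vkth A (k + 1) (U θ) - vkth B k (U θ) - vkth B K (U θ) with hFdef
  have hFcont : Continuous F := by
    apply Continuous.sub
    apply Continuous.sub
    apply Continuous.add
    · exact vkth_cont A k hk1 hkA U hUcont
    · exact vkth_cont A (k + 1) (by omega) hk1A U hUcont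
    · exact vkth_cont B k hk1 hkB U hUcont
    · exact vkth_cont B K (by omega) hKmB U hUcont
  have hUpi : U Real.pi = -U 0 := by
    funext i
    fin_cases i <;> simp [hUdef]
  have hidxA1 : A.card - k + 1 = k + 1 := by omega
  have hidxA2 : A.card - (k + 1) + 1 = k := by omega
  have hidxB1 : B.card - k + 1 = K := by omega
  have hidxB2 : B.card - K + 1 = k := by omega
  have hFpi : F Real.pi = -(F 0) := by
    rw [hFdef]
    simp only
    rw [hUpi]
    rw [vkth_antipodal (U 0) hk1 hkA, vkth_antipodal (U 0) (by omega) hk1A,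
      vkth_antipodal (U 0) hk1 hkB, vkth_antipodal (U 0) (by omega) hKmB,
      hidxA1, hidxA2, hidxB1, hidxB2]
    ring
  obtain ⟨θ₀, hθ₀⟩ : ∃ θ₀, F θ₀ = 0 := by
    rcases le_total (F 0) 0 with h | h
    · have h2 : 0 ≤ F Real.pi := by rw [hFpi]; linarith
      obtain ⟨θ₀, _, hθ₀⟩ := intermediate_value_Icc (le_of_lt Real.pi_pos)
        hFcont.continuousOn (Set.mem_Icc.mpr ⟨h, h2⟩)
      exact ⟨θ₀, hθ₀⟩
    · have h2 : F Real.pi ≤ 0 := by rw [hFpi]; linarith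
      obtain ⟨θ₀, _, hθ₀⟩ := intermediate_value_Icc' (le_of_lt Real.pi_pos)
        hFcont.continuousOn (Set.mem_Icc.mpr ⟨h2, h⟩)
      exact ⟨θ₀, hθ₀⟩
  set u₀ := U θ₀ with hu₀def
  have huu : dd u₀ u₀ = 1 := by
    rw [hu₀def, dd]
    simp [hUdef]
    nlinarith [Real.sin_sq_add_cos_sq θ₀]
  have hu₀ : u₀ ≠ 0 := by
    intro h
    rw [h] at huu
    rw [dd] at huu
    simp at huu
  set t : ℝ := (vkth A k u₀ + vkth A (k + 1) u₀) / 2 with htdef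
  have htA : vkth A k u₀ + vkth A (k + 1) u₀ = t + t := by rw [htdef]; ring
  have htB : vkth B k u₀ + vkth B K u₀ = t + t := by
    have : F θ₀ = vkth A k u₀ + vkth A (k + 1) u₀ - vkth B k u₀ - vkth B K u₀ := rfl
    rw [hθ₀] at this
    linarith [htA]
  -- on-line point bounds
  have hEM2 : (M.filter (fun x => dd u₀ x = t)).card ≤ 2 := card_online_le_two hgen hu₀ t
  have hEA2 : (A.filter (fun x => dd u₀ x = t)).card ≤ 2 := by
    refine le_trans (Finset.card_le_card ?_) hEM2
    intro x hx
    rw [Finset.mem_filter] at hx ⊢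
    rw [hAdef, Finset.mem_filter] at hx
    exact ⟨hx.1.1, hx.2⟩
  have hEB2 : (B.filter (fun x => dd u₀ x = t)).card ≤ 2 := by
    refine le_trans (Finset.card_le_card ?_) hEM2
    intro x hx
    rw [Finset.mem_filter] at hx ⊢
    rw [hBdef, Finset.mem_filter] at hx
    exact ⟨hx.1.1, hx.2⟩
  have hsideA := side_lemma A u₀ k (k + 1) hk1 (by omega) hk1A t htA hEA2
  have hsideB := side_lemma B u₀ k K hk1 hkK hKmB t htB hEB2
  -- Step 4: choose the rotation center c
  have hcex : ∃ c : Pt, dd u₀ c = t ∧ c ∉ M ∧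
      (∀ z ∈ M, dd u₀ z = t → ∀ z' ∈ M, dd u₀ z' = t → z ≠ z' → z + z' = c + c) := by
    rcases Nat.lt_or_ge (M.filter (fun x => dd u₀ x = t)).card 2 with hlt | hge
    · have hvac : ∀ (c : Pt), ∀ z ∈ M, dd u₀ z = t → ∀ z' ∈ M, dd u₀ z' = t → z ≠ z' →
          z + z' = c + c := by
        intro c z hz hzt z' hz' hzt' hne
        exfalso
        have hsub : ({z, z'} : Finset Pt) ⊆ M.filter (fun x => dd u₀ x = t) := by
          intro x hx
          rcases Finset.mem_insert.mp hx with rfl | hx'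
          · exact Finset.mem_filter.mpr ⟨hz, hzt⟩
          · rw [Finset.mem_singleton.mp hx']
            exact Finset.mem_filter.mpr ⟨hz', hzt'⟩
        have := Finset.card_le_card hsub
        rw [Finset.card_pair hne] at this
        omega
      set c₁ : Pt := t • u₀ with hc₁def
      have hc₁t : dd u₀ c₁ = t := by rw [hc₁def, dd_smul_right, huu, mul_one]
      by_cases hc₁M : c₁ ∈ M
      · set c₂ : Pt := c₁ + up u₀ with hc₂def
        have hc₂t : dd u₀ c₂ = t := by
          rw [hc₂def, dd_add_right, hc₁t, dd_up_self, add_zero]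
        have hc₂M : c₂ ∉ M := by
          intro hc₂M
          have hne12 : c₁ ≠ c₂ := by
            intro h
            rw [hc₂def] at h
            have : up u₀ = 0 := by
              have := congrArg (fun z => z - c₁) h
              simpa using this.symm
            exact up_ne_zero hu₀ this
          have hsub : ({c₁, c₂} : Finset Pt) ⊆ M.filter (fun x => dd u₀ x = t) := by
            intro x hx
            rcases Finset.mem_insert.mp hx with rfl | hx'
            · exact Finset.mem_filter.mpr ⟨hc₁M, hc₁t⟩
            · rw [Finset.mem_singleton.mp hx']
              exact Finset.mem_filter.mpr ⟨hc₂M, hc₂t⟩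
          have := Finset.card_le_card hsub
          rw [Finset.card_pair hne12] at this
          omega
        exact ⟨c₂, hc₂t, hc₂M, hvac c₂⟩
      · exact ⟨c₁, hc₁t, hc₁M, hvac c₁⟩
    · have hEM2' : (M.filter (fun x => dd u₀ x = t)).card = 2 := le_antisymm hEM2 hge
      obtain ⟨z₁, z₂, hz12, hEeq⟩ := Finset.card_eq_two.mp hEM2'
      have hz₁m : z₁ ∈ M.filter (fun x => dd u₀ x = t) := by rw [hEeq]; simp
      have hz₂m : z₂ ∈ M.filter (fun x => dd u₀ x = t) := by rw [hEeq]; simp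
      rw [Finset.mem_filter] at hz₁m hz₂m
      set c : Pt := (1 / 2 : ℝ) • (z₁ + z₂) with hcdef
      have hcc : c + c = z₁ + z₂ := by
        rw [hcdef, ← add_smul]
        norm_num
      have hct : dd u₀ c = t := by
        rw [hcdef, dd_smul_right, dd_add_right, hz₁m.2, hz₂m.2]
        ring
      have hcM : c ∉ M := by
        intro hcM
        have hcmem : c ∈ M.filter (fun x => dd u₀ x = t) := Finset.mem_filter.mpr ⟨hcM, hct⟩
        rw [hEeq] at hcmem
        rcases Finset.mem_insert.mp hcmem with h | h
        · apply hz12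
          rw [h] at hcc
          exact add_left_cancel hcc
        · rw [Finset.mem_singleton] at h
          apply hz12
          rw [h] at hcc
          exact (add_right_cancel hcc).symm
      refine ⟨c, hct, hcM, ?_⟩
      intro z hz hzt z' hz' hzt' hne
      have hzmem : z ∈ M.filter (fun x => dd u₀ x = t) := Finset.mem_filter.mpr ⟨hz, hzt⟩
      have hz'mem : z' ∈ M.filter (fun x => dd u₀ x = t) := Finset.mem_filter.mpr ⟨hz', hzt'⟩
      rw [hEeq] at hzmem hz'mem
      rw [hcc]
      rcases Finset.mem_insert.mp hzmem with h1 | h1 <;>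
        rcases Finset.mem_insert.mp hz'mem with h2 | h2
      · exact absurd (h1.trans h2.symm) hne
      · rw [Finset.mem_singleton] at h2; rw [h1, h2]
      · rw [Finset.mem_singleton] at h1; rw [h1, h2]; exact add_comm z₂ z₁
      · rw [Finset.mem_singleton] at h1 h2; exact absurd (h1.trans h2.symm) hne
  obtain ⟨c, hct, hcM, hops⟩ := hcex
  -- Step 5: perturb
  obtain ⟨w, s, hpar, hwne, hbel, habv, hpairs⟩ := perturb M u₀ hu₀ t v hvne c hct hcM hops
  -- Step 6: counting in each quadrant
  have hbranchA : (k ≤ (A.filter (fun x => dd u₀ x < t)).card ∧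
      k ≤ (A.filter (fun x => t < dd u₀ x)).card) ∨
      ((A.filter (fun x => dd u₀ x = t)).card = 2 ∧
      k - 1 ≤ (A.filter (fun x => dd u₀ x < t)).card ∧
      k - 1 ≤ (A.filter (fun x => t < dd u₀ x)).card) := by
    rcases hsideA with ⟨h1, h2⟩ | ⟨h1, h2, h3⟩
    · left; exact ⟨h1, by omega⟩
    · right; exact ⟨h1, by omega, by omega⟩
  have hbranchB : (k ≤ (B.filter (fun x => dd u₀ x < t)).card ∧
      k ≤ (B.filter (fun x => t < dd u₀ x)).card) ∨
      ((B.filter (fun x => dd u₀ x = t)).card = 2 ∧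
      k - 1 ≤ (B.filter (fun x => dd u₀ x < t)).card ∧
      k - 1 ≤ (B.filter (fun x => t < dd u₀ x)).card) := by
    rcases hsideB with ⟨h1, h2⟩ | ⟨h1, h2, h3⟩
    · left; exact ⟨h1, by omega⟩
    · right; exact ⟨h1, by omega, by omega⟩
  have halfA := half_lemma M A (Finset.filter_subset _ _) u₀ w t s k hk1
    hwne hbel habv hpairs hbranchA
  have halfB := half_lemma M B (Finset.filter_subset _ _) u₀ w t s k hk1
    hwne hbel habv hpairs hbranchB
  -- Step 7: conclude
  refine ⟨lf v, lf w, t₀, s, lf_indep hpar, exists_point hpar t₀ s, ?_, ?_, ?_, ?_, ?_⟩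
  · intro x hx
    exact ⟨hne0 x hx, hwne x hx⟩
  · have he : M.filter (fun x => lf v x < t₀ ∧ lf w x < s)
        = A.filter (fun x => dd w x < s) := by
      rw [hAdef, Finset.filter_filter]
      rfl
    rw [he]
    exact halfA.1
  · have he : M.filter (fun x => lf v x < t₀ ∧ s < lf w x)
        = A.filter (fun x => s < dd w x) := by
      rw [hAdef, Finset.filter_filter]
      rfl
    rw [he]
    exact halfA.2
  · have he : M.filter (fun x => t₀ < lf v x ∧ lf w x < s)
        = B.filter (fun x => dd w x < s) := by
      rw [hBdef, Finset.filter_filter]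
      rfl
    rw [he]
    exact halfB.1
  · have he : M.filter (fun x => t₀ < lf v x ∧ s < lf w x)
        = B.filter (fun x => s < dd w x) := by
      rw [hBdef, Finset.filter_filter]
      rfl
    rw [he]
    exact halfB.2
end

section
/- Let S ⊂ ℝ² be 2n points in general position, and suppose there is an index such that a segment between two vertices p₁, p_i of conv(S) has exactly n−1 points of S on each side. Then S admits a partition into n parts, each of size 2, whose nerve is the star St_n with center {p₁, p_i}. -/
open scoped Classical

lemma fin2_eq_iff {p q : Fin 2 → ℝ} : p = q ↔ p 0 = q 0 ∧ p 1 = q 1 := by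
  constructor
  · rintro rfl; exact ⟨rfl, rfl⟩
  · rintro ⟨h0, h1⟩; funext i; fin_cases i <;> assumption

lemma sideDet_affine (p q a b : Fin 2 → ℝ) (u v : ℝ) (huv : u + v = 1) :
    sideDet p q (u • a + v • b) = u * sideDet p q a + v * sideDet p q b := by
  have hv : v = 1 - u := by linarith
  subst hv
  simp only [sideDet, Pi.add_apply, Pi.smul_apply, smul_eq_mul]
  ring

lemma lineRep {p q x : Fin 2 → ℝ} (hpq : p ≠ q) (h : sideDet p q x = 0) :
    ∃ s : ℝ, x = p + s • (q - p) := by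
  have h' : (q 0 - p 0) * (x 1 - p 1) = (q 1 - p 1) * (x 0 - p 0) := by
    have := h; unfold sideDet at this; linarith
  have hd : q 0 - p 0 ≠ 0 ∨ q 1 - p 1 ≠ 0 := by
    by_contra hc
    push_neg at hc
    exact hpq (fin2_eq_iff.2 ⟨by linarith [hc.1], by linarith [hc.2]⟩)
  rcases hd with h0 | h1
  · refine ⟨(x 0 - p 0) / (q 0 - p 0), ?_⟩
    refine fin2_eq_iff.2 ⟨?_, ?_⟩
    · simp only [Pi.add_apply, Pi.smul_apply, Pi.sub_apply, smul_eq_mul]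
      field_simp
      ring
    · simp only [Pi.add_apply, Pi.smul_apply, Pi.sub_apply, smul_eq_mul]
      field_simp
      linear_combination h'
  · refine ⟨(x 1 - p 1) / (q 1 - p 1), ?_⟩
    refine fin2_eq_iff.2 ⟨?_, ?_⟩
    · simp only [Pi.add_apply, Pi.smul_apply, Pi.sub_apply, smul_eq_mul]
      field_simp
      linear_combination -h'
    · simp only [Pi.add_apply, Pi.smul_apply, Pi.sub_apply, smul_eq_mul]
      field_simp
      ring

lemma repCollinear {p q x : Fin 2 → ℝ} {s : ℝ} (h : x = p + s • (q - p)) :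
    Collinear ℝ ({p, q, x} : Set (Fin 2 → ℝ)) := by
  rw [collinear_iff_of_mem (Set.mem_insert p _)]
  refine ⟨q - p, ?_⟩
  rintro z (rfl | rfl | rfl)
  · exact ⟨0, by simp⟩
  · exact ⟨1, by simp⟩
  · exact ⟨s, by rw [h]; simp [vadd_eq_add]; abel⟩

lemma segRep {a b x : Fin 2 → ℝ} (h : x ∈ segment ℝ a b) :
    ∃ t : ℝ, 0 ≤ t ∧ t ≤ 1 ∧ x = a + t • (b - a) := by
  obtain ⟨u, v, hu, hv, huv, hx⟩ := h
  refine ⟨v, hv, by linarith, ?_⟩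
  rw [← hx]
  funext i
  simp only [Pi.add_apply, Pi.smul_apply, Pi.sub_apply, smul_eq_mul]
  have : u = 1 - v := by linarith
  rw [this]; ring

lemma collinear_of_mem_segment {a b x : Fin 2 → ℝ} (h : x ∈ segment ℝ a b) :
    Collinear ℝ ({a, b, x} : Set (Fin 2 → ℝ)) := by
  obtain ⟨t, _, _, ht⟩ := segRep h
  exact repCollinear ht

noncomputable def E2 : (Fin 2 → ℝ) ≃ₗ[ℝ] EuclideanSpace ℝ (Fin 2) :=
  (WithLp.linearEquiv 2 ℝ (Fin 2 → ℝ)).symm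

lemma segMapE {a b x : Fin 2 → ℝ} :
    x ∈ segment ℝ a b ↔ E2 x ∈ segment ℝ (E2 a) (E2 b) := by
  constructor
  · rintro ⟨u, v, hu, hv, huv, hx⟩
    exact ⟨u, v, hu, hv, huv, by rw [← hx]; simp [map_add, map_smul]⟩
  · rintro ⟨u, v, hu, hv, huv, hx⟩
    refine ⟨u, v, hu, hv, huv, ?_⟩
    apply E2.injective
    rw [← hx]; simp [map_add, map_smul]

set_option maxHeartbeats 1000000 in
/-- Let `S ⊂ ℝ²` be `2n` points in general position and suppose `p₁, p₂` are
extreme points of `conv(S)` such that the line through them leaves exactly `n-1` points of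
`S` on each side. Then `S` has a partition into `n` pairs whose nerve is the star with
center `{p₁, p₂}`. -/
theorem star_case_halving_segment
    {n : ℕ} (hn : 0 < n)
    (S : Finset (Fin 2 → ℝ)) (hcard : S.card = 2 * n)
    -- general position: no three points collinear
    (hgen : ∀ x ∈ S, ∀ y ∈ S, ∀ z ∈ S, x ≠ y → y ≠ z → x ≠ z →
      ¬ Collinear ℝ ({x, y, z} : Set (Fin 2 → ℝ)))
    (p₁ p₂ : Fin 2 → ℝ) (hp₁ : p₁ ∈ S) (hp₂ : p₂ ∈ S) (hne : p₁ ≠ p₂)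
    (hext₁ : p₁ ∈ Set.extremePoints ℝ (convexHull ℝ (S : Set (Fin 2 → ℝ))))
    (hext₂ : p₂ ∈ Set.extremePoints ℝ (convexHull ℝ (S : Set (Fin 2 → ℝ))))
    -- exactly n-1 points of S on each open side of the line through p₁, p₂
    (hleft : (S.filter (fun x => 0 < sideDet p₁ p₂ x)).card = n - 1)
    (hright : (S.filter (fun x => sideDet p₁ p₂ x < 0)).card = n - 1) :
    ∃ P : Fin n → Finset (Fin 2 → ℝ),
      (∀ i, (P i).card = 2) ∧
      (∀ i j, i ≠ j → Disjoint (P i) (P j)) ∧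
      S = Finset.univ.biUnion P ∧
      P ⟨0, hn⟩ = {p₁, p₂} ∧
      (∀ i, i ≠ (⟨0, hn⟩ : Fin n) →
        (convexHull ℝ (P ⟨0, hn⟩ : Set (Fin 2 → ℝ)) ∩
          convexHull ℝ (P i : Set (Fin 2 → ℝ))).Nonempty) ∧
      (∀ i j, i ≠ (⟨0, hn⟩ : Fin n) → j ≠ (⟨0, hn⟩ : Fin n) → i ≠ j →
        convexHull ℝ (P i : Set (Fin 2 → ℝ)) ∩
          convexHull ℝ (P j : Set (Fin 2 → ℝ)) = ∅) := by
  classical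
  have hδ1 : sideDet p₁ p₂ p₁ = 0 := by unfold sideDet; ring
  have hδ2 : sideDet p₁ p₂ p₂ = 0 := by unfold sideDet; ring
  set L := S.filter (fun x => 0 < sideDet p₁ p₂ x) with hLdef
  set R := S.filter (fun x => sideDet p₁ p₂ x < 0) with hRdef
  -- every point of S other than p₁, p₂ is strictly on one side
  have hside : ∀ x ∈ S, x ≠ p₁ → x ≠ p₂ → sideDet p₁ p₂ x ≠ 0 := by
    intro x hx h1 h2 h0
    obtain ⟨s, hs⟩ := lineRep hne h0
    exact hgen p₁ hp₁ p₂ hp₂ x hx hne (fun h => h2 h.symm) (fun h => h1 h.symm)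
      (repCollinear hs)
  -- S is the disjoint union {p₁, p₂} ∪ L ∪ R
  have hp₁L : p₁ ∉ L := by simp [hLdef, Finset.mem_filter, hδ1]
  have hp₂L : p₂ ∉ L := by simp [hLdef, Finset.mem_filter, hδ2]
  have hp₁R : p₁ ∉ R := by simp [hRdef, Finset.mem_filter, hδ1]
  have hp₂R : p₂ ∉ R := by simp [hRdef, Finset.mem_filter, hδ2]
  have hLR : Disjoint L R := by
    rw [Finset.disjoint_left]
    intro x hxL hxR
    rw [hLdef, Finset.mem_filter] at hxL
    rw [hRdef, Finset.mem_filter] at hxR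
    linarith [hxL.2, hxR.2]
  have hT : S = ({p₁, p₂} : Finset _) ∪ (L ∪ R) := by
    apply (Finset.eq_of_subset_of_card_le ?_ ?_).symm
    · intro x hx
      simp only [Finset.mem_union, Finset.mem_insert, Finset.mem_singleton] at hx
      rcases hx with (rfl | rfl) | hx | hx
      · exact hp₁
      · exact hp₂
      · exact Finset.mem_of_mem_filter x hx
      · exact Finset.mem_of_mem_filter x hx
    · have hd1 : Disjoint ({p₁, p₂} : Finset _) (L ∪ R) := by
        rw [Finset.disjoint_left]
        intro x hx
        simp only [Finset.mem_insert, Finset.mem_singleton] at hx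
        rcases hx with rfl | rfl <;> simp [Finset.mem_union, hp₁L, hp₁R, hp₂L, hp₂R]
      rw [Finset.card_union_of_disjoint hd1, Finset.card_union_of_disjoint hLR,
        Finset.card_pair hne, hleft, hright, hcard]
      omega
  have hcover : ∀ x ∈ S, x = p₁ ∨ x = p₂ ∨ x ∈ L ∨ x ∈ R := by
    intro x hx
    rw [hT] at hx
    simpa [Finset.mem_union, Finset.mem_insert, Finset.mem_singleton, or_assoc] using hx
  -- enumerations of L and R
  have hLcard : L.card = n - 1 := hleft
  have hRcard : R.card = n - 1 := hright
  set m := n - 1 with hm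
  let eL : L ≃ Fin m := L.equivFinOfCardEq hLcard
  let eR : R ≃ Fin m := R.equivFinOfCardEq hRcard
  set f : Fin m → (Fin 2 → ℝ) := fun i => (eL.symm i : Fin 2 → ℝ) with hf
  set g : Fin m → (Fin 2 → ℝ) := fun i => (eR.symm i : Fin 2 → ℝ) with hg
  have hfL : ∀ i, f i ∈ L := fun i => (eL.symm i).2
  have hgR : ∀ i, g i ∈ R := fun i => (eR.symm i).2
  have hfinj : Function.Injective f := fun i j h =>
    eL.symm.injective (Subtype.ext h)
  have hginj : Function.Injective g := fun i j h =>
    eR.symm.injective (Subtype.ext h)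
  have hfsurj : ∀ x ∈ L, ∃ i, f i = x := fun x hx =>
    ⟨eL ⟨x, hx⟩, by simp [hf]⟩
  have hgsurj : ∀ x ∈ R, ∃ i, g i = x := fun x hx =>
    ⟨eR ⟨x, hx⟩, by simp [hg]⟩
  have hfS : ∀ i, f i ∈ S := fun i => Finset.mem_of_mem_filter _ (hfL i)
  have hgS : ∀ i, g i ∈ S := fun i => Finset.mem_of_mem_filter _ (hgR i)
  have hfpos : ∀ i, 0 < sideDet p₁ p₂ (f i) := fun i =>
    (Finset.mem_filter.1 (hfL i)).2
  have hgneg : ∀ i, sideDet p₁ p₂ (g i) < 0 := fun i =>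
    (Finset.mem_filter.1 (hgR i)).2
  have hfg : ∀ i j, f i ≠ g j := fun i j h => by
    have := hfpos i; rw [h] at this; linarith [hgneg j]
  have hfp₁ : ∀ i, f i ≠ p₁ := fun i h => by
    have := hfpos i; rw [h, hδ1] at this; linarith
  have hfp₂ : ∀ i, f i ≠ p₂ := fun i h => by
    have := hfpos i; rw [h, hδ2] at this; linarith
  have hgp₁ : ∀ i, g i ≠ p₁ := fun i h => by
    have := hgneg i; rw [h, hδ1] at this; linarith
  have hgp₂ : ∀ i, g i ≠ p₂ := fun i h => by
    have := hgneg i; rw [h, hδ2] at this; linarith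
  -- the crossing lemma
  have hcross : ∀ l r : Fin 2 → ℝ, l ∈ S → r ∈ S →
      0 < sideDet p₁ p₂ l → sideDet p₁ p₂ r < 0 →
      (convexHull ℝ ({p₁, p₂} : Set (Fin 2 → ℝ)) ∩
        convexHull ℝ ({l, r} : Set (Fin 2 → ℝ))).Nonempty := by
    intro l r hl hr hdl hdr
    have hden : 0 < sideDet p₁ p₂ l - sideDet p₁ p₂ r := by linarith
    set t := sideDet p₁ p₂ l / (sideDet p₁ p₂ l - sideDet p₁ p₂ r) with ht
    have ht0 : 0 < t := div_pos hdl hden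
    have ht1 : t < 1 := (div_lt_one hden).2 (by linarith)
    set q := (1 - t) • l + t • r with hq
    have hδq : sideDet p₁ p₂ q = 0 := by
      rw [hq, sideDet_affine p₁ p₂ l r (1 - t) t (by ring), ht]
      field_simp
      ring
    have hqseg : q ∈ segment ℝ l r :=
      ⟨1 - t, t, by linarith, le_of_lt ht0, by ring, rfl⟩
    have hqS : q ∈ convexHull ℝ (S : Set (Fin 2 → ℝ)) := by
      have hsub : ({l, r} : Set (Fin 2 → ℝ)) ⊆ (S : Set (Fin 2 → ℝ)) := by
        intro z hz
        rcases hz with rfl | rfl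
        · exact hl
        · exact hr
      exact convexHull_mono hsub (by rw [convexHull_pair]; exact hqseg)
    obtain ⟨s, hs⟩ := lineRep hne hδq
    by_cases hs0 : s < 0
    · exfalso
      have h1s : (0:ℝ) < 1 - s := by linarith
      have hmem : p₁ ∈ openSegment ℝ q p₂ := by
        refine ⟨1 / (1 - s), -s / (1 - s), by positivity,
          div_pos (by linarith) h1s, by field_simp; ring, ?_⟩
        rw [hs]
        funext i
        simp only [Pi.add_apply, Pi.smul_apply, Pi.sub_apply, smul_eq_mul]
        field_simp
        ring
      have := hext₁.2 (subset_convexHull ℝ _ (Finset.mem_coe.2 hp₂)) hqS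
        (by rw [openSegment_symm]; exact hmem)
      exact hne this.symm
    · by_cases hs1 : 1 < s
      · exfalso
        have hsne : s ≠ 0 := by linarith
        have hmem : p₂ ∈ openSegment ℝ p₁ q := by
          refine ⟨1 - 1 / s, 1 / s, by
            have : 1 / s < 1 := by rw [div_lt_one (by linarith)]; linarith
            linarith, by positivity, by ring, ?_⟩
          rw [hs]
          funext i
          simp only [Pi.add_apply, Pi.smul_apply, Pi.sub_apply, smul_eq_mul]
          field_simp
          ring
        have := hext₂.2 (subset_convexHull ℝ _ (Finset.mem_coe.2 hp₁)) hqS hmem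
        exact hne this
      · push_neg at hs0 hs1
        refine ⟨q, ?_, ?_⟩
        · rw [convexHull_pair]
          refine ⟨1 - s, s, by linarith, hs0, by ring, ?_⟩
          rw [hs]
          funext i
          simp only [Pi.add_apply, Pi.smul_apply, Pi.sub_apply, smul_eq_mul]
          ring
        · rw [convexHull_pair]; exact hqseg
  -- minimal-length matching
  set d : (Fin 2 → ℝ) → (Fin 2 → ℝ) → ℝ := fun a b => dist (E2 a) (E2 b) with hd
  obtain ⟨π₀, -, hmin⟩ := Finset.exists_min_image
    (Finset.univ : Finset (Equiv.Perm (Fin m)))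
    (fun π => ∑ i, d (f i) (g (π i))) ⟨1, Finset.mem_univ 1⟩
  set g' : Fin m → (Fin 2 → ℝ) := fun k => g (π₀ k) with hg'
  have hg'inj : Function.Injective g' := fun i j h => π₀.injective (hginj h)
  -- the swap argument: distinct matched segments are disjoint
  have hswap : ∀ a b : Fin m, a ≠ b → ∀ x : Fin 2 → ℝ,
      x ∈ segment ℝ (f a) (g' a) → x ∈ segment ℝ (f b) (g' b) → False := by
    intro a b hab x hx1 hx2
    obtain ⟨A, B, C, D, hA, hB, hC, hD⟩ :
        ∃ A B C D, f a = A ∧ g' a = B ∧ f b = C ∧ g' b = D :=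
      ⟨_, _, _, _, rfl, rfl, rfl, rfl⟩
    rw [hA, hB] at hx1
    rw [hC, hD] at hx2
    have hAC : A ≠ C := fun h => hab (hfinj ((hA.trans h).trans hC.symm))
    have hBD : B ≠ D := fun h => hab (hg'inj ((hB.trans h).trans hD.symm))
    have hAB : A ≠ B := hA ▸ hB ▸ hfg a (π₀ a)
    have hAD : A ≠ D := hA ▸ hD ▸ hfg a (π₀ b)
    have hCB : C ≠ B := hC ▸ hB ▸ hfg b (π₀ a)
    have hCD : C ≠ D := hC ▸ hD ▸ hfg b (π₀ b)
    have hAS : A ∈ S := hA ▸ hfS a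
    have hBS : B ∈ S := hB ▸ hgS (π₀ a)
    have hCS : C ∈ S := hC ▸ hfS b
    have hDS : D ∈ S := hD ▸ hgS (π₀ b)
    -- x is none of the four endpoints
    have hxA : x ≠ A := by
      rintro rfl
      exact hgen C hCS D hDS x hAS hCD hAD.symm hAC.symm (collinear_of_mem_segment hx2)
    have hxB : x ≠ B := by
      rintro rfl
      exact hgen C hCS D hDS x hBS hCD hBD.symm hCB (collinear_of_mem_segment hx2)
    have hxC : x ≠ C := by
      rintro rfl
      exact hgen A hAS B hBS x hCS hAB hCB.symm hAC (collinear_of_mem_segment hx1)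
    have hxD : x ≠ D := by
      rintro rfl
      exact hgen A hAS B hBS x hDS hAB hBD hAD (collinear_of_mem_segment hx1)
    -- metric inequalities in Euclidean space
    have e1 : dist (E2 A) (E2 x) + dist (E2 x) (E2 B) = dist (E2 A) (E2 B) :=
      (mem_segment_iff_wbtw.1 (segMapE.1 hx1)).dist_add_dist
    have e2 : dist (E2 C) (E2 x) + dist (E2 x) (E2 D) = dist (E2 C) (E2 D) :=
      (mem_segment_iff_wbtw.1 (segMapE.1 hx2)).dist_add_dist
    have t1 : dist (E2 A) (E2 D) ≤ dist (E2 A) (E2 x) + dist (E2 x) (E2 D) :=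
      dist_triangle _ _ _
    have t2 : dist (E2 C) (E2 B) ≤ dist (E2 C) (E2 x) + dist (E2 x) (E2 B) :=
      dist_triangle _ _ _
    -- not both triangle inequalities can be equalities
    have hnb : ¬ (dist (E2 A) (E2 x) + dist (E2 x) (E2 D) = dist (E2 A) (E2 D) ∧
        dist (E2 C) (E2 x) + dist (E2 x) (E2 B) = dist (E2 C) (E2 B)) := by
      rintro ⟨q1, q2⟩
      have hxAD : x ∈ segment ℝ A D :=
        segMapE.2 (mem_segment_iff_wbtw.2 (dist_add_dist_eq_iff.1 q1))
      obtain ⟨t, _, _, hxt⟩ := segRep hx1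
      obtain ⟨u, _, _, hxu⟩ := segRep hxAD
      have htne : t ≠ 0 := by
        rintro rfl
        apply hxA
        rw [hxt]; funext i; simp
      have hune : u ≠ 0 := by
        rintro rfl
        apply hxA
        rw [hxu]; funext i; simp
      -- D = A + (t/u) • (B - A), so A, B, D collinear
      have hcoord : ∀ i : Fin 2, t * (B i - A i) = u * (D i - A i) := by
        intro i
        have h1 := congrFun hxt i
        have h2 := congrFun hxu i
        simp only [Pi.add_apply, Pi.smul_apply, Pi.sub_apply, smul_eq_mul] at h1 h2
        linarith
      have hDrep : D = A + (t / u) • (B - A) := by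
        refine fin2_eq_iff.2 ⟨?_, ?_⟩
        · simp only [Pi.add_apply, Pi.smul_apply, Pi.sub_apply, smul_eq_mul]
          field_simp
          linear_combination -(hcoord 0)
        · simp only [Pi.add_apply, Pi.smul_apply, Pi.sub_apply, smul_eq_mul]
          field_simp
          linear_combination -(hcoord 1)
      exact hgen A hAS B hBS D hDS hAB hBD hAD (repCollinear hDrep)
    have hlt : dist (E2 A) (E2 D) + dist (E2 C) (E2 B) <
        dist (E2 A) (E2 B) + dist (E2 C) (E2 D) := by
      rcases t1.lt_or_eq with h1 | h1
      · linarith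
      · rcases t2.lt_or_eq with h2 | h2
        · linarith
        · exact absurd ⟨h1.symm, h2.symm⟩ hnb
    -- contradiction with minimality of π₀
    have hbmem : b ∈ Finset.univ.erase a :=
      Finset.mem_erase.2 ⟨hab.symm, Finset.mem_univ b⟩
    have hdec : ∀ h : Fin m → ℝ, ∑ k, h k =
        h a + (h b + ∑ k ∈ (Finset.univ.erase a).erase b, h k) := by
      intro h
      rw [Finset.add_sum_erase _ h hbmem, Finset.add_sum_erase _ h (Finset.mem_univ a)]
    have hmin' := hmin (π₀ * Equiv.swap a b) (Finset.mem_univ _)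
    rw [hdec (fun k => d (f k) (g (π₀ k))),
      hdec (fun k => d (f k) (g ((π₀ * Equiv.swap a b) k)))] at hmin'
    have hrest : ∑ k ∈ (Finset.univ.erase a).erase b,
        d (f k) (g ((π₀ * Equiv.swap a b) k)) =
        ∑ k ∈ (Finset.univ.erase a).erase b, d (f k) (g (π₀ k)) := by
      refine Finset.sum_congr rfl ?_
      intro k hk
      rw [Finset.mem_erase, Finset.mem_erase] at hk
      rw [Equiv.Perm.mul_apply, Equiv.swap_apply_of_ne_of_ne hk.2.1 hk.1]
    rw [hrest] at hmin'
    have hsa : (π₀ * Equiv.swap a b) a = π₀ b := by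
      rw [Equiv.Perm.mul_apply, Equiv.swap_apply_left]
    have hsb : (π₀ * Equiv.swap a b) b = π₀ a := by
      rw [Equiv.Perm.mul_apply, Equiv.swap_apply_right]
    rw [hsa, hsb] at hmin'
    have hB' : g (π₀ a) = B := hB
    have hD' : g (π₀ b) = D := hD
    rw [hA, hB', hC, hD'] at hmin'
    have eAB : d A B = dist (E2 A) (E2 B) := rfl
    have eCD : d C D = dist (E2 C) (E2 D) := rfl
    have eAD : d A D = dist (E2 A) (E2 D) := rfl
    have eCB : d C B = dist (E2 C) (E2 B) := rfl
    rw [eAB, eCD, eAD, eCB] at hmin'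
    linarith [hmin', hlt]
  -- index bookkeeping
  have hidx : ∀ i : Fin n, i ≠ (⟨0, hn⟩ : Fin n) → i.1 - 1 < m := by
    intro i hi
    have h0 : i.1 ≠ 0 := fun h => hi (Fin.ext h)
    have := i.2
    omega
  set pr : Fin m → Finset (Fin 2 → ℝ) := fun k => {f k, g' k} with hpr
  set P : Fin n → Finset (Fin 2 → ℝ) :=
    fun i => if h : i = (⟨0, hn⟩ : Fin n) then {p₁, p₂} else pr ⟨i.1 - 1, hidx i h⟩
    with hP
  have hP0 : P ⟨0, hn⟩ = {p₁, p₂} := by simp [hP]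
  have hPne : ∀ (i : Fin n) (h : i ≠ ⟨0, hn⟩), P i = pr ⟨i.1 - 1, hidx i h⟩ := by
    intro i h
    simp [hP, h]
  -- disjointness of pairs
  have hdisj_cp : ∀ k, Disjoint ({p₁, p₂} : Finset (Fin 2 → ℝ)) (pr k) := by
    intro k
    rw [Finset.disjoint_left]
    intro x hx hx'
    simp only [hpr, Finset.mem_insert, Finset.mem_singleton] at hx hx'
    rcases hx with rfl | rfl <;> rcases hx' with h | h
    · exact hfp₁ k h.symm
    · exact hgp₁ (π₀ k) h.symm
    · exact hfp₂ k h.symm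
    · exact hgp₂ (π₀ k) h.symm
  have hdisj_pp : ∀ k l, k ≠ l → Disjoint (pr k) (pr l) := by
    intro k l hkl
    rw [Finset.disjoint_left]
    intro x hx hx'
    simp only [hpr, Finset.mem_insert, Finset.mem_singleton] at hx hx'
    rcases hx with rfl | rfl <;> rcases hx' with h | h
    · exact hkl (hfinj h)
    · exact hfg k (π₀ l) h
    · exact (hfg l (π₀ k) h.symm).elim
    · exact hkl (hg'inj h)
  refine ⟨P, ?_, ?_, ?_, hP0, ?_, ?_⟩
  · -- cards
    intro i
    by_cases h : i = (⟨0, hn⟩ : Fin n)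
    · rw [h, hP0, Finset.card_pair hne]
    · rw [hPne i h, hpr]
      exact Finset.card_pair (hfg _ _)
  · -- pairwise disjoint
    intro i j hij
    by_cases hi : i = (⟨0, hn⟩ : Fin n)
    · subst hi
      have hj : j ≠ (⟨0, hn⟩ : Fin n) := fun h => hij h.symm
      rw [hP0, hPne j hj]
      exact hdisj_cp _
    · by_cases hj : j = (⟨0, hn⟩ : Fin n)
      · subst hj
        rw [hP0, hPne i hi]
        exact (hdisj_cp _).symm
      · rw [hPne i hi, hPne j hj]
        apply hdisj_pp
        intro h
        apply hij
        have hi0 : i.1 ≠ 0 := fun h' => hi (Fin.ext h')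
        have hj0 : j.1 ≠ 0 := fun h' => hj (Fin.ext h')
        have := congrArg Fin.val h
        simp only at this
        exact Fin.ext (by omega)
  · -- union
    apply Finset.ext
    intro x
    constructor
    · intro hx
      rw [Finset.mem_biUnion]
      rcases hcover x hx with rfl | rfl | hxL | hxR
      · exact ⟨⟨0, hn⟩, Finset.mem_univ _, by rw [hP0]; simp⟩
      · exact ⟨⟨0, hn⟩, Finset.mem_univ _, by rw [hP0]; simp⟩
      · obtain ⟨k, rfl⟩ := hfsurj x hxL
        have hklt : (k.1 + 1) < n := by have := k.2; omega
        refine ⟨⟨k.1 + 1, hklt⟩, Finset.mem_univ _, ?_⟩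
        have hne0 : (⟨k.1 + 1, hklt⟩ : Fin n) ≠ ⟨0, hn⟩ := by
          intro h
          exact absurd (congrArg Fin.val h) (by simp)
        rw [hPne _ hne0]
        have : (⟨(⟨k.1 + 1, hklt⟩ : Fin n).1 - 1, hidx _ hne0⟩ : Fin m) = k :=
          Fin.ext (by simp)
        rw [this, hpr]
        simp
      · obtain ⟨r, rfl⟩ := hgsurj x hxR
        set k := π₀.symm r with hk
        have hklt : (k.1 + 1) < n := by have := k.2; omega
        refine ⟨⟨k.1 + 1, hklt⟩, Finset.mem_univ _, ?_⟩
        have hne0 : (⟨k.1 + 1, hklt⟩ : Fin n) ≠ ⟨0, hn⟩ := by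
          intro h
          exact absurd (congrArg Fin.val h) (by simp)
        rw [hPne _ hne0]
        have heq : (⟨(⟨k.1 + 1, hklt⟩ : Fin n).1 - 1, hidx _ hne0⟩ : Fin m) = k :=
          Fin.ext (by simp)
        rw [heq, hpr]
        have : g' k = g r := by show g (π₀ k) = g r; rw [hk, Equiv.apply_symm_apply]
        simp [this]
    · intro hx
      rw [Finset.mem_biUnion] at hx
      obtain ⟨i, -, hxi⟩ := hx
      by_cases h : i = (⟨0, hn⟩ : Fin n)
      · rw [h, hP0] at hxi
        simp only [Finset.mem_insert, Finset.mem_singleton] at hxi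
        rcases hxi with rfl | rfl
        · exact hp₁
        · exact hp₂
      · rw [hPne i h, hpr] at hxi
        simp only [Finset.mem_insert, Finset.mem_singleton] at hxi
        rcases hxi with rfl | rfl
        · exact hfS _
        · exact hgS _
  · -- center meets every pair
    intro i hi
    rw [hP0, hPne i hi, hpr]
    have hcoe : ((({f ⟨i.1 - 1, hidx i hi⟩, g' ⟨i.1 - 1, hidx i hi⟩} : Finset (Fin 2 → ℝ))) :
        Set (Fin 2 → ℝ)) = {f ⟨i.1 - 1, hidx i hi⟩, g' ⟨i.1 - 1, hidx i hi⟩} := by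
      simp
    have hcoe2 : ((({p₁, p₂} : Finset (Fin 2 → ℝ))) : Set (Fin 2 → ℝ)) = {p₁, p₂} := by simp
    rw [hcoe, hcoe2]
    exact hcross _ _ (hfS _) (hgS _) (hfpos _) (hgneg _)
  · -- pairwise disjoint hulls
    intro i j hi hj hij
    rw [hPne i hi, hPne j hj, hpr]
    set a : Fin m := ⟨i.1 - 1, hidx i hi⟩ with ha
    set b : Fin m := ⟨j.1 - 1, hidx j hj⟩ with hb
    have hab : a ≠ b := by
      intro h
      apply hij
      have hi0 : i.1 ≠ 0 := fun h' => hi (Fin.ext h')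
      have hj0 : j.1 ≠ 0 := fun h' => hj (Fin.ext h')
      have := congrArg Fin.val h
      simp only [ha, hb] at this
      exact Fin.ext (by omega)
    have hcoea : ((({f a, g' a} : Finset (Fin 2 → ℝ))) : Set (Fin 2 → ℝ)) = {f a, g' a} := by
      simp
    have hcoeb : ((({f b, g' b} : Finset (Fin 2 → ℝ))) : Set (Fin 2 → ℝ)) = {f b, g' b} := by
      simp
    rw [hcoea, hcoeb, convexHull_pair, convexHull_pair]
    rw [Set.eq_empty_iff_forall_notMem]
    rintro x ⟨hx1, hx2⟩
    exact hswap a b hab x hx1 hx2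
end
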